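/- arXiv:2309.06060 — 7 statements merged into one kernel-verified Lean document; each statement's English description precedes it below -/
import Mathlib

section
/- Balayage formula (2.6): Let N ∈ ℕ₊ and let f : (0,∞) → H be continuously differentiable with compact support in (0,∞). Then the functions t ↦ T′(Nt)(M₊(f)(t)) and s ↦ T′(Ns) f(s) are Bochner integrable on (0,∞), and ∫₀^∞ T′(Nt)(M₊(f)(t)) dt = (1/(N+1)) ∫₀^∞ T′(Ns) f(s) ds in H. In semigroup notation this is ∫₀^∞ A e^{-NtA} M₊(f)(t) dt = (1/(N+1)) ∫₀^∞ A e^{-NsA} f(s) ds. -/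
open MeasureTheory Filter Topology Set


section Aux
variable {H : Type*} [NormedAddCommGroup H] [InnerProductSpace ℂ H] [CompleteSpace H]

lemma balayage_tk_comp (T : ℝ → H →L[ℂ] H) (Tk : ℕ → ℝ → H →L[ℂ] H)
    (hTadd : ∀ s t : ℝ, 0 ≤ s → 0 ≤ t → T (s + t) = (T s).comp (T t))
    (hTk0 : ∀ t : ℝ, 0 < t → Tk 0 t = T t)
    (hTkderiv : ∀ (k : ℕ) (t : ℝ), 0 < t → HasDerivAt (Tk k) (Tk (k + 1) t) t) :
    ∀ a b : ℝ, 0 < a → 0 < b → Tk 2 (a + b) = (Tk 1 a).comp (Tk 1 b) := by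
  have step1 : ∀ a b : ℝ, 0 < a → 0 < b → Tk 1 (a + b) = (T a).comp (Tk 1 b) := by
    intro a b ha hb
    set L : (H →L[ℂ] H) →L[ℝ] (H →L[ℂ] H) :=
      ((ContinuousLinearMap.compL ℂ H H H (T a)).restrictScalars ℝ)
    have h1 : HasDerivAt (fun u => Tk 0 (a + u)) ((1:ℝ) • Tk 1 (a + b)) b :=
      (hTkderiv 0 (a + b) (by linarith)).scomp b ((hasDerivAt_id b).const_add a)
    have h2 : HasDerivAt (fun u => L (Tk 0 u)) (L (Tk 1 b)) b :=
      L.hasFDerivAt.comp_hasDerivAt b (hTkderiv 0 b hb)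
    have heq : (fun u => Tk 0 (a + u)) =ᶠ[𝓝 b] fun u => L (Tk 0 u) := by
      filter_upwards [eventually_gt_nhds hb] with u hu
      rw [hTk0 _ (by linarith : (0:ℝ) < a + u), hTk0 _ hu, hTadd a u ha.le hu.le]
      rfl
    have := h1.unique (h2.congr_of_eventuallyEq heq)
    simpa [L] using this
  intro a b ha hb
  set R : (H →L[ℂ] H) →L[ℝ] (H →L[ℂ] H) :=
    (((ContinuousLinearMap.compL ℂ H H H).flip (Tk 1 b)).restrictScalars ℝ)
  have h1 : HasDerivAt (fun u => Tk 1 (u + b)) ((1:ℝ) • Tk 2 (a + b)) a :=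
    (hTkderiv 1 (a + b) (by linarith)).scomp a ((hasDerivAt_id a).add_const b)
  have h2 : HasDerivAt (fun u => R (Tk 0 u)) (R (Tk 1 a)) a :=
    R.hasFDerivAt.comp_hasDerivAt a (hTkderiv 0 a ha)
  have heq : (fun u => Tk 1 (u + b)) =ᶠ[𝓝 a] fun u => R (Tk 0 u) := by
    filter_upwards [eventually_gt_nhds ha] with u hu
    rw [step1 u b hu hb, hTk0 u hu]
    rfl
  have := h1.unique (h2.congr_of_eventuallyEq heq)
  simpa [R] using this

end Aux

section Aux2
variable {H : Type*} [NormedAddCommGroup H] [InnerProductSpace ℂ H] [CompleteSpace H]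

lemma balayage_phi_eq (Tk : ℕ → ℝ → H →L[ℂ] H)
    (hTkderiv : ∀ (k : ℕ) (t : ℝ), 0 < t → HasDerivAt (Tk k) (Tk (k + 1) t) t)
    (hcomp : ∀ a b : ℝ, 0 < a → 0 < b → Tk 2 (a + b) = (Tk 1 a).comp (Tk 1 b))
    (f : ℝ → H) (hfcont : Continuous f)
    (g : ℝ → H) (N : ℕ) (hN : 1 ≤ N) {t : ℝ} (ht : 0 < t)
    (hgt : Tendsto (fun ε : ℝ => -∫ s in Ioo (0 : ℝ) (t - ε), (Tk 1 (t - s)) (f s))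
        (𝓝[>] (0 : ℝ)) (𝓝 (g t))) :
    (Tk 1 ((N : ℝ) * t)) (g t)
      = -∫ s in Ioo (0 : ℝ) t, (Tk 2 (((N : ℝ) + 1) * t - s)) (f s) := by
  have hNt : 0 < (N : ℝ) * t := by positivity
  have hcontk : ∀ k, ContinuousOn (Tk k) (Ioi (0:ℝ)) := fun k u hu =>
    ((hTkderiv k u hu).continuousAt).continuousWithinAt
  -- the integrand is continuous on Icc 0 t
  have hI : IntegrableOn (fun s => (Tk 2 (((N : ℝ) + 1) * t - s)) (f s)) (Icc 0 t) := by
    apply ContinuousOn.integrableOn_Icc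
    have h1 : ContinuousOn (fun s : ℝ => Tk 2 (((N : ℝ) + 1) * t - s)) (Icc 0 t) := by
      apply (hcontk 2).comp (by fun_prop)
      intro s hs
      have : (N:ℝ) * t ≤ ((N:ℝ) + 1) * t - s := by
        rcases hs with ⟨h0, h1⟩; nlinarith
      exact lt_of_lt_of_le hNt this
    exact h1.clm_apply hfcont.continuousOn
  -- limit L1
  have L1 : Tendsto (fun ε : ℝ => (Tk 1 ((N : ℝ) * t))
      (-∫ s in Ioo (0 : ℝ) (t - ε), (Tk 1 (t - s)) (f s))) (𝓝[>] (0 : ℝ))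
      (𝓝 ((Tk 1 ((N : ℝ) * t)) (g t))) :=
    ((Tk 1 ((N : ℝ) * t)).continuous.tendsto (g t)).comp hgt
  -- L2 : eventual equality
  have L2 : ∀ ε : ℝ, 0 < ε → ε < t →
      (Tk 1 ((N : ℝ) * t)) (-∫ s in Ioo (0 : ℝ) (t - ε), (Tk 1 (t - s)) (f s))
        = -∫ s in Ioo (0 : ℝ) (t - ε), (Tk 2 (((N : ℝ) + 1) * t - s)) (f s) := by
    intro ε hε hεt
    have hint : IntegrableOn (fun s => (Tk 1 (t - s)) (f s)) (Ioo 0 (t - ε)) := by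
      refine (ContinuousOn.integrableOn_Icc ?_).mono_set Ioo_subset_Icc_self
      refine (ContinuousOn.clm_apply ((hcontk 1).comp (by fun_prop) ?_) hfcont.continuousOn)
      intro s hs
      rcases hs with ⟨h0, h1⟩
      have : ε ≤ t - s := by linarith
      exact lt_of_lt_of_le hε this
    rw [map_neg, ← ContinuousLinearMap.integral_comp_comm _ hint]
    congr 1
    apply setIntegral_congr_fun measurableSet_Ioo
    intro s hs
    rcases hs with ⟨h0, h1⟩
    have hts : 0 < t - s := by linarith
    have := hcomp ((N:ℝ) * t) (t - s) hNt hts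
    have h2 : ((N:ℝ)) * t + (t - s) = ((N : ℝ) + 1) * t - s := by ring
    rw [h2] at this
    simp [this]
  -- L3 : the truncated integrals converge
  have L3 : Tendsto (fun ε : ℝ => -∫ s in Ioo (0 : ℝ) (t - ε), (Tk 2 (((N : ℝ) + 1) * t - s)) (f s))
      (𝓝[>] (0 : ℝ)) (𝓝 (-∫ s in Ioo (0 : ℝ) t, (Tk 2 (((N : ℝ) + 1) * t - s)) (f s))) := by
    have hP : ContinuousOn (fun x => ∫ s in Ioc (0:ℝ) x, (Tk 2 (((N : ℝ) + 1) * t - s)) (f s)) (Icc 0 t) :=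
      intervalIntegral.continuousOn_primitive hI
    have htend : Tendsto (fun ε : ℝ => t - ε) (𝓝[>] (0:ℝ)) (𝓝[Icc (0:ℝ) t] t) := by
      rw [tendsto_nhdsWithin_iff]
      constructor
      · have : Tendsto (fun ε : ℝ => t - ε) (𝓝 (0:ℝ)) (𝓝 (t - 0)) :=
          (tendsto_const_nhds.sub tendsto_id)
        simpa using this.mono_left nhdsWithin_le_nhds
      · filter_upwards [Ioo_mem_nhdsGT_of_mem (by exact ⟨le_refl _, ht⟩ : (0:ℝ) ∈ Ico 0 t)] with ε hε
        exact ⟨by linarith [hε.1, hε.2], by linarith [hε.1]⟩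
    have := ((hP t (by exact ⟨ht.le, le_refl t⟩)).tendsto.comp htend).neg
    simp only [Function.comp] at this
    convert this using 2 <;> rw [integral_Ioc_eq_integral_Ioo]
  refine tendsto_nhds_unique (L1.congr' ?_) L3
  filter_upwards [Ioo_mem_nhdsGT_of_mem (⟨le_refl _, ht⟩ : (0:ℝ) ∈ Ico 0 t)] with ε hε
  exact L2 ε hε.1 hε.2

end Aux2

section Aux3
variable {H : Type*} [NormedAddCommGroup H] [InnerProductSpace ℂ H] [CompleteSpace H]

lemma balayage_inner (Tk : ℕ → ℝ → H →L[ℂ] H)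
    (hTkderiv : ∀ (k : ℕ) (t : ℝ), 0 < t → HasDerivAt (Tk k) (Tk (k + 1) t) t)
    (M₁ M₂ : ℝ)
    (hb1 : ∀ u : ℝ, 0 < u → ‖Tk 1 u‖ ≤ M₁ / u)
    (hb2 : ∀ u : ℝ, 0 < u → ‖Tk 2 u‖ ≤ M₂ / u ^ 2)
    (N : ℕ) (hN : 1 ≤ N) (x : H) {s : ℝ} (hs : 0 < s) :
    IntegrableOn (fun t : ℝ => (Tk 2 (((N:ℝ) + 1) * t - s)) x) (Ioi s) ∧
    ∫ t in Ioi s, (Tk 2 (((N:ℝ) + 1) * t - s)) x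
      = -((1/((N:ℝ) + 1)) • (Tk 1 ((N:ℝ) * s)) x) := by
  have hN1 : (0:ℝ) < (N:ℝ) + 1 := by positivity
  have hNR : (1:ℝ) ≤ (N:ℝ) := by exact_mod_cast hN
  have hM2 : 0 ≤ M₂ := le_trans (norm_nonneg _) (by simpa using hb2 1 one_pos)
  have hM1 : 0 ≤ M₁ := le_trans (norm_nonneg _) (by simpa using hb1 1 one_pos)
  have hgt : ∀ t : ℝ, s < t → t < ((N:ℝ) + 1) * t - s := by
    intro t ht; nlinarith
  have hpos : ∀ t : ℝ, s < t → 0 < ((N:ℝ) + 1) * t - s := by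
    intro t ht; have := hgt t ht; linarith
  have hcontk : ∀ k, ContinuousOn (Tk k) (Ioi (0:ℝ)) := fun k u hu =>
    ((hTkderiv k u hu).continuousAt).continuousWithinAt
  have hint : IntegrableOn (fun t : ℝ => (Tk 2 (((N:ℝ) + 1) * t - s)) x) (Ioi s) := by
    have haesm : AEStronglyMeasurable (fun t : ℝ => (Tk 2 (((N:ℝ) + 1) * t - s)) x)
        (volume.restrict (Ioi s)) := by
      apply ContinuousOn.aestronglyMeasurable _ measurableSet_Ioi
      refine ContinuousOn.clm_apply ((hcontk 2).comp (by fun_prop) ?_) continuousOn_const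
      intro t ht; exact hpos t (mem_Ioi.mp ht)
    refine Integrable.mono' (g := fun t => (M₂ * ‖x‖) * t ^ (-2:ℝ)) ?_ haesm ?_
    · exact (integrableOn_Ioi_rpow_of_lt (by norm_num) hs).const_mul _
    · filter_upwards [ae_restrict_mem measurableSet_Ioi] with t ht
      have ht' : s < t := mem_Ioi.mp ht
      have htpos : 0 < t := lt_trans hs ht'
      have hu : 0 < ((N:ℝ) + 1) * t - s := hpos t ht'
      have hrp : t ^ (-2:ℝ) = (t ^ (2:ℕ))⁻¹ := by
        rw [Real.rpow_neg htpos.le, show ((2:ℝ) = ((2:ℕ):ℝ)) by norm_num, Real.rpow_natCast]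
      calc ‖(Tk 2 (((N:ℝ) + 1) * t - s)) x‖
          ≤ ‖Tk 2 (((N:ℝ) + 1) * t - s)‖ * ‖x‖ := ContinuousLinearMap.le_opNorm _ _
        _ ≤ (M₂ / (((N:ℝ) + 1) * t - s) ^ 2) * ‖x‖ :=
            mul_le_mul_of_nonneg_right (hb2 _ hu) (norm_nonneg x)
        _ ≤ (M₂ / t ^ 2) * ‖x‖ := by
            apply mul_le_mul_of_nonneg_right _ (norm_nonneg x)
            apply div_le_div_of_nonneg_left hM2 (by positivity)
            have := hgt t ht'
            nlinarith
        _ = (M₂ * ‖x‖) * t ^ (-2:ℝ) := by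
            rw [hrp]; field_simp
  refine ⟨hint, ?_⟩
  set Φ : ℝ → H := fun t => (1/((N:ℝ) + 1)) • (Tk 1 (((N:ℝ) + 1) * t - s)) x with hΦ
  have hNs : (0:ℝ) < ((N:ℝ) + 1) * s - s := by nlinarith
  set ev : (H →L[ℂ] H) →L[ℝ] H := ((ContinuousLinearMap.apply ℂ H x).restrictScalars ℝ) with hev
  have hderiv' : ∀ t : ℝ, 0 < ((N:ℝ) + 1) * t - s →
      HasDerivAt Φ ((Tk 2 (((N:ℝ) + 1) * t - s)) x) t := by
    intro t hu
    have inner : HasDerivAt (fun t : ℝ => ((N:ℝ) + 1) * t - s) ((N:ℝ) + 1) t := by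
      simpa using ((hasDerivAt_id t).const_mul ((N:ℝ) + 1)).sub_const s
    have outer : HasDerivAt (fun u => ev (Tk 1 u)) (ev (Tk 2 (((N:ℝ) + 1) * t - s)))
        (((N:ℝ) + 1) * t - s) :=
      ev.hasFDerivAt.comp_hasDerivAt _ (hTkderiv 1 _ hu)
    have comp := (outer.scomp t inner).const_smul (1/((N:ℝ) + 1))
    have heq : (1/((N:ℝ) + 1)) • (((N:ℝ) + 1) • ev (Tk 2 (((N:ℝ) + 1) * t - s)))
        = (Tk 2 (((N:ℝ) + 1) * t - s)) x := by
      rw [smul_smul, one_div, inv_mul_cancel₀ (ne_of_gt hN1), one_smul]; rfl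
    rw [heq] at comp
    exact comp
  have hderiv : ∀ t ∈ Ioi s, HasDerivAt Φ ((Tk 2 (((N:ℝ) + 1) * t - s)) x) t :=
    fun t ht => hderiv' t (hpos t (mem_Ioi.mp ht))
  have hcontW : ContinuousWithinAt Φ (Ici s) s :=
    ((hderiv' s hNs).continuousAt).continuousWithinAt
  have htop : Tendsto Φ atTop (𝓝 (0:H)) := by
    apply squeeze_zero_norm' (a := fun t => (M₁ * ‖x‖) / t)
    · filter_upwards [eventually_gt_atTop (max s 0)] with t ht
      have hts : s < t := lt_of_le_of_lt (le_max_left _ _) ht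
      have htpos : 0 < t := lt_of_le_of_lt (le_max_right _ _) ht
      have hu : 0 < ((N:ℝ) + 1) * t - s := hpos t hts
      have h1 : ‖Φ t‖ ≤ (1/((N:ℝ) + 1)) * (‖Tk 1 (((N:ℝ) + 1) * t - s)‖ * ‖x‖) := by
        rw [hΦ]
        simp only [norm_smul, Real.norm_eq_abs,
          abs_of_pos (by positivity : (0:ℝ) < 1/((N:ℝ)+1))]
        exact mul_le_mul_of_nonneg_left (ContinuousLinearMap.le_opNorm _ _) (by positivity)
      calc ‖Φ t‖ ≤ (1/((N:ℝ) + 1)) * (‖Tk 1 (((N:ℝ) + 1) * t - s)‖ * ‖x‖) := h1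
        _ ≤ 1 * ((M₁ / (((N:ℝ) + 1) * t - s)) * ‖x‖) := by
            apply mul_le_mul (by rw [div_le_one hN1]; linarith)
              (mul_le_mul_of_nonneg_right (hb1 _ hu) (norm_nonneg x))
              (by positivity) one_pos.le
        _ ≤ (M₁ * ‖x‖) / t := by
            rw [one_mul, div_mul_eq_mul_div]
            apply div_le_div_of_nonneg_left (by positivity) htpos
            linarith [hgt t hts]
    · exact Tendsto.div_atTop tendsto_const_nhds tendsto_id
  have final := integral_Ioi_of_hasDerivAt_of_tendsto hcontW hderiv hint htop
  rw [final]
  have hss : ((N:ℝ) + 1) * s - s = (N:ℝ) * s := by ring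
  simp [hΦ, hss]

end Aux3


/-- Balayage formula (2.6): for `N ∈ ℕ₊` and `f` continuously differentiable with
compact support in `(0,∞)`, with `g = M₊(f)` the (principal-value) forward maximal
regularity operator applied to `f`, the functions `t ↦ T′(Nt)(M₊(f)(t))` and
`s ↦ T′(Ns) f(s)` are Bochner integrable on `(0,∞)` and
`∫₀^∞ T′(Nt)(M₊(f)(t)) dt = (1/(N+1)) • ∫₀^∞ T′(Ns) f(s) ds`. -/
theorem balayage_formula_forward
    {H : Type*} [NormedAddCommGroup H] [InnerProductSpace ℂ H] [CompleteSpace H]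
    (T : ℝ → H →L[ℂ] H) (Tk : ℕ → ℝ → H →L[ℂ] H)
    (hT0 : T 0 = ContinuousLinearMap.id ℂ H)
    (hTadd : ∀ s t : ℝ, 0 ≤ s → 0 ≤ t → T (s + t) = (T s).comp (T t))
    (hTcont : ∀ x : H, ContinuousOn (fun t : ℝ => T t x) (Ici (0 : ℝ)))
    (hTk0 : ∀ t : ℝ, 0 < t → Tk 0 t = T t)
    (hTkderiv : ∀ (k : ℕ) (t : ℝ), 0 < t → HasDerivAt (Tk k) (Tk (k + 1) t) t)
    (hMk : ∀ k : ℕ, 1 ≤ k → ∃ M : ℝ, ∀ t : ℝ, 0 < t → t ^ k * ‖Tk k t‖ ≤ M)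
    (hM0 : ∃ M : ℝ, ∀ t : ℝ, 0 ≤ t → ‖T t‖ ≤ M)
    (N : ℕ) (hN : 1 ≤ N)
    (f : ℝ → H) (hf : ContDiff ℝ 1 f) (hfc : HasCompactSupport f)
    (hfs : tsupport f ⊆ Ioi (0 : ℝ))
    -- `g = M₊(f)`, realized as the principal value limit
    (g : ℝ → H)
    (hg : ∀ t : ℝ, 0 < t →
      Tendsto (fun ε : ℝ => -∫ s in Ioo (0 : ℝ) (t - ε), (Tk 1 (t - s)) (f s))
        (𝓝[>] (0 : ℝ)) (𝓝 (g t))) :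
    IntegrableOn (fun t : ℝ => (Tk 1 ((N : ℝ) * t)) (g t)) (Ioi 0) ∧
    IntegrableOn (fun s : ℝ => (Tk 1 ((N : ℝ) * s)) (f s)) (Ioi 0) ∧
    ∫ t in Ioi (0 : ℝ), (Tk 1 ((N : ℝ) * t)) (g t)
      = (1 / (N + 1 : ℝ)) • ∫ s in Ioi (0 : ℝ), (Tk 1 ((N : ℝ) * s)) (f s) := by
  have hfcont : Continuous f := hf.continuous
  have hNR : (1:ℝ) ≤ (N:ℝ) := Nat.one_le_cast.mpr hN
  have hcontk : ∀ k, ContinuousOn (Tk k) (Ioi (0:ℝ)) := fun k u hu =>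
    ((hTkderiv k u hu).continuousAt).continuousWithinAt
  have hcomp := balayage_tk_comp T Tk hTadd hTk0 hTkderiv
  obtain ⟨M₁, hM₁⟩ := hMk 1 le_rfl
  obtain ⟨M₂, hM₂⟩ := hMk 2 one_le_two
  have hb1 : ∀ u : ℝ, 0 < u → ‖Tk 1 u‖ ≤ M₁ / u := by
    intro u hu
    rw [le_div_iff₀ hu]
    have := hM₁ u hu
    rw [pow_one] at this
    nlinarith
  have hb2 : ∀ u : ℝ, 0 < u → ‖Tk 2 u‖ ≤ M₂ / u ^ 2 := by
    intro u hu
    rw [le_div_iff₀ (by positivity)]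
    nlinarith [hM₂ u hu]
  have hM2 : 0 ≤ M₂ := le_trans (norm_nonneg _) (by simpa using hb2 1 one_pos)
  obtain ⟨C, hC⟩ := hfc.exists_bound_of_continuous hfcont
  have hC0 : 0 ≤ C := le_trans (norm_nonneg _) (hC 0)
  obtain ⟨δ, b, hδ, hsupp⟩ : ∃ δ b : ℝ, 0 < δ ∧ ∀ s, s ∉ Icc δ b → f s = 0 := by
    by_cases hne : (tsupport f).Nonempty
    · obtain ⟨δ, hδ⟩ := hfc.exists_isLeast hne
      obtain ⟨b, hb⟩ := hfc.exists_isGreatest hne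
      refine ⟨δ, b, hfs hδ.1, fun s hs => ?_⟩
      by_contra h
      have hmem : s ∈ tsupport f := subset_tsupport f h
      exact hs ⟨hδ.2 hmem, hb.2 hmem⟩
    · exact ⟨1, 0, one_pos, fun s _ =>
        image_eq_zero_of_notMem_tsupport (by simp [not_nonempty_iff_eq_empty.mp hne])⟩
  set μ : Measure ℝ := volume.restrict (Ioi 0) with hμ
  set G : ℝ × ℝ → H := fun p => (Tk 2 (((N:ℝ) + 1) * p.1 - p.2)) (f p.2) with hGdef
  set U : Set (ℝ × ℝ) := {p | 0 < p.2 ∧ p.2 < p.1} with hUdef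
  have hUopen : IsOpen U :=
    (isOpen_lt continuous_const continuous_snd).inter (isOpen_lt continuous_snd continuous_fst)
  set F : ℝ × ℝ → H := U.indicator G with hFdef
  have hGcont : ContinuousOn G U := by
    refine ContinuousOn.clm_apply ((hcontk 2).comp (by fun_prop) ?_)
      (hfcont.comp continuous_snd).continuousOn
    rintro ⟨t, s⟩ ⟨h0, h1⟩
    simp only [mem_Ioi]
    nlinarith
  have hFaesm : AEStronglyMeasurable F (μ.prod volume) :=
    (aestronglyMeasurable_indicator_iff hUopen.measurableSet).mpr
      (hGcont.aestronglyMeasurable hUopen.measurableSet)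
  have hFslice : ∀ t : ℝ, (fun s => F (t, s))
      = (Ioo 0 t).indicator (fun s => (Tk 2 (((N:ℝ) + 1) * t - s)) (f s)) := by
    intro t; funext s
    by_cases h : 0 < s ∧ s < t
    · rw [hFdef, indicator_of_mem (show (t,s) ∈ U from h), indicator_of_mem (mem_Ioo.mpr h)]
    · rw [hFdef, indicator_of_notMem (show (t,s) ∉ U from h),
        indicator_of_notMem (by simpa [mem_Ioo] using h)]
  have hslice_int : ∀ t : ℝ, 0 < t →
      IntegrableOn (fun s => (Tk 2 (((N:ℝ) + 1) * t - s)) (f s)) (Ioo 0 t) := by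
    intro t ht
    refine (ContinuousOn.integrableOn_Icc ?_).mono_set Ioo_subset_Icc_self
    refine ContinuousOn.clm_apply ((hcontk 2).comp (by fun_prop) ?_) hfcont.continuousOn
    rintro s ⟨h0, h1⟩
    simp only [mem_Ioi]
    nlinarith
  -- pointwise norm bound
  have hFnorm : ∀ t s : ℝ, ‖F (t, s)‖
      ≤ (Icc δ b).indicator (fun _ => M₂ * C / ((N:ℝ) * t) ^ 2) s := by
    intro t s
    by_cases hmem : (t, s) ∈ U
    · have h0 := hmem.1
      have h1 := hmem.2
      by_cases hsI : s ∈ Icc δ b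
      · rw [hFdef, indicator_of_mem hmem, indicator_of_mem hsI]
        have htpos : 0 < t := lt_trans h0 h1
        have hNt : 0 < (N:ℝ) * t := by positivity
        have hu : 0 < ((N:ℝ) + 1) * t - s := by nlinarith
        calc ‖G (t, s)‖ ≤ ‖Tk 2 (((N:ℝ) + 1) * t - s)‖ * ‖f s‖ :=
              ContinuousLinearMap.le_opNorm _ _
          _ ≤ (M₂ / (((N:ℝ) + 1) * t - s) ^ 2) * C :=
              mul_le_mul (hb2 _ hu) (hC s) (norm_nonneg _)
                (le_trans (norm_nonneg _) (hb2 _ hu))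
          _ ≤ (M₂ / ((N:ℝ) * t) ^ 2) * C := by
              apply mul_le_mul_of_nonneg_right _ hC0
              apply div_le_div_of_nonneg_left hM2 (by positivity)
              nlinarith
          _ = M₂ * C / ((N:ℝ) * t) ^ 2 := by ring
      · rw [hFdef, indicator_of_mem hmem, indicator_of_notMem hsI]
        rw [hGdef]
        simp [hsupp s hsI]
    · rw [hFdef, indicator_of_notMem hmem]
      simp only [norm_zero]
      apply indicator_nonneg
      intro x _
      positivity
  -- a.e. slice integrability
  have hae : ∀ᵐ t ∂μ, Integrable (fun s => F (t, s)) volume := by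
    rw [hμ, ae_restrict_iff' measurableSet_Ioi]
    filter_upwards with t ht
    rw [hFslice t]
    exact (integrable_indicator_iff measurableSet_Ioo).mpr (hslice_int t ht)
  -- bound for the norm-integral
  set V : ℝ := (volume (Icc δ b)).toReal with hV
  have hV0 : 0 ≤ V := ENNReal.toReal_nonneg
  have hDint : Integrable (fun t : ℝ =>
      (Ioi δ).indicator (fun t => V * (M₂ * C) / ((N:ℝ) * t) ^ 2) t) μ := by
    rw [hμ, integrable_indicator_iff measurableSet_Ioi]
    have base : IntegrableOn (fun x : ℝ => V * (M₂ * C) / (N:ℝ) ^ 2 * x ^ (-2:ℝ)) (Ioi δ) volume :=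
      (integrableOn_Ioi_rpow_of_lt (by norm_num : (-2:ℝ) < -1) hδ).const_mul _
    have : IntegrableOn (fun t : ℝ => V * (M₂ * C) / ((N:ℝ) * t) ^ 2) (Ioi δ) volume := by
      rw [integrableOn_congr_fun (g := fun x : ℝ => V * (M₂ * C) / (N:ℝ) ^ 2 * x ^ (-2:ℝ))
        ?_ measurableSet_Ioi]
      · exact base
      · intro t ht
        have htpos : 0 < t := lt_trans hδ (mem_Ioi.mp ht)
        have h2 : t ^ (-2:ℝ) = (t ^ (2:ℕ))⁻¹ := by
          rw [Real.rpow_neg htpos.le, show ((2:ℝ) = ((2:ℕ):ℝ)) by norm_num, Real.rpow_natCast]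
        show V * (M₂ * C) / ((N:ℝ) * t) ^ 2 = V * (M₂ * C) / (N:ℝ) ^ 2 * t ^ (-2:ℝ)
        rw [h2]
        ring
    rw [IntegrableOn, Measure.restrict_restrict measurableSet_Ioi]
    rw [Ioi_inter_Ioi, max_eq_left hδ.le]
    exact this
  have hnormbd : ∀ t : ℝ, 0 < t → ∫ s, ‖F (t, s)‖
      ≤ (Ioi δ).indicator (fun t => V * (M₂ * C) / ((N:ℝ) * t) ^ 2) t := by
    intro t ht
    by_cases htδ : δ < t
    · rw [indicator_of_mem (mem_Ioi.mpr htδ)]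
      calc ∫ s, ‖F (t, s)‖
          ≤ ∫ s, (Icc δ b).indicator (fun _ => M₂ * C / ((N:ℝ) * t) ^ 2) s := by
            apply integral_mono_of_nonneg (Filter.Eventually.of_forall fun s => norm_nonneg _)
              ((integrable_indicator_iff measurableSet_Icc).mpr
                ((integrableOn_const_iff).mpr (Or.inr measure_Icc_lt_top)))
              (Filter.Eventually.of_forall (hFnorm t))
        _ = V * (M₂ * C) / ((N:ℝ) * t) ^ 2 := by
            rw [integral_indicator_const _ measurableSet_Icc]
            rw [smul_eq_mul, measureReal_def, ← hV]
            ring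
    · rw [indicator_of_notMem (by simpa using htδ)]
      have : (fun s => F (t, s)) = fun _ => 0 := by
        funext s
        by_cases hmem : (t, s) ∈ U
        · rw [hFdef, indicator_of_mem hmem, hGdef]
          have : f s = 0 := hsupp s (fun hsI => htδ (lt_of_le_of_lt hsI.1 hmem.2))
          simp [this]
        · rw [hFdef, indicator_of_notMem hmem]
      have hz : (fun s : ℝ => ‖F (t, s)‖) = fun _ => (0:ℝ) := by
        funext s
        rw [congrFun this s]
        simp
      rw [hz]
      simp
  have hnormint : Integrable (fun t => ∫ s, ‖F (t, s)‖) μ := by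
    apply Integrable.mono' hDint (hFaesm.norm.integral_prod_right')
    rw [hμ, ae_restrict_iff' measurableSet_Ioi]
    filter_upwards with t ht
    rw [Real.norm_eq_abs, abs_of_nonneg (integral_nonneg fun s => norm_nonneg _)]
    exact hnormbd t ht
  have hFint : Integrable F (μ.prod volume) :=
    (integrable_prod_iff hFaesm).mpr ⟨hae, hnormint⟩
  -- the pointwise formula for the first integrand
  have hphi : ∀ t : ℝ, 0 < t → (Tk 1 ((N:ℝ) * t)) (g t) = -∫ s, F (t, s) := by
    intro t ht
    rw [hFslice t, integral_indicator measurableSet_Ioo]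
    exact balayage_phi_eq Tk hTkderiv hcomp f hfcont g N hN ht (hg t ht)
  -- first integrability conclusion
  have hint1 : IntegrableOn (fun t : ℝ => (Tk 1 ((N:ℝ) * t)) (g t)) (Ioi 0) := by
    have h := (hFint.integral_prod_left).neg
    apply h.congr
    rw [Filter.EventuallyEq, hμ, ae_restrict_iff' measurableSet_Ioi]
    filter_upwards with t ht
    rw [hphi t ht]
    simp only [Pi.neg_apply]
  -- second integrability conclusion
  have hint2 : IntegrableOn (fun s : ℝ => (Tk 1 ((N:ℝ) * s)) (f s)) (Ioi 0) := by
    have h1 : IntegrableOn (fun s : ℝ => (Tk 1 ((N:ℝ) * s)) (f s)) (Icc δ b) := by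
      apply ContinuousOn.integrableOn_Icc
      refine ContinuousOn.clm_apply ((hcontk 1).comp (by fun_prop) ?_) hfcont.continuousOn
      intro s hs
      simp only [mem_Ioi]
      nlinarith [hs.1]
    have h2 : IntegrableOn (fun s : ℝ => (Tk 1 ((N:ℝ) * s)) (f s)) (Ioi 0 \ Icc δ b) := by
      rw [integrableOn_congr_fun (g := fun _ => 0) (fun s hs => by simp [hsupp s hs.2])
        (measurableSet_Ioi.diff measurableSet_Icc)]
      exact integrableOn_zero
    exact (h1.union h2).mono_set (fun s hs => by
      by_cases h : s ∈ Icc δ b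
      · exact Or.inl h
      · exact Or.inr ⟨hs, h⟩)
  refine ⟨hint1, hint2, ?_⟩
  -- inner integral evaluation
  have hinner : ∀ s : ℝ, ∫ t, F (t, s) ∂μ
      = -((1/((N:ℝ) + 1)) • (Tk 1 ((N:ℝ) * s)) (f s)) := by
    intro s
    by_cases hfs0 : f s = 0
    · have hz : (fun t => F (t, s)) = fun _ => 0 := by
        funext t
        by_cases h : (t, s) ∈ U
        · rw [hFdef, indicator_of_mem h, hGdef]; simp [hfs0]
        · rw [hFdef, indicator_of_notMem h]
      rw [hz]
      simp [hfs0]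
    · have hsI : s ∈ Icc δ b := by
        by_contra h
        exact hfs0 (hsupp s h)
      have hs0 : 0 < s := lt_of_lt_of_le hδ hsI.1
      have hFs : (fun t => F (t, s))
          = (Ioi s).indicator (fun t => (Tk 2 (((N:ℝ) + 1) * t - s)) (f s)) := by
        funext t
        by_cases h : s < t
        · rw [hFdef, indicator_of_mem (show (t,s) ∈ U from ⟨hs0, h⟩),
            indicator_of_mem (mem_Ioi.mpr h)]
        · rw [hFdef, indicator_of_notMem (fun hu => h hu.2),
            indicator_of_notMem (by simpa using h)]
      rw [hFs, integral_indicator measurableSet_Ioi, hμ,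
        Measure.restrict_restrict measurableSet_Ioi, Ioi_inter_Ioi, max_eq_left hs0.le]
      exact (balayage_inner Tk hTkderiv M₁ M₂ hb1 hb2 N hN (f s) hs0).2
  -- main computation
  calc ∫ t in Ioi (0:ℝ), (Tk 1 ((N:ℝ) * t)) (g t)
      = ∫ t in Ioi (0:ℝ), -∫ s, F (t, s) :=
        setIntegral_congr_fun measurableSet_Ioi (fun t ht => hphi t ht)
    _ = -∫ t, (∫ s, F (t, s)) ∂μ := by rw [← hμ, ← integral_neg]
    _ = -∫ s, (∫ t, F (t, s) ∂μ) := by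
        rw [MeasureTheory.integral_integral_swap (f := fun t s => F (t, s)) hFint]
    _ = -∫ s, -((1/((N:ℝ) + 1)) • (Tk 1 ((N:ℝ) * s)) (f s)) := by
        congr 1
        exact integral_congr_ae (Filter.Eventually.of_forall hinner)
    _ = (1/((N:ℝ) + 1)) • ∫ s, (Tk 1 ((N:ℝ) * s)) (f s) := by
        rw [integral_neg, neg_neg, integral_smul]
    _ = (1 / (N + 1 : ℝ)) • ∫ s in Ioi (0:ℝ), (Tk 1 ((N:ℝ) * s)) (f s) := by
        congr 1
        refine (setIntegral_eq_integral_of_forall_compl_eq_zero fun s hs => ?_).symm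
        have hsI : s ∉ Icc δ b := fun h => hs (mem_Ioi.mpr (lt_of_lt_of_le hδ h.1))
        simp [hsupp s hsI]
end

section
/- Balayage formula (2.7): Let N ∈ ℕ₊ and let f : (0,∞) → H be continuously differentiable with compact support in (0,∞). Then the functions t ↦ t^N · T⁽ᴺ⁾(t)(M₋(f)(t)) and s ↦ s^{N+1} · T⁽ᴺ⁺¹⁾(s) f(s) are Bochner integrable on (0,∞), and ∫₀^∞ t^N T⁽ᴺ⁾(t)(M₋(f)(t)) dt = -(1/(N+1)) ∫₀^∞ s^{N+1} T⁽ᴺ⁺¹⁾(s) f(s) ds in H. In semigroup notation this is ∫₀^∞ (tA)^N e^{-tA} M₋(f)(t) dt = (1/(N+1)) ∫₀^∞ (sA)^{N+1} e^{-sA} f(s) ds. -/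
open MeasureTheory Filter Topology Set ContinuousLinearMap

lemma integrableOn_Ioi_of_bound {H : Type*} [NormedAddCommGroup H]
    {F : ℝ → H} {c b C : ℝ}
    (hc : ContinuousOn F (Ioi c)) (hC : ∀ s ∈ Ioc c b, ‖F s‖ ≤ C)
    (h0 : ∀ s, b < s → F s = 0) :
    IntegrableOn F (Ioi c) := by
  rcases le_or_gt b c with h | h
  · have heq : EqOn F 0 (Ioi c) := fun s hs => h0 s (lt_of_le_of_lt h hs)
    exact integrableOn_zero.congr_fun heq.symm measurableSet_Ioi
  · have h1 : IntegrableOn F (Ioc c b) := by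
      refine ⟨(hc.mono Ioc_subset_Ioi_self).aestronglyMeasurable measurableSet_Ioc, ?_⟩
      refine HasFiniteIntegral.restrict_of_bounded (C := C) measure_Ioc_lt_top ?_
      exact (ae_restrict_iff' measurableSet_Ioc).2 (ae_of_all _ hC)
    have h2 : IntegrableOn F (Ioi b) := by
      have heq : EqOn F 0 (Ioi b) := fun s hs => h0 s hs
      exact integrableOn_zero.congr_fun heq.symm measurableSet_Ioi
    rw [(Ioc_union_Ioi_eq_Ioi h.le).symm]
    exact h1.union h2

lemma Tk_comp_T {H : Type*} [NormedAddCommGroup H] [NormedSpace ℝ H]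
    (T : ℝ → H →L[ℝ] H) (Tk : ℕ → ℝ → H →L[ℝ] H)
    (hTadd : ∀ s t : ℝ, 0 ≤ s → 0 ≤ t → T (s + t) = (T s).comp (T t))
    (hTk0 : ∀ t : ℝ, 0 < t → Tk 0 t = T t)
    (hTkderiv : ∀ (k : ℕ) (t : ℝ), 0 < t → HasDerivAt (Tk k) (Tk (k + 1) t) t) :
    ∀ (k : ℕ) (u : ℝ), 0 < u → ∀ t : ℝ, 0 < t → Tk k (t + u) = (Tk k t).comp (T u) := by
  intro k
  induction k with
  | zero =>
    intro u hu t ht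
    rw [hTk0 _ (by linarith), hTk0 _ ht, hTadd t u ht.le hu.le]
  | succ k ih =>
    intro u hu t ht
    have h1 : HasDerivAt (fun t => Tk k (t + u)) (Tk (k + 1) (t + u)) t := by
      have := (hTkderiv k (t + u) (by linarith)).scomp t ((hasDerivAt_id t).add_const u)
      simpa [Function.comp_def] using this
    have h2 : HasDerivAt (fun t => (Tk k t).comp (T u)) ((Tk (k + 1) t).comp (T u)) t := by
      have := (hTkderiv k t ht).clm_comp (hasDerivAt_const t (T u))
      simpa using this
    have h3 : (fun t => Tk k (t + u)) =ᶠ[𝓝 t] (fun t => (Tk k t).comp (T u)) := by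
      filter_upwards [Ioi_mem_nhds ht] with t' ht'
      exact ih u hu t' ht'
    exact h1.unique (h2.congr_of_eventuallyEq h3)

set_option maxHeartbeats 1000000 in
theorem balayage_aux
    {H : Type*} [NormedAddCommGroup H] [NormedSpace ℝ H] [CompleteSpace H]
    (T : ℝ → H →L[ℝ] H) (Tk : ℕ → ℝ → H →L[ℝ] H)
    (hT0 : T 0 = ContinuousLinearMap.id ℝ H)
    (hTadd : ∀ s t : ℝ, 0 ≤ s → 0 ≤ t → T (s + t) = (T s).comp (T t))
    (hTcont : ∀ x : H, ContinuousOn (fun t : ℝ => T t x) (Ici (0 : ℝ)))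
    (hTk0 : ∀ t : ℝ, 0 < t → Tk 0 t = T t)
    (hTkderiv : ∀ (k : ℕ) (t : ℝ), 0 < t → HasDerivAt (Tk k) (Tk (k + 1) t) t)
    (hMk : ∀ k : ℕ, 1 ≤ k → ∃ M : ℝ, ∀ t : ℝ, 0 < t → t ^ k * ‖Tk k t‖ ≤ M)
    (hM0 : ∃ M : ℝ, ∀ t : ℝ, 0 ≤ t → ‖T t‖ ≤ M)
    (N : ℕ) (hN : 1 ≤ N)
    (f : ℝ → H) (hf : ContDiff ℝ 1 f) (hfc : HasCompactSupport f)
    (hfs : tsupport f ⊆ Ioi (0 : ℝ))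
    (g : ℝ → H)
    (hg : ∀ t : ℝ, 0 < t →
      Tendsto (fun ε : ℝ => -∫ s in Ioi (t + ε), (Tk 1 (s - t)) (f s))
        (𝓝[>] (0 : ℝ)) (𝓝 (g t))) :
    IntegrableOn (fun t : ℝ => t ^ N • (Tk N t) (g t)) (Ioi 0) ∧
    IntegrableOn (fun s : ℝ => s ^ (N + 1) • (Tk (N + 1) s) (f s)) (Ioi 0) ∧
    ∫ t in Ioi (0 : ℝ), t ^ N • (Tk N t) (g t)
      = -((1 / (N + 1 : ℝ)) • ∫ s in Ioi (0 : ℝ), s ^ (N + 1) • (Tk (N + 1) s) (f s)) := by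
  
  classical
  obtain ⟨M0, hM0⟩ := hM0
  obtain ⟨MN, hMN⟩ := hMk N hN
  obtain ⟨M1, hM1⟩ := hMk 1 le_rfl
  have hM0nn : 0 ≤ M0 := le_trans (norm_nonneg _) (hM0 0 le_rfl)
  -- support of f inside [a, b] with 0 < a
  set K : Set ℝ := tsupport f ∪ Icc 1 2 with hK
  have hKcpt : IsCompact K := hfc.union isCompact_Icc
  have hKsub : K ⊆ Ioi 0 := union_subset hfs (fun x hx => lt_of_lt_of_le one_pos hx.1)
  have hKne : K.Nonempty := ⟨1, Or.inr ⟨le_rfl, one_le_two⟩⟩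
  set a : ℝ := sInf K with ha_def
  set b : ℝ := sSup K with hb_def
  have haK : a ∈ K := hKcpt.sInf_mem hKne
  have hbK : b ∈ K := hKcpt.sSup_mem hKne
  have hapos : 0 < a := hKsub haK
  have hbpos : 0 < b := hKsub hbK
  have hab : a ≤ b := csInf_le_csSup hKne hKcpt.bddBelow hKcpt.bddAbove
  have hsub : tsupport f ⊆ Icc a b := fun x hx =>
    ⟨csInf_le hKcpt.bddBelow (Or.inl hx), le_csSup hKcpt.bddAbove (Or.inl hx)⟩
  have hf0 : ∀ s : ℝ, s ∉ Icc a b → f s = 0 := fun s hs =>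
    image_eq_zero_of_notMem_tsupport (fun h => hs (hsub h))
  have hf'0 : ∀ s : ℝ, s ∉ Icc a b → deriv f s = 0 := by
    intro s hs
    by_contra h
    exact hs (hsub (support_deriv_subset h))
  -- bounds on f and deriv f
  obtain ⟨Cf, hCf⟩ := hfc.exists_bound_of_continuous hf.continuous
  have hf'c : HasCompactSupport (deriv f) := hfc.deriv
  have hf'cont : Continuous (deriv f) := hf.continuous_deriv le_rfl
  obtain ⟨Cf', hCf'⟩ := hf'c.exists_bound_of_continuous hf'cont
  have hCfnn : 0 ≤ Cf := le_trans (norm_nonneg _) (hCf 0)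
  have hCf'nn : 0 ≤ Cf' := le_trans (norm_nonneg _) (hCf' 0)
  have hfd : ∀ s : ℝ, HasDerivAt f (deriv f s) s := fun s =>
    ((hf.differentiable one_ne_zero) s).hasDerivAt
  -- continuity of Tk k on (0, ∞)
  have hTkcont : ∀ k : ℕ, ContinuousOn (Tk k) (Ioi 0) := fun k t ht =>
    (hTkderiv k t ht).continuousAt.continuousWithinAt
  -- norm bounds
  have hMNnn : 0 ≤ MN := le_trans (by positivity) (hMN 1 one_pos)
  have hM1nn : 0 ≤ M1 := le_trans (by positivity) (hM1 1 one_pos)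
  have hTkN_op : ∀ t : ℝ, 0 < t → ‖Tk N t‖ ≤ MN / t ^ N := by
    intro t ht
    rw [le_div_iff₀ (by positivity)]
    calc ‖Tk N t‖ * t ^ N = t ^ N * ‖Tk N t‖ := by ring
    _ ≤ MN := hMN t ht
  have hsmul_norm : ∀ (r : ℝ) (x : H), 0 ≤ r → ‖r • x‖ = r * ‖x‖ := fun r x hr => by
    rw [norm_smul, Real.norm_eq_abs, abs_of_nonneg hr]
  -- the semigroup composition identity
  have hcomp := Tk_comp_T T Tk hTadd hTk0 hTkderiv
  -- φ
  set φ : ℝ → H := fun s => Tk N s (deriv f s) with hφ_def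
  have hφcont : ContinuousOn φ (Ioi 0) := (hTkcont N).clm_apply hf'cont.continuousOn
  have hφ0 : ∀ s : ℝ, s ∉ Icc a b → φ s = 0 := by
    intro s hs; simp [hφ_def, hf'0 s hs]
  have hφbd : ∀ s : ℝ, s ∈ Ioc 0 b → ‖φ s‖ ≤ MN / a ^ N * Cf' := by
    intro s hs
    by_cases hmem : s ∈ Icc a b
    · have h1 : ‖Tk N s‖ ≤ MN / a ^ N := by
        refine le_trans (hTkN_op s hs.1) ?_
        apply div_le_div_of_nonneg_left hMNnn (by positivity)
        exact pow_le_pow_left₀ hapos.le hmem.1 N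
      calc ‖φ s‖ ≤ ‖Tk N s‖ * ‖deriv f s‖ := (Tk N s).le_opNorm _
      _ ≤ MN / a ^ N * Cf' := by
        apply mul_le_mul h1 (hCf' s) (norm_nonneg _)
        positivity
    · rw [hφ0 s hmem]
      simp only [norm_zero]
      positivity
  have hφ0' : ∀ s : ℝ, b < s → φ s = 0 := fun s hs => hφ0 s (fun h => absurd h.2 (not_le.2 hs))
  have hφint : IntegrableOn φ (Ioi 0) := integrableOn_Ioi_of_bound hφcont hφbd hφ0'
  -- G₂
  set c : ℝ := b + 1 with hc_def
  have hcpos : 0 < c := by positivity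
  set G₂ : ℝ → H := fun t => ∫ s in Ioi t, φ s with hG₂_def
  have hG₂eq : ∀ t : ℝ, 0 < t → G₂ t = ∫ s in t..c, φ s := by
    intro t ht
    rcases le_or_gt t c with h | h
    · rw [intervalIntegral.integral_of_le h]
      have hU : Ioi t = Ioc t c ∪ Ioi c := (Ioc_union_Ioi_eq_Ioi h).symm
      have hd : Disjoint (Ioc t c) (Ioi c) := disjoint_left.2 fun s hs hs' => absurd hs' (not_lt.2 hs.2)
      have i1 : IntegrableOn φ (Ioc t c) := hφint.mono_set (fun s hs => lt_trans ht hs.1)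
      have i2 : IntegrableOn φ (Ioi c) := hφint.mono_set (fun s hs => lt_trans hcpos hs)
      have hzero : ∫ s in Ioi c, φ s = 0 :=
        setIntegral_eq_zero_of_forall_eq_zero (fun s hs => hφ0' s (by simp only [mem_Ioi] at hs; linarith))
      rw [hG₂_def]
      simp only
      rw [hU, setIntegral_union hd measurableSet_Ioi i1 i2, hzero, add_zero]
    · rw [intervalIntegral.integral_of_ge h.le]
      have e1 : ∫ s in Ioc c t, φ s = 0 :=
        setIntegral_eq_zero_of_forall_eq_zero (fun s hs => hφ0' s (by have := hs.1; linarith))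
      have e2 : G₂ t = 0 :=
        setIntegral_eq_zero_of_forall_eq_zero (fun s hs => hφ0' s (by simp only [mem_Ioi] at hs; linarith))
      rw [e2, e1, neg_zero]
  
  have hG₂deriv : ∀ t : ℝ, 0 < t → HasDerivAt G₂ (-φ t) t := by
    intro t ht
    have hint : IntervalIntegrable φ volume t c :=
      intervalIntegrable_iff.2 (hφint.mono_set (fun x hx => lt_trans (lt_min ht hcpos) hx.1))
    have hmeas : StronglyMeasurableAtFilter φ (𝓝 t) :=
      ⟨Ioi 0, Ioi_mem_nhds ht, hφcont.aestronglyMeasurable measurableSet_Ioi⟩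
    have h1 := intervalIntegral.integral_hasDerivAt_left hint hmeas
      (hφcont.continuousAt (Ioi_mem_nhds ht))
    refine h1.congr_of_eventuallyEq ?_
    filter_upwards [Ioi_mem_nhds ht] with u hu
    exact hG₂eq u hu
  have hG₂cont : ContinuousOn G₂ (Ioi 0) := fun t ht =>
    (hG₂deriv t ht).continuousAt.continuousWithinAt
  set CG : ℝ := ∫ s in Ioi (0:ℝ), ‖φ s‖ with hCG_def
  have hCGnn : 0 ≤ CG := setIntegral_nonneg measurableSet_Ioi (fun s _ => norm_nonneg _)
  have hG₂bd : ∀ t : ℝ, 0 ≤ t → ‖G₂ t‖ ≤ CG := by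
    intro t ht
    calc ‖G₂ t‖ ≤ ∫ s in Ioi t, ‖φ s‖ := norm_integral_le_integral_norm _
    _ ≤ CG := by
      apply setIntegral_mono_set hφint.norm (ae_of_all _ fun s => norm_nonneg _)
      exact HasSubset.Subset.eventuallyLE (Ioi_subset_Ioi ht)
  have hG₂0 : ∀ t : ℝ, b < t → G₂ t = 0 := fun t htb =>
    setIntegral_eq_zero_of_forall_eq_zero (fun s hs => hφ0' s (lt_trans htb hs))
  -- Step A
  have hNne : ((N : ℝ) + 1) ≠ 0 := by positivity
  have hFA_deriv : ∀ t ∈ Ioi (0:ℝ), HasDerivAt (fun t => (t ^ (N + 1) / ((N:ℝ) + 1)) • G₂ t)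
      (t ^ N • G₂ t - (t ^ (N + 1) / ((N:ℝ) + 1)) • φ t) t := by
    intro t ht
    have hs1 : HasDerivAt (fun t : ℝ => t ^ (N + 1) / ((N:ℝ) + 1)) (t ^ N) t := by
      have h := (hasDerivAt_pow (N + 1) t).div_const ((N:ℝ) + 1)
      convert h using 1
      · rfl
      · rfl
      push_cast
      field_simp
    have h2 := hs1.smul (hG₂deriv t ht)
    convert h2 using 1
    · rfl
    rw [smul_neg, sub_eq_add_neg, add_comm]
  have hint1 : IntegrableOn (fun t : ℝ => t ^ N • G₂ t) (Ioi 0) := by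
    apply integrableOn_Ioi_of_bound (b := b) (C := b ^ N * CG)
    · exact ((continuous_pow N).continuousOn).smul hG₂cont
    · intro s hs
      rw [hsmul_norm _ _ (pow_nonneg hs.1.le N)]
      exact mul_le_mul (pow_le_pow_left₀ hs.1.le hs.2 N) (hG₂bd s hs.1.le) (norm_nonneg _)
        (pow_nonneg hbpos.le N)
    · intro s hsb
      rw [hG₂0 s hsb, smul_zero]
  have hint2 : IntegrableOn (fun t : ℝ => (t ^ (N + 1) / ((N:ℝ) + 1)) • φ t) (Ioi 0) := by
    apply integrableOn_Ioi_of_bound (b := b) (C := (b ^ (N + 1) / ((N:ℝ) + 1)) * (MN / a ^ N * Cf'))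
    · exact (((continuous_pow (N + 1)).div_const _).continuousOn).smul hφcont
    · intro s hs
      rw [hsmul_norm _ _ (div_nonneg (pow_nonneg hs.1.le _) (by positivity))]
      apply mul_le_mul _ (hφbd s hs) (norm_nonneg _)
        (div_nonneg (pow_nonneg hbpos.le _) (by positivity))
      gcongr
      · exact hs.1.le
      · exact hs.2
    · intro s hsb
      rw [hφ0' s hsb, smul_zero]
  
  have hstepA0 : ∫ t in Ioi (0:ℝ),
      (t ^ N • G₂ t - (t ^ (N + 1) / ((N:ℝ) + 1)) • φ t) = 0 := by
    have hcont0 : ContinuousWithinAt (fun t : ℝ => (t ^ (N + 1) / ((N:ℝ) + 1)) • G₂ t)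
        (Ici 0) 0 := by
      have hF0 : ((0:ℝ) ^ (N + 1) / ((N:ℝ) + 1)) • G₂ 0 = 0 := by
        rw [zero_pow (Nat.succ_ne_zero N), zero_div, zero_smul]
      have key : Tendsto (fun t : ℝ => (t ^ (N + 1) / ((N:ℝ) + 1)) • G₂ t) (𝓝[Ici 0] 0)
          (𝓝 (0:H)) := by
        apply squeeze_zero_norm' (a := fun t => (t ^ (N + 1) / ((N:ℝ) + 1)) * CG)
        · filter_upwards [self_mem_nhdsWithin] with t (ht : t ∈ Ici (0:ℝ))
          rw [hsmul_norm _ _ (div_nonneg (pow_nonneg ht _) (by positivity))]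
          exact mul_le_mul_of_nonneg_left (hG₂bd t ht)
            (div_nonneg (pow_nonneg ht _) (by positivity))
        · have h5 : Tendsto (fun t : ℝ => (t ^ (N + 1) / ((N:ℝ) + 1)) * CG) (𝓝 0)
              (𝓝 (((0:ℝ) ^ (N + 1) / ((N:ℝ) + 1)) * CG)) :=
            (((continuous_pow (N + 1)).div_const _).mul continuous_const).tendsto 0
          rw [zero_pow (Nat.succ_ne_zero N), zero_div, zero_mul] at h5
          exact h5.mono_left nhdsWithin_le_nhds
      unfold ContinuousWithinAt
      convert key using 2
    have htop : Tendsto (fun t : ℝ => (t ^ (N + 1) / ((N:ℝ) + 1)) • G₂ t) atTop (𝓝 0) := by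
      have hev : ∀ᶠ u in (atTop : Filter ℝ), (0:H) = (u ^ (N + 1) / ((N:ℝ) + 1)) • G₂ u := by
        filter_upwards [eventually_gt_atTop b] with u hu
        rw [hG₂0 u hu, smul_zero]
      exact Tendsto.congr' hev tendsto_const_nhds
    have h := integral_Ioi_of_hasDerivAt_of_tendsto hcont0 hFA_deriv (hint1.sub hint2) htop
    rw [h, zero_pow (Nat.succ_ne_zero N), zero_div, zero_smul, sub_zero]
  have hA : ∫ t in Ioi (0:ℝ), t ^ N • G₂ t
      = (1 / ((N:ℝ) + 1)) • ∫ t in Ioi (0:ℝ), t ^ (N + 1) • φ t := by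
    rw [integral_sub hint1 hint2, sub_eq_zero] at hstepA0
    rw [hstepA0, ← integral_smul]
    apply setIntegral_congr_fun measurableSet_Ioi
    intro t _
    simp only
    rw [smul_smul]
    congr 1
    field_simp
  
  -- Step B
  obtain ⟨MN1, hMN1⟩ := hMk (N + 1) (by omega)
  have hMN1nn : 0 ≤ MN1 := le_trans (by positivity) (hMN1 1 one_pos)
  have hbound_pow : ∀ (k : ℕ) (Mk' : ℝ), (∀ t : ℝ, 0 < t → t ^ k * ‖Tk k t‖ ≤ Mk') →
      ∀ (s : ℝ), 0 < s → ∀ x : H, ‖s ^ k • Tk k s x‖ ≤ Mk' * ‖x‖ := by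
    intro k Mk' hMk' s hs x
    rw [hsmul_norm _ _ (pow_nonneg hs.le k)]
    calc s ^ k * ‖Tk k s x‖ ≤ s ^ k * (‖Tk k s‖ * ‖x‖) :=
      mul_le_mul_of_nonneg_left ((Tk k s).le_opNorm x) (pow_nonneg hs.le k)
    _ = (s ^ k * ‖Tk k s‖) * ‖x‖ := by ring
    _ ≤ Mk' * ‖x‖ := mul_le_mul_of_nonneg_right (hMk' s hs) (norm_nonneg x)
  set ψN : ℝ → H := fun s => Tk N s (f s) with hψN_def
  have hψNcont : ContinuousOn ψN (Ioi 0) := (hTkcont N).clm_apply hf.continuous.continuousOn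
  have hFB_deriv : ∀ s ∈ Ioi (0:ℝ), HasDerivAt (fun s => s ^ (N + 1) • ψN s)
      ((((N:ℝ) + 1) * s ^ N) • ψN s
        + s ^ (N + 1) • (Tk (N + 1) s (f s) + Tk N s (deriv f s))) s := by
    intro s hs
    have h1 : HasDerivAt ψN (Tk (N + 1) s (f s) + Tk N s (deriv f s)) s :=
      (hTkderiv N s hs).clm_apply (hfd s)
    have h2 : HasDerivAt (fun u : ℝ => u ^ (N + 1)) (((N:ℝ) + 1) * s ^ N) s := by
      have h := hasDerivAt_pow (N + 1) s
      push_cast at h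
      simpa using h
    have h3 := h2.smul h1
    convert h3 using 1
    · rfl
    exact add_comm _ _
  have hintB1 : IntegrableOn (fun s : ℝ => s ^ N • ψN s) (Ioi 0) := by
    apply integrableOn_Ioi_of_bound (b := b) (C := MN * Cf)
    · exact ((continuous_pow N).continuousOn).smul hψNcont
    · intro s hs
      exact le_trans (hbound_pow N MN hMN s hs.1 (f s))
        (mul_le_mul_of_nonneg_left (hCf s) hMNnn)
    · intro s hsb
      rw [hψN_def]
      simp only
      rw [hf0 s (fun h => absurd h.2 (not_le.2 hsb)), map_zero, smul_zero]
  have hintB2 : IntegrableOn (fun s : ℝ => s ^ (N + 1) • Tk (N + 1) s (f s)) (Ioi 0) := by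
    apply integrableOn_Ioi_of_bound (b := b) (C := MN1 * Cf)
    · exact ((continuous_pow (N + 1)).continuousOn).smul
        ((hTkcont (N + 1)).clm_apply hf.continuous.continuousOn)
    · intro s hs
      exact le_trans (hbound_pow (N + 1) MN1 hMN1 s hs.1 (f s))
        (mul_le_mul_of_nonneg_left (hCf s) hMN1nn)
    · intro s hsb
      rw [hf0 s (fun h => absurd h.2 (not_le.2 hsb)), map_zero, smul_zero]
  have hintB3 : IntegrableOn (fun s : ℝ => s ^ (N + 1) • φ s) (Ioi 0) := by
    apply integrableOn_Ioi_of_bound (b := b) (C := b ^ (N + 1) * (MN / a ^ N * Cf'))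
    · exact ((continuous_pow (N + 1)).continuousOn).smul hφcont
    · intro s hs
      rw [hsmul_norm _ _ (pow_nonneg hs.1.le _)]
      exact mul_le_mul (pow_le_pow_left₀ hs.1.le hs.2 _) (hφbd s hs) (norm_nonneg _)
        (pow_nonneg hbpos.le _)
    · intro s hsb
      rw [hφ0' s hsb, smul_zero]
  have hintB1' : IntegrableOn (fun s : ℝ => (((N:ℝ) + 1) * s ^ N) • ψN s) (Ioi 0) := by
    have he : (fun s : ℝ => (((N:ℝ) + 1) * s ^ N) • ψN s)
        = fun s : ℝ => ((N:ℝ) + 1) • (s ^ N • ψN s) := by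
      funext s; rw [mul_smul]
    rw [he]
    exact hintB1.smul _
  have hintB23 : IntegrableOn
      (fun s : ℝ => s ^ (N + 1) • (Tk (N + 1) s (f s) + Tk N s (deriv f s))) (Ioi 0) := by
    have he : (fun s : ℝ => s ^ (N + 1) • (Tk (N + 1) s (f s) + Tk N s (deriv f s)))
        = fun s : ℝ => s ^ (N + 1) • Tk (N + 1) s (f s) + s ^ (N + 1) • φ s := by
      funext s; rw [smul_add]
    rw [he]
    exact hintB2.add hintB3
  have hstepB0 : ∫ s in Ioi (0:ℝ), ((((N:ℝ) + 1) * s ^ N) • ψN s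
      + s ^ (N + 1) • (Tk (N + 1) s (f s) + Tk N s (deriv f s))) = 0 := by
    have hcontB : ContinuousWithinAt (fun s : ℝ => s ^ (N + 1) • ψN s) (Ici 0) 0 := by
      apply ContinuousWithinAt.congr_of_eventuallyEq (continuousWithinAt_const (b := (0:H)))
      · filter_upwards [inter_mem self_mem_nhdsWithin
          (mem_nhdsWithin_of_mem_nhds (Iio_mem_nhds hapos))] with s hs
        rw [hψN_def]
        simp only
        rw [hf0 s (fun h => absurd h.1 (not_le.2 hs.2)), map_zero, smul_zero]
      · rw [zero_pow (Nat.succ_ne_zero N), zero_smul]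
    have htopB : Tendsto (fun s : ℝ => s ^ (N + 1) • ψN s) atTop (𝓝 0) := by
      have hev : ∀ᶠ u in (atTop : Filter ℝ), (0:H) = u ^ (N + 1) • ψN u := by
        filter_upwards [eventually_gt_atTop b] with u hu
        rw [hψN_def]
        simp only
        rw [hf0 u (fun h => absurd h.2 (not_le.2 hu)), map_zero, smul_zero]
      exact Tendsto.congr' hev tendsto_const_nhds
    have h := integral_Ioi_of_hasDerivAt_of_tendsto hcontB hFB_deriv
      (hintB1'.add hintB23) htopB
    rw [h, zero_pow (Nat.succ_ne_zero N), zero_smul, sub_zero]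
  have hB : (((N:ℝ) + 1) • ∫ s in Ioi (0:ℝ), s ^ N • ψN s)
      + (∫ s in Ioi (0:ℝ), s ^ (N + 1) • Tk (N + 1) s (f s))
      + (∫ s in Ioi (0:ℝ), s ^ (N + 1) • φ s) = 0 := by
    rw [integral_add hintB1' hintB23] at hstepB0
    have e1 : ∫ s in Ioi (0:ℝ), (((N:ℝ) + 1) * s ^ N) • ψN s
        = ((N:ℝ) + 1) • ∫ s in Ioi (0:ℝ), s ^ N • ψN s := by
      rw [← integral_smul]
      apply setIntegral_congr_fun measurableSet_Ioi
      intro s _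
      simp only
      rw [mul_smul]
    have e2 : ∫ s in Ioi (0:ℝ), s ^ (N + 1) • (Tk (N + 1) s (f s) + Tk N s (deriv f s))
        = (∫ s in Ioi (0:ℝ), s ^ (N + 1) • Tk (N + 1) s (f s))
          + ∫ s in Ioi (0:ℝ), s ^ (N + 1) • φ s := by
      rw [← integral_add hintB2 hintB3]
      apply setIntegral_congr_fun measurableSet_Ioi
      intro s _
      simp only
      rw [smul_add]
    rw [e1, e2] at hstepB0
    rw [add_assoc]
    exact hstepB0
  
  -- ψ facts (for fixed t)
  have hψcont : ∀ t : ℝ, ContinuousOn (fun s => T (s - t) (deriv f s)) (Ioi t) := by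
    intro t
    have hbase : ContinuousOn (fun s => Tk 0 (s - t) (deriv f s)) (Ioi t) := by
      refine ContinuousOn.clm_apply ?_ hf'cont.continuousOn
      exact (hTkcont 0).comp ((continuous_id.sub continuous_const).continuousOn)
        (fun s hs => mem_Ioi.2 (sub_pos.2 (mem_Ioi.1 hs)))
    exact hbase.congr (fun s hs => by show T (s - t) (deriv f s) = Tk 0 (s - t) (deriv f s); rw [hTk0 (s - t) (sub_pos.2 hs)])
  have hψbd : ∀ t : ℝ, ∀ s ∈ Ioi t, ‖T (s - t) (deriv f s)‖ ≤ M0 * Cf' := by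
    intro t s hs
    calc ‖T (s - t) (deriv f s)‖ ≤ ‖T (s - t)‖ * ‖deriv f s‖ := (T (s - t)).le_opNorm _
    _ ≤ M0 * Cf' := mul_le_mul (hM0 _ (sub_nonneg.2 (le_of_lt hs))) (hCf' s)
        (norm_nonneg _) hM0nn
  have hψ0 : ∀ t : ℝ, ∀ s : ℝ, b < s → T (s - t) (deriv f s) = 0 := by
    intro t s hsb
    rw [hf'0 s (fun h => absurd h.2 (not_le.2 hsb)), map_zero]
  have hψint : ∀ t : ℝ, IntegrableOn (fun s => T (s - t) (deriv f s)) (Ioi t) := by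
    intro t
    exact integrableOn_Ioi_of_bound (b := b) (C := M0 * Cf') (hψcont t)
      (fun s hs => hψbd t s hs.1) (hψ0 t)
  -- the principal value identity for g
  have hgeq : ∀ t : ℝ, 0 < t → g t = f t + ∫ s in Ioi t, T (s - t) (deriv f s) := by
    intro t ht
    have hEε : ∀ ε : ℝ, 0 < ε →
        -∫ s in Ioi (t + ε), (Tk 1 (s - t)) (f s)
          = T ε (f (t + ε)) + ∫ s in Ioi (t + ε), T (s - t) (deriv f s) := by
      intro ε hε
      have hder : ∀ s ∈ Ioi (t + ε), HasDerivAt (fun s => T (s - t) (f s))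
          (Tk 1 (s - t) (f s) + T (s - t) (deriv f s)) s := by
        intro s hs
        simp only [mem_Ioi] at hs
        have hst : 0 < s - t := by linarith
        have h1 : HasDerivAt (fun s : ℝ => Tk 0 (s - t)) (Tk 1 (s - t)) s := by
          have h := (hTkderiv 0 (s - t) hst).scomp s ((hasDerivAt_id s).sub_const t)
          simpa [Function.comp_def] using h
        have h2 : HasDerivAt (fun s : ℝ => T (s - t)) (Tk 1 (s - t)) s := by
          apply h1.congr_of_eventuallyEq
          filter_upwards [Ioi_mem_nhds (show t < s by linarith)] with u hu
          rw [hTk0 (u - t) (sub_pos.2 hu)]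
        exact h2.clm_apply (hfd s)
      have hint1ε : IntegrableOn (fun s => Tk 1 (s - t) (f s)) (Ioi (t + ε)) := by
        apply integrableOn_Ioi_of_bound (b := b) (C := M1 / ε * Cf)
        · refine ContinuousOn.clm_apply ?_ hf.continuous.continuousOn
          exact (hTkcont 1).comp ((continuous_id.sub continuous_const).continuousOn)
            (fun s hs => by simp only [mem_Ioi] at hs ⊢; linarith)
        · intro s hs
          have hst : ε ≤ s - t := by have := hs.1; linarith
          have hstpos : 0 < s - t := lt_of_lt_of_le hε hst
          have hop : ‖Tk 1 (s - t)‖ ≤ M1 / ε := by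
            have h5 := hM1 (s - t) hstpos
            rw [pow_one] at h5
            have h6 : ‖Tk 1 (s - t)‖ ≤ M1 / (s - t) := by
              rw [le_div_iff₀ hstpos, mul_comm]
              exact h5
            exact h6.trans (div_le_div_of_nonneg_left hM1nn hε hst)
          calc ‖Tk 1 (s - t) (f s)‖ ≤ ‖Tk 1 (s - t)‖ * ‖f s‖ := (Tk 1 (s - t)).le_opNorm _
          _ ≤ M1 / ε * Cf := mul_le_mul hop (hCf s) (norm_nonneg _)
              (div_nonneg hM1nn hε.le)
        · intro s hsb
          rw [hf0 s (fun h => absurd h.2 (not_le.2 hsb)), map_zero]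
      have hint2ε : IntegrableOn (fun s => T (s - t) (deriv f s)) (Ioi (t + ε)) :=
        (hψint t).mono_set (Ioi_subset_Ioi (by linarith))
      have hcontε : ContinuousWithinAt (fun s => T (s - t) (f s)) (Ici (t + ε)) (t + ε) := by
        have hc0 : ContinuousAt (Tk 0) (t + ε - t) := by
          rw [add_sub_cancel_left]
          exact (hTkderiv 0 ε hε).continuousAt
        have hc1 : ContinuousAt (fun s : ℝ => Tk 0 (s - t)) (t + ε) := by
          exact ContinuousAt.comp (x := t + ε) hc0 ((continuous_sub_right t).continuousAt)
        have hc2 : ContinuousAt (fun s : ℝ => Tk 0 (s - t) (f s)) (t + ε) :=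
          hc1.clm_apply hf.continuous.continuousAt
        have hc3 : ContinuousAt (fun s : ℝ => T (s - t) (f s)) (t + ε) := by
          apply hc2.congr
          filter_upwards [Ioi_mem_nhds (show t < t + ε by linarith)] with u hu
          rw [hTk0 (u - t) (sub_pos.2 hu)]
        exact hc3.continuousWithinAt
      have htopε : Tendsto (fun s => T (s - t) (f s)) atTop (𝓝 0) := by
        have hev : ∀ᶠ u in (atTop : Filter ℝ), (0:H) = T (u - t) (f u) := by
          filter_upwards [eventually_gt_atTop b] with u hu
          rw [hf0 u (fun h => absurd h.2 (not_le.2 hu)), map_zero]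
        exact Tendsto.congr' hev tendsto_const_nhds
      have h := integral_Ioi_of_hasDerivAt_of_tendsto hcontε hder
        (hint1ε.add hint2ε) htopε
      rw [integral_add hint1ε hint2ε, add_sub_cancel_left, zero_sub] at h
      have hX : (∫ s in Ioi (t + ε), Tk 1 (s - t) (f s))
          = -(T ε (f (t + ε))) - ∫ s in Ioi (t + ε), T (s - t) (deriv f s) :=
        eq_sub_of_add_eq h
      rw [hX]
      abel
    -- the limit of the right-hand side
    have hA1 : Tendsto (fun ε => T ε (f (t + ε) - f t)) (𝓝[>] (0:ℝ)) (𝓝 0) := by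
      apply squeeze_zero_norm' (a := fun ε => M0 * ‖f (t + ε) - f t‖)
      · filter_upwards [self_mem_nhdsWithin] with ε (hε : ε ∈ Ioi (0:ℝ))
        calc ‖T ε (f (t + ε) - f t)‖ ≤ ‖T ε‖ * ‖f (t + ε) - f t‖ := (T ε).le_opNorm _
        _ ≤ M0 * ‖f (t + ε) - f t‖ :=
          mul_le_mul_of_nonneg_right (hM0 ε (le_of_lt hε)) (norm_nonneg _)
      · have hc : Continuous (fun ε : ℝ => M0 * ‖f (t + ε) - f t‖) :=
          continuous_const.mul (((hf.continuous.comp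
            (continuous_const.add continuous_id)).sub continuous_const).norm)
        have h5 := hc.tendsto 0
        simp only [add_zero, sub_self, norm_zero, mul_zero] at h5
        exact h5.mono_left nhdsWithin_le_nhds
    have hA2 : Tendsto (fun ε => T ε (f t)) (𝓝[>] (0:ℝ)) (𝓝 (f t)) := by
      have h5 := hTcont (f t) 0 self_mem_Ici
      have h6 : (fun ε : ℝ => T ε (f t)) 0 = f t := by
        show T 0 (f t) = f t
        rw [hT0]
        rfl
      unfold ContinuousWithinAt at h5
      rw [h6] at h5
      exact h5.mono_left (nhdsWithin_mono 0 Ioi_subset_Ici_self)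
    have hlimA : Tendsto (fun ε => T ε (f (t + ε))) (𝓝[>] (0:ℝ)) (𝓝 (f t)) := by
      have h5 := hA1.add hA2
      rw [zero_add] at h5
      apply h5.congr
      intro ε
      rw [← map_add, sub_add_cancel]
    have hsmall : Tendsto (fun ε => ∫ s in Ioc t (t + ε), T (s - t) (deriv f s))
        (𝓝[>] (0:ℝ)) (𝓝 0) := by
      apply squeeze_zero_norm' (a := fun ε => M0 * Cf' * ε)
      · filter_upwards [self_mem_nhdsWithin] with ε (hε : ε ∈ Ioi (0:ℝ))
        have hmeas : AEStronglyMeasurable (fun s => T (s - t) (deriv f s))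
            (volume.restrict (Ioc t (t + ε))) :=
          ((hψcont t).mono Ioc_subset_Ioi_self).aestronglyMeasurable measurableSet_Ioc
        have h5 := norm_setIntegral_le_of_norm_le_const (μ := volume)
          (s := Ioc t (t + ε)) (C := M0 * Cf') measure_Ioc_lt_top
          (fun s hs => hψbd t s hs.1)
        rw [Real.volume_real_Ioc_of_le (by simp only [mem_Ioi] at hε; linarith),
          add_sub_cancel_left] at h5
        exact h5
      · have h5 : Tendsto (fun ε : ℝ => M0 * Cf' * ε) (𝓝 0) (𝓝 (M0 * Cf' * 0)) :=
          (continuous_const.mul continuous_id).tendsto 0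
        rw [mul_zero] at h5
        exact h5.mono_left nhdsWithin_le_nhds
    have hlimB : Tendsto (fun ε => ∫ s in Ioi (t + ε), T (s - t) (deriv f s))
        (𝓝[>] (0:ℝ)) (𝓝 (∫ s in Ioi t, T (s - t) (deriv f s))) := by
      have hsplit : ∀ ε : ℝ, 0 < ε →
          (∫ s in Ioi t, T (s - t) (deriv f s)) - (∫ s in Ioc t (t + ε), T (s - t) (deriv f s))
            = ∫ s in Ioi (t + ε), T (s - t) (deriv f s) := by
        intro ε hε
        have hU : Ioi t = Ioc t (t + ε) ∪ Ioi (t + ε) :=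
          (Ioc_union_Ioi_eq_Ioi (by linarith)).symm
        have hd : Disjoint (Ioc t (t + ε)) (Ioi (t + ε)) :=
          disjoint_left.2 fun s hs hs' => absurd hs' (not_lt.2 hs.2)
        have i1 : IntegrableOn (fun s => T (s - t) (deriv f s)) (Ioc t (t + ε)) :=
          (hψint t).mono_set Ioc_subset_Ioi_self
        have i2 : IntegrableOn (fun s => T (s - t) (deriv f s)) (Ioi (t + ε)) :=
          (hψint t).mono_set (Ioi_subset_Ioi (by linarith))
        rw [sub_eq_iff_eq_add, hU, setIntegral_union hd measurableSet_Ioi i1 i2, add_comm]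
      have h5 : Tendsto (fun ε : ℝ => (∫ s in Ioi t, T (s - t) (deriv f s))
          - ∫ s in Ioc t (t + ε), T (s - t) (deriv f s)) (𝓝[>] (0:ℝ))
          (𝓝 ((∫ s in Ioi t, T (s - t) (deriv f s)) - 0)) := tendsto_const_nhds.sub hsmall
      rw [sub_zero] at h5
      apply Tendsto.congr' _ h5
      filter_upwards [self_mem_nhdsWithin] with ε (hε : ε ∈ Ioi (0:ℝ))
      exact hsplit ε hε
    have hlim : Tendsto (fun ε : ℝ => -∫ s in Ioi (t + ε), (Tk 1 (s - t)) (f s))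
        (𝓝[>] (0:ℝ)) (𝓝 (f t + ∫ s in Ioi t, T (s - t) (deriv f s))) := by
      apply Tendsto.congr' _ (hlimA.add hlimB)
      filter_upwards [self_mem_nhdsWithin] with ε (hε : ε ∈ Ioi (0:ℝ))
      exact (hEε ε hε).symm
    exact tendsto_nhds_unique (hg t ht) hlim
  -- the key pointwise identity
  have hkey : ∀ t : ℝ, 0 < t → Tk N t (g t) = ψN t + G₂ t := by
    intro t ht
    rw [hgeq t ht, map_add]
    congr 1
    rw [← ContinuousLinearMap.integral_comp_comm _ (hψint t)]
    apply setIntegral_congr_fun measurableSet_Ioi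
    intro s hs
    simp only
    have hcs := hcomp N (s - t) (sub_pos.2 hs) t ht
    have : Tk N t ((T (s - t)) (deriv f s)) = ((Tk N t).comp (T (s - t))) (deriv f s) := rfl
    rw [this, ← hcs, show t + (s - t) = s from by ring]
  -- final assembly
  have heqg : EqOn (fun t : ℝ => t ^ N • Tk N t (g t))
      (fun t : ℝ => t ^ N • ψN t + t ^ N • G₂ t) (Ioi 0) := by
    intro t ht
    simp only
    rw [hkey t ht, smul_add]
  refine ⟨MeasureTheory.IntegrableOn.congr_fun (hintB1.add hint1) heqg.symm
    measurableSet_Ioi, hintB2, ?_⟩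
  have hI3 : (∫ s in Ioi (0:ℝ), s ^ (N + 1) • φ s)
      = -((((N:ℝ) + 1) • ∫ s in Ioi (0:ℝ), s ^ N • ψN s)
        + ∫ s in Ioi (0:ℝ), s ^ (N + 1) • Tk (N + 1) s (f s)) := by
    exact eq_neg_of_add_eq_zero_right hB
  have hscal : (1 / ((N:ℝ) + 1)) • (((N:ℝ) + 1) • (∫ s in Ioi (0:ℝ), s ^ N • ψN s))
      = ∫ s in Ioi (0:ℝ), s ^ N • ψN s := by
    rw [smul_smul, one_div, inv_mul_cancel₀ hNne, one_smul]
  calc ∫ t in Ioi (0:ℝ), t ^ N • (Tk N t) (g t)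
      = ∫ t in Ioi (0:ℝ), (t ^ N • ψN t + t ^ N • G₂ t) :=
        setIntegral_congr_fun measurableSet_Ioi heqg
  _ = (∫ t in Ioi (0:ℝ), t ^ N • ψN t) + ∫ t in Ioi (0:ℝ), t ^ N • G₂ t :=
        integral_add hintB1 hint1
  _ = (∫ t in Ioi (0:ℝ), t ^ N • ψN t)
        + (1 / ((N:ℝ) + 1)) • ∫ t in Ioi (0:ℝ), t ^ (N + 1) • φ t := by rw [hA]
  _ = -((1 / (N + 1 : ℝ)) • ∫ s in Ioi (0 : ℝ), s ^ (N + 1) • (Tk (N + 1) s) (f s)) := by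
        rw [hI3, smul_neg, smul_add, hscal]
        push_cast
        abel


/-- Balayage formula (2.7): for `N ∈ ℕ₊` and `f` continuously differentiable with
compact support in `(0,∞)`, with `g = M₋(f)` the (principal-value) backward maximal
regularity operator applied to `f`, the functions `t ↦ t^N • T⁽ᴺ⁾(t)(M₋(f)(t))` and
`s ↦ s^(N+1) • T⁽ᴺ⁺¹⁾(s) f(s)` are Bochner integrable on `(0,∞)` and
`∫₀^∞ t^N • T⁽ᴺ⁾(t)(M₋(f)(t)) dt = -(1/(N+1)) • ∫₀^∞ s^(N+1) • T⁽ᴺ⁺¹⁾(s) f(s) ds`. -/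
theorem balayage_formula_backward
    {H : Type*} [NormedAddCommGroup H] [InnerProductSpace ℂ H] [CompleteSpace H]
    (T : ℝ → H →L[ℂ] H) (Tk : ℕ → ℝ → H →L[ℂ] H)
    (hT0 : T 0 = ContinuousLinearMap.id ℂ H)
    (hTadd : ∀ s t : ℝ, 0 ≤ s → 0 ≤ t → T (s + t) = (T s).comp (T t))
    (hTcont : ∀ x : H, ContinuousOn (fun t : ℝ => T t x) (Ici (0 : ℝ)))
    (hTk0 : ∀ t : ℝ, 0 < t → Tk 0 t = T t)
    (hTkderiv : ∀ (k : ℕ) (t : ℝ), 0 < t → HasDerivAt (Tk k) (Tk (k + 1) t) t)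
    (hMk : ∀ k : ℕ, 1 ≤ k → ∃ M : ℝ, ∀ t : ℝ, 0 < t → t ^ k * ‖Tk k t‖ ≤ M)
    (hM0 : ∃ M : ℝ, ∀ t : ℝ, 0 ≤ t → ‖T t‖ ≤ M)
    (N : ℕ) (hN : 1 ≤ N)
    (f : ℝ → H) (hf : ContDiff ℝ 1 f) (hfc : HasCompactSupport f)
    (hfs : tsupport f ⊆ Ioi (0 : ℝ))
    -- `g = M₋(f)`, realized as the principal value limit
    (g : ℝ → H)
    (hg : ∀ t : ℝ, 0 < t →
      Tendsto (fun ε : ℝ => -∫ s in Ioi (t + ε), (Tk 1 (s - t)) (f s))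
        (𝓝[>] (0 : ℝ)) (𝓝 (g t))) :
    IntegrableOn (fun t : ℝ => t ^ N • (Tk N t) (g t)) (Ioi 0) ∧
    IntegrableOn (fun s : ℝ => s ^ (N + 1) • (Tk (N + 1) s) (f s)) (Ioi 0) ∧
    ∫ t in Ioi (0 : ℝ), t ^ N • (Tk N t) (g t)
      = -((1 / (N + 1 : ℝ)) • ∫ s in Ioi (0 : ℝ), s ^ (N + 1) • (Tk (N + 1) s) (f s)) := by
  let T' : ℝ → H →L[ℝ] H := fun t => (T t).restrictScalars ℝ
  let Tk' : ℕ → ℝ → H →L[ℝ] H := fun k t => (Tk k t).restrictScalars ℝ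
  have hT0' : T' 0 = ContinuousLinearMap.id ℝ H := by
    ext x
    show (T 0).restrictScalars ℝ x = x
    rw [hT0]
    rfl
  have hTadd' : ∀ s t : ℝ, 0 ≤ s → 0 ≤ t → T' (s + t) = (T' s).comp (T' t) := by
    intro s t hs ht
    ext x
    show (T (s + t)).restrictScalars ℝ x = _
    rw [hTadd s t hs ht]
    rfl
  have hTcont' : ∀ x : H, ContinuousOn (fun t : ℝ => T' t x) (Ici (0 : ℝ)) := fun x =>
    hTcont x
  have hTk0' : ∀ t : ℝ, 0 < t → Tk' 0 t = T' t := by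
    intro t ht
    show (Tk 0 t).restrictScalars ℝ = (T t).restrictScalars ℝ
    rw [hTk0 t ht]
  have hTkderiv' : ∀ (k : ℕ) (t : ℝ), 0 < t → HasDerivAt (Tk' k) (Tk' (k + 1) t) t :=
    fun k t ht =>
      ((restrictScalarsIsometry ℂ H H ℝ ℝ).toContinuousLinearMap.hasFDerivAt).comp_hasDerivAt
        t (hTkderiv k t ht)
  have hMk' : ∀ k : ℕ, 1 ≤ k → ∃ M : ℝ, ∀ t : ℝ, 0 < t → t ^ k * ‖Tk' k t‖ ≤ M := by
    intro k hk
    obtain ⟨M, hM⟩ := hMk k hk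
    refine ⟨M, fun t ht => ?_⟩
    rw [show ‖Tk' k t‖ = ‖Tk k t‖ from ContinuousLinearMap.norm_restrictScalars _]
    exact hM t ht
  have hM0' : ∃ M : ℝ, ∀ t : ℝ, 0 ≤ t → ‖T' t‖ ≤ M := by
    obtain ⟨M, hM⟩ := hM0
    refine ⟨M, fun t ht => ?_⟩
    rw [show ‖T' t‖ = ‖T t‖ from ContinuousLinearMap.norm_restrictScalars _]
    exact hM t ht
  have hg' : ∀ t : ℝ, 0 < t →
      Tendsto (fun ε : ℝ => -∫ s in Ioi (t + ε), (Tk' 1 (s - t)) (f s))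
        (𝓝[>] (0 : ℝ)) (𝓝 (g t)) := hg
  exact balayage_aux T' Tk' hT0' hTadd' hTcont' hTk0' hTkderiv' hMk' hM0' N hN f hf hfc
    hfs g hg'
end

section
/- Endpoint balayage formula (2.8): Let N ∈ ℕ₊ and let f : (0,∞) → H be continuously differentiable with compact support in (0,∞). Then the improper integral lim_{R→∞} ∫₀^R T(Nt)(M₊(f)(t)) dt exists in H and equals (1/(N+1)) ∫₀^∞ T(Ns) f(s) ds. In semigroup notation this is ∫₀^∞ e^{-NtA} M₊(f)(t) dt = (1/(N+1)) ∫₀^∞ e^{-NsA} f(s) ds. -/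
open MeasureTheory Filter Topology Set

set_option maxHeartbeats 1000000 in
/-- Endpoint balayage formula (2.8): for `N ∈ ℕ₊` and `f` continuously differentiable
with compact support in `(0,∞)`, with `g = M₊(f)` the (principal-value) forward maximal
regularity operator applied to `f`, the function `s ↦ T(Ns) f(s)` is Bochner integrable
on `(0,∞)` and the improper integral `lim_{R→∞} ∫₀^R T(Nt)(M₊(f)(t)) dt` exists in `H`
and equals `(1/(N+1)) • ∫₀^∞ T(Ns) f(s) ds`. -/
theorem endpoint_balayage_formula_forward
    {H : Type*} [NormedAddCommGroup H] [InnerProductSpace ℂ H] [CompleteSpace H]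
    (T : ℝ → H →L[ℂ] H) (Tk : ℕ → ℝ → H →L[ℂ] H)
    (hT0 : T 0 = ContinuousLinearMap.id ℂ H)
    (hTadd : ∀ s t : ℝ, 0 ≤ s → 0 ≤ t → T (s + t) = (T s).comp (T t))
    (hTcont : ∀ x : H, ContinuousOn (fun t : ℝ => T t x) (Ici (0 : ℝ)))
    (hTk0 : ∀ t : ℝ, 0 < t → Tk 0 t = T t)
    (hTkderiv : ∀ (k : ℕ) (t : ℝ), 0 < t → HasDerivAt (Tk k) (Tk (k + 1) t) t)
    (hMk : ∀ k : ℕ, 1 ≤ k → ∃ M : ℝ, ∀ t : ℝ, 0 < t → t ^ k * ‖Tk k t‖ ≤ M)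
    (hM0 : ∃ M : ℝ, ∀ t : ℝ, 0 ≤ t → ‖T t‖ ≤ M)
    -- decay of the semigroup at infinity
    (hTinf : ∀ x : H, Tendsto (fun u : ℝ => T u x) atTop (𝓝 0))
    (N : ℕ) (hN : 1 ≤ N)
    (f : ℝ → H) (hf : ContDiff ℝ 1 f) (hfc : HasCompactSupport f)
    (hfs : tsupport f ⊆ Ioi (0 : ℝ))
    -- `g = M₊(f)`, realized as the principal value limit
    (g : ℝ → H)
    (hg : ∀ t : ℝ, 0 < t →
      Tendsto (fun ε : ℝ => -∫ s in Ioo (0 : ℝ) (t - ε), (Tk 1 (t - s)) (f s))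
        (𝓝[>] (0 : ℝ)) (𝓝 (g t))) :
    IntegrableOn (fun s : ℝ => (T ((N : ℝ) * s)) (f s)) (Ioi 0) ∧
    Tendsto (fun R : ℝ => ∫ t in Ioo (0 : ℝ) R, (T ((N : ℝ) * t)) (g t)) atTop
      (𝓝 ((1 / (N + 1 : ℝ)) • ∫ s in Ioi (0 : ℝ), (T ((N : ℝ) * s)) (f s))) := by
    classical
  obtain ⟨M0, hM0'⟩ := hM0
  have hM0nn : 0 ≤ M0 := le_trans (norm_nonneg _) (hM0' 0 le_rfl)
  obtain ⟨M1, hM1⟩ := hMk 1 le_rfl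
  have hM1' : ∀ t : ℝ, 0 < t → ‖Tk 1 t‖ ≤ M1 / t := by
    intro t ht
    rw [le_div_iff₀ ht]
    have := hM1 t ht
    rw [pow_one] at this
    linarith
  have hM1nn : 0 ≤ M1 := le_trans (by positivity) (hM1 1 one_pos)
  have hNpos : (0:ℝ) < (N:ℝ) := by exact_mod_cast Nat.lt_of_lt_of_le Nat.zero_lt_one hN
  set c : ℝ := (N:ℝ) + 1 with hcdef
  have hcpos : 0 < c := by positivity
  have hcne : c ≠ 0 := ne_of_gt hcpos
  -- support bounds
  obtain ⟨a, b, ha, hab, hsupp⟩ : ∃ a b : ℝ, 0 < a ∧ a ≤ b ∧ tsupport f ⊆ Icc a b := by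
    set K' : Set ℝ := tsupport f ∪ Icc 1 2 with hK'
    have hK'c : IsCompact K' := hfc.union isCompact_Icc
    have hK'pos : K' ⊆ Ioi 0 := by
      rintro x (hx | hx)
      · exact hfs hx
      · exact lt_of_lt_of_le one_pos hx.1
    have hne : K'.Nonempty := ⟨1, Or.inr ⟨le_rfl, one_le_two⟩⟩
    refine ⟨sInf K', sSup K', hK'pos (hK'c.sInf_mem hne),
      csInf_le_csSup hne hK'c.bddBelow hK'c.bddAbove, fun x hx =>
      ⟨csInf_le hK'c.bddBelow (Or.inl hx), le_csSup hK'c.bddAbove (Or.inl hx)⟩⟩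
  have hf0 : ∀ s : ℝ, s ∉ Icc a b → f s = 0 := fun s hs =>
    image_eq_zero_of_notMem_tsupport (fun h => hs (hsupp h))
  have hfcont : Continuous f := hf.continuous
  obtain ⟨C, hC⟩ : ∃ C : ℝ, ∀ x : ℝ, ‖f x‖ ≤ C :=
    hfcont.bounded_above_of_compact_support hfc
  have hCnn : 0 ≤ C := le_trans (norm_nonneg _) (hC 0)
  -- differentiability and norm-continuity of T, Tk 1 on (0, ∞)
  have hTd : ∀ t : ℝ, 0 < t → HasDerivAt T (Tk 1 t) t := by
    intro t ht
    refine (hTkderiv 0 t ht).congr_of_eventuallyEq ?_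
    filter_upwards [eventually_gt_nhds ht] with v hv
    exact (hTk0 v hv).symm
  have hT1cont : ContinuousOn (Tk 1) (Ioi 0) := fun t ht =>
    ((hTkderiv 1 t ht).continuousAt).continuousWithinAt
  -- pointwise evaluation of operator-valued derivatives
  have hev : ∀ (x : H) (A : ℝ → H →L[ℂ] H) (A' : H →L[ℂ] H) (t : ℝ), HasDerivAt A A' t →
      HasDerivAt (fun u => A u x) (A' x) t := fun x A A' t h =>
    (((ContinuousLinearMap.apply ℂ H x).restrictScalars ℝ).hasFDerivAt).comp_hasDerivAt t h
  -- joint continuity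
  have jc : ∀ (s : Set ℝ) (u : ℝ → ℝ) (cf : ℝ → H), ContinuousOn u s → ContinuousOn cf s →
      (∀ x ∈ s, 0 ≤ u x) → ContinuousOn (fun x => T (u x) (cf x)) s := by
    intro s u cf hu hcf hpos x₀ hx₀
    have h1 : ContinuousWithinAt (fun x => T (u x) (cf x₀)) s x₀ :=
      ((hTcont (cf x₀)) (u x₀) (hpos x₀ hx₀)).comp (hu x₀ hx₀) (fun x hx => hpos x hx)
    have h2 : Tendsto (fun x => T (u x) (cf x - cf x₀)) (𝓝[s] x₀) (𝓝 0) := by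
      have hb : ∀ᶠ x in 𝓝[s] x₀, ‖T (u x) (cf x - cf x₀)‖ ≤ M0 * ‖cf x - cf x₀‖ := by
        filter_upwards [self_mem_nhdsWithin] with x hx
        calc ‖T (u x) (cf x - cf x₀)‖ ≤ ‖T (u x)‖ * ‖cf x - cf x₀‖ := (T (u x)).le_opNorm _
          _ ≤ M0 * ‖cf x - cf x₀‖ := by
              have := hM0' (u x) (hpos x hx)
              exact mul_le_mul_of_nonneg_right this (norm_nonneg _)
      have ht : Tendsto (fun x => M0 * ‖cf x - cf x₀‖) (𝓝[s] x₀) (𝓝 (M0 * ‖cf x₀ - cf x₀‖)) :=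
        (((hcf x₀ hx₀).sub tendsto_const_nhds).norm).const_mul M0
      simp only [sub_self, norm_zero, mul_zero] at ht
      exact squeeze_zero_norm' hb ht
    have key : Tendsto (fun x => T (u x) (cf x - cf x₀) + T (u x) (cf x₀)) (𝓝[s] x₀)
        (𝓝 (0 + T (u x₀) (cf x₀))) := h2.add h1
    rw [zero_add] at key
    refine key.congr (fun x => ?_)
    rw [← map_add, sub_add_cancel]
  -- semigroup commutation with Tk 1
  have hcomp : ∀ w u : ℝ, 0 ≤ w → 0 < u → ∀ x : H, T w (Tk 1 u x) = Tk 1 (w + u) x := by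
    intro w u hw hu x
    have h2 : HasDerivAt (fun v => Tk 0 (w + v)) (Tk 1 (w + u)) u :=
      (hTkderiv 0 (w + u) (by linarith)).comp_const_add w u
    have heq : (fun v => (T w).comp (Tk 0 v)) =ᶠ[𝓝 u] (fun v => Tk 0 (w + v)) := by
      filter_upwards [eventually_gt_nhds hu] with v hv
      rw [hTk0 v hv, hTk0 (w + v) (by linarith), hTadd w v hw hv.le]
    have h1 : HasDerivAt (fun v => (T w).comp (Tk 0 v)) ((T w).comp (Tk 1 u)) u :=
      (((ContinuousLinearMap.compL ℂ H H H (T w)).restrictScalars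
        ℝ).hasFDerivAt).comp_hasDerivAt u (hTkderiv 0 u hu)
    have := h1.unique (h2.congr_of_eventuallyEq heq)
    rw [← this]; rfl
  -- Part 1 : integrability
  have hcont1 : Continuous (fun s : ℝ => T ((N:ℝ)*s) (f s)) := by
    rw [continuous_iff_continuousAt]
    intro x
    rcases lt_or_ge x a with hx | hx
    · have hev0 : (fun s : ℝ => T ((N:ℝ)*s) (f s)) =ᶠ[𝓝 x] fun _ => (0:H) := by
        filter_upwards [eventually_lt_nhds hx] with y hy
        rw [hf0 y (fun h => absurd h.1 (not_le.mpr hy)), map_zero]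
      exact (continuousAt_congr hev0).mpr continuousAt_const
    · have hx0 : 0 < x := lt_of_lt_of_le ha hx
      have hco := jc (Ioi 0) (fun s => (N:ℝ)*s) f (by fun_prop) hfcont.continuousOn
        (fun y hy => mul_nonneg hNpos.le (le_of_lt hy))
      exact (hco x hx0).continuousAt (Ioi_mem_nhds hx0)
  have hint1 : Integrable (fun s : ℝ => T ((N:ℝ)*s) (f s)) := by
    refine hcont1.integrable_of_hasCompactSupport (HasCompactSupport.intro (isCompact_Icc (a := a) (b := b)) ?_)
    intro x hx
    rw [hf0 x hx, map_zero]
  refine ⟨hint1.integrableOn, ?_⟩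
  -- Key identity
  have KI : ∀ t : ℝ, 0 < t → T ((N:ℝ)*t) (g t)
      = -∫ s in Ioo (0:ℝ) t, Tk 1 (c*t - s) (f s) := by
    intro t ht
    have hNt : 0 ≤ (N:ℝ)*t := by positivity
    have hcont2 : ContinuousOn (fun s => Tk 1 (c*t - s) (f s)) (Icc 0 t) := by
      refine ContinuousOn.clm_apply (hT1cont.comp (by fun_prop) ?_) hfcont.continuousOn
      intro s hs
      simp only [mem_Ioi]
      have := hs.1; have := hs.2
      rw [hcdef]; nlinarith
    have hint2 : IntegrableOn (fun s => Tk 1 (c*t - s) (f s)) (Ioo 0 t) :=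
      (hcont2.integrableOn_compact isCompact_Icc).mono_set Ioo_subset_Icc_self
    obtain ⟨B, hB⟩ := isCompact_Icc.exists_bound_of_continuousOn hcont2
    have hBnn : 0 ≤ B := le_trans (norm_nonneg _) (hB 0 ⟨le_rfl, ht.le⟩)
    have lim1 : Tendsto (fun ε : ℝ => ∫ s in Ioo (0:ℝ) (t - ε), Tk 1 (c*t - s) (f s))
        (𝓝[>] 0) (𝓝 (∫ s in Ioo (0:ℝ) t, Tk 1 (c*t - s) (f s))) := by
      have hdiff : ∀ ε ∈ Ioo (0:ℝ) t,
          ‖(∫ s in Ioo (0:ℝ) (t - ε), Tk 1 (c*t - s) (f s))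
            - ∫ s in Ioo (0:ℝ) t, Tk 1 (c*t - s) (f s)‖ ≤ B * ε := by
        intro ε hε
        have hsplit : Ioo (0:ℝ) t = Ioo 0 (t-ε) ∪ Ico (t-ε) t := by
          ext x
          constructor
          · rintro ⟨h1, h2⟩
            rcases lt_or_ge x (t-ε) with h|h
            · exact Or.inl ⟨h1, h⟩
            · exact Or.inr ⟨h, h2⟩
          · rintro (⟨h1,h2⟩|⟨h1,h2⟩)
            · exact ⟨h1, by linarith [hε.1]⟩
            · exact ⟨by linarith [hε.2], h2⟩
        have hdisj : Disjoint (Ioo (0:ℝ) (t-ε)) (Ico (t-ε) t) :=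
          Set.disjoint_left.mpr (fun x hx hx' => absurd hx.2 (not_lt.mpr hx'.1))
        have hi1 : IntegrableOn (fun s => Tk 1 (c*t - s) (f s)) (Ioo 0 (t-ε)) :=
          hint2.mono_set (by rw [hsplit]; exact subset_union_left)
        have hi2 : IntegrableOn (fun s => Tk 1 (c*t - s) (f s)) (Ico (t-ε) t) :=
          hint2.mono_set (by rw [hsplit]; exact subset_union_right)
        rw [show (Ioo (0:ℝ) t) = Ioo 0 (t-ε) ∪ Ico (t-ε) t from hsplit,
          setIntegral_union hdisj measurableSet_Ico hi1 hi2]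
        have : (∫ s in Ioo (0:ℝ) (t - ε), Tk 1 (c*t - s) (f s)) -
            ((∫ s in Ioo (0:ℝ) (t-ε), Tk 1 (c*t - s) (f s)) +
              ∫ s in Ico (t-ε) t, Tk 1 (c*t - s) (f s))
            = -∫ s in Ico (t-ε) t, Tk 1 (c*t - s) (f s) := by abel
        rw [this, norm_neg]
        have hle : ‖∫ s in Ico (t-ε) t, Tk 1 (c*t - s) (f s)‖
            ≤ B * ((volume (Ico (t-ε) t)).toReal) := by
          refine norm_setIntegral_le_of_norm_le_const ?_ ?_
          · exact measure_Ico_lt_top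
          · intro x hx
            exact hB x ⟨by linarith [hx.1, hε.2], le_of_lt hx.2⟩
        calc ‖∫ s in Ico (t-ε) t, Tk 1 (c*t - s) (f s)‖
            ≤ B * ((volume (Ico (t-ε) t)).toReal) := hle
          _ = B * ε := by
              rw [Real.volume_Ico, ENNReal.toReal_ofReal (by linarith [hε.1] : (0:ℝ) ≤ t - (t-ε))]
              ring_nf
      have h0 : Tendsto (fun ε : ℝ => (∫ s in Ioo (0:ℝ) (t - ε), Tk 1 (c*t - s) (f s))
          - ∫ s in Ioo (0:ℝ) t, Tk 1 (c*t - s) (f s)) (𝓝[>] 0) (𝓝 0) := by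
        refine squeeze_zero_norm' (a := fun ε : ℝ => B * ε) ?_ ?_
        · filter_upwards [Ioo_mem_nhdsGT_of_mem (show (0:ℝ) ∈ Ico (0:ℝ) t from ⟨le_rfl, ht⟩)]
            with ε hε
          exact hdiff ε hε
        · have hBe : Tendsto (fun ε : ℝ => B * ε) (𝓝[>] (0:ℝ)) (𝓝 (B * 0)) :=
            ((continuous_const.mul continuous_id).tendsto 0).mono_left nhdsWithin_le_nhds
          simpa using hBe
      have := h0.add (tendsto_const_nhds
        (x := ∫ s in Ioo (0:ℝ) t, Tk 1 (c*t - s) (f s)) (f := 𝓝[>] (0:ℝ)))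
      simpa using this
    have lim2 : Tendsto (fun ε : ℝ => -∫ s in Ioo (0:ℝ) (t - ε), Tk 1 (c*t - s) (f s))
        (𝓝[>] 0) (𝓝 (T ((N:ℝ)*t) (g t))) := by
      have h0 := ((T ((N:ℝ)*t)).continuous.tendsto (g t)).comp (hg t ht)
      refine h0.congr' ?_
      filter_upwards [Ioo_mem_nhdsGT_of_mem (show (0:ℝ) ∈ Ico (0:ℝ) t from ⟨le_rfl, ht⟩)]
        with ε hε
      have hintε : IntegrableOn (fun s => Tk 1 (t - s) (f s)) (Ioo 0 (t - ε)) := by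
        have hcc : ContinuousOn (fun s => Tk 1 (t - s) (f s)) (Icc 0 (t-ε)) := by
          refine ContinuousOn.clm_apply (hT1cont.comp (by fun_prop) ?_) hfcont.continuousOn
          intro s hs
          simp only [mem_Ioi]
          have := hs.2; have := hε.1
          linarith
        exact (hcc.integrableOn_compact isCompact_Icc).mono_set Ioo_subset_Icc_self
      show T ((N:ℝ)*t) (-∫ s in Ioo (0:ℝ) (t-ε), Tk 1 (t - s) (f s)) = _
      rw [map_neg, ← ContinuousLinearMap.integral_comp_comm _ hintε]
      congr 1
      refine setIntegral_congr_fun measurableSet_Ioo (fun s hs => ?_)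
      have h1 : T ((N:ℝ)*t) (Tk 1 (t - s) (f s)) = Tk 1 ((N:ℝ)*t + (t - s)) (f s) :=
        hcomp ((N:ℝ)*t) (t - s) hNt (by linarith [hs.2, hε.1]) (f s)
      rw [h1]
      have : (N:ℝ)*t + (t - s) = c*t - s := by rw [hcdef]; ring
      rw [this]
    exact tendsto_nhds_unique lim2 lim1.neg
  -- Fubini computation
  have FUB : ∀ R : ℝ, b < R → (∫ t in Ioo (0:ℝ) R, T ((N:ℝ)*t) (g t))
      = c⁻¹ • (∫ s in Ioi (0:ℝ), T ((N:ℝ)*s) (f s))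
        - c⁻¹ • (∫ s in Icc a b, T (c*R - s) (f s)) := by
    intro R hR
    have hRpos : 0 < R := lt_trans (lt_of_lt_of_le ha hab) hR
    set V : Set (ℝ × ℝ) := {p : ℝ × ℝ | 0 < p.2 ∧ p.2 < p.1} with hV
    have hVopen : IsOpen V := by
      have h1 : IsOpen {p : ℝ×ℝ | 0 < p.2} := isOpen_lt continuous_const continuous_snd
      have h2 : IsOpen {p : ℝ×ℝ | p.2 < p.1} := isOpen_lt continuous_snd continuous_fst
      exact h1.inter h2
    have hVmeas : MeasurableSet V := hVopen.measurableSet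
    set k : ℝ × ℝ → H := fun p => Tk 1 (c*p.1 - p.2) (f p.2) with hk
    set K : ℝ × ℝ → H := V.indicator k with hKdef
    have hkcont : ContinuousOn k V := by
      refine ContinuousOn.clm_apply (hT1cont.comp (by fun_prop) ?_)
        (hfcont.comp continuous_snd).continuousOn
      intro p hp
      have hs : 0 < p.2 := hp.1
      have hst : p.2 < p.1 := hp.2
      simp only [mem_Ioi]
      rw [hcdef]; nlinarith
    have hKaesm : AEStronglyMeasurable K (volume : Measure (ℝ×ℝ)) :=
      (aestronglyMeasurable_indicator_iff hVmeas).mpr (hkcont.aestronglyMeasurable hVmeas)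
    have hBnn : 0 ≤ M1 / ((N:ℝ)*a) * C := by positivity
    have hKbd : ∀ p : ℝ × ℝ, ‖K p‖ ≤ M1 / ((N:ℝ)*a) * C := by
      intro p
      by_cases hp : p ∈ V
      · rw [hKdef, indicator_of_mem hp]
        by_cases hfp : p.2 ∈ Icc a b
        · have hp1 : 0 < p.2 := hp.1
          have hp2 : p.2 < p.1 := hp.2
          have hu : (N:ℝ)*a ≤ c*p.1 - p.2 := by
            have := hfp.1
            rw [hcdef]; nlinarith
          have hupos : 0 < c*p.1 - p.2 := lt_of_lt_of_le (by positivity) hu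
          calc ‖Tk 1 (c*p.1 - p.2) (f p.2)‖
              ≤ ‖Tk 1 (c*p.1 - p.2)‖ * ‖f p.2‖ := (Tk 1 _).le_opNorm _
            _ ≤ (M1 / (c*p.1 - p.2)) * C :=
                mul_le_mul (hM1' _ hupos) (hC _) (norm_nonneg _)
                  (le_trans (norm_nonneg _) (hM1' _ hupos))
            _ ≤ M1 / ((N:ℝ)*a) * C := by
                have : M1 / (c*p.1 - p.2) ≤ M1 / ((N:ℝ)*a) :=
                  div_le_div_of_nonneg_left hM1nn (by positivity) hu
                exact mul_le_mul_of_nonneg_right this hCnn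
        · rw [hk]
          simp only []
          rw [hf0 _ hfp, map_zero, norm_zero]
          exact hBnn
      · rw [hKdef, indicator_of_notMem hp, norm_zero]
        exact hBnn
    haveI hfm1 : IsFiniteMeasure ((volume : Measure ℝ).restrict (Ioo 0 R)) :=
      ⟨by rw [Measure.restrict_apply_univ]; exact measure_Ioo_lt_top⟩
    have hKint : Integrable K (((volume : Measure ℝ).restrict (Ioo 0 R)).prod
        ((volume : Measure ℝ).restrict (Ioo 0 R))) := by
      constructor
      · rw [Measure.prod_restrict]
        exact hKaesm.restrict
      · exact HasFiniteIntegral.of_bounded (C := M1 / ((N:ℝ)*a) * C)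
          (Eventually.of_forall hKbd)
    have step1 : (∫ t in Ioo (0:ℝ) R, T ((N:ℝ)*t) (g t))
        = ∫ t in Ioo (0:ℝ) R, (- ∫ s in Ioo (0:ℝ) R, K (t, s)) := by
      refine setIntegral_congr_fun measurableSet_Ioo (fun t htm => ?_)
      rw [KI t htm.1]
      congr 1
      have hfun : (fun s => K (t, s)) = (Ioo (0:ℝ) t).indicator (fun s => k (t, s)) := by
        funext s
        by_cases hs : s ∈ Ioo (0:ℝ) t
        · rw [indicator_of_mem hs, hKdef,
            indicator_of_mem (show (t,s) ∈ V from ⟨hs.1, hs.2⟩)]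
        · rw [indicator_of_notMem hs, hKdef,
            indicator_of_notMem (fun hmem => hs ⟨hmem.1, hmem.2⟩)]
      rw [hfun, setIntegral_indicator measurableSet_Ioo,
        inter_eq_self_of_subset_right (Ioo_subset_Ioo_right htm.2.le)]
    have step3 : ∀ s ∈ Ioo (0:ℝ) R, (∫ t in Ioo (0:ℝ) R, K (t, s))
        = c⁻¹ • T (c*R - s) (f s) - c⁻¹ • T ((N:ℝ)*s) (f s) := by
      intro s hs
      have hs0 : 0 < s := hs.1
      have hsR : s < R := hs.2
      have hfun : (fun t => K (t, s)) = (Ioi s).indicator (fun t => k (t, s)) := by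
        funext t
        by_cases htv : t ∈ Ioi s
        · rw [indicator_of_mem htv, hKdef,
            indicator_of_mem (show (t,s) ∈ V from ⟨hs0, htv⟩)]
        · rw [indicator_of_notMem htv, hKdef,
            indicator_of_notMem (fun hmem => htv hmem.2)]
      have hinter : Ioo (0:ℝ) R ∩ Ioi s = Ioo s R := by
        ext x
        simp only [mem_inter_iff, mem_Ioo, mem_Ioi]
        constructor
        · rintro ⟨⟨_, h2⟩, h3⟩; exact ⟨h3, h2⟩
        · rintro ⟨h1, h2⟩; exact ⟨⟨lt_trans hs0 h1, h2⟩, h1⟩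
      rw [hfun, setIntegral_indicator measurableSet_Ioi, hinter,
        ← integral_Ioc_eq_integral_Ioo, ← intervalIntegral.integral_of_le hsR.le]
      have hderiv : ∀ t ∈ uIcc s R, HasDerivAt (fun t => c⁻¹ • T (c*t - s) (f s))
          (k (t, s)) t := by
        intro t htm
        rw [uIcc_of_le hsR.le] at htm
        have hu : 0 < c*t - s := by rw [hcdef]; nlinarith [htm.1, hs0]
        have hin : HasDerivAt (fun t : ℝ => c*t - s) c t := by
          simpa using ((hasDerivAt_id t).const_mul c).sub_const s
        have hcomp2 : HasDerivAt (fun t : ℝ => T (c*t - s)) (c • Tk 1 (c*t - s)) t :=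
          (hTd _ hu).scomp t hin
        have happ := hev (f s) _ _ t hcomp2
        have h2 := happ.const_smul c⁻¹
        have hval : c⁻¹ • ((c • Tk 1 (c*t - s)) (f s)) = k (t, s) := by
          rw [hk]
          simp only [ContinuousLinearMap.smul_apply]
          rw [smul_smul, inv_mul_cancel₀ hcne, one_smul]
        rw [hval] at h2
        exact h2
      have hii : IntervalIntegrable (fun t => k (t, s)) volume s R := by
        apply ContinuousOn.intervalIntegrable
        rw [uIcc_of_le hsR.le]
        show ContinuousOn (fun t : ℝ => Tk 1 (c*t - s) (f s)) (Icc s R)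
        refine ContinuousOn.clm_apply (hT1cont.comp (by fun_prop) ?_) continuousOn_const
        intro t htm
        simp only [mem_Ioi]
        rw [hcdef]; nlinarith [htm.1, hs0]
      rw [intervalIntegral.integral_eq_sub_of_hasDerivAt hderiv hii]
      have hcs : c * s - s = (N:ℝ)*s := by rw [hcdef]; ring
      rw [hcs]
    -- integrability of the two pieces
    have hpiece2 : IntegrableOn (fun s : ℝ => T (c*R - s) (f s)) (Ioo 0 R) := by
      have hcc : ContinuousOn (fun s : ℝ => T (c*R - s) (f s)) (Icc 0 R) := by
        refine jc _ _ _ (by fun_prop) hfcont.continuousOn ?_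
        intro s hscc
        have := hscc.2
        rw [hcdef]; nlinarith
      exact (hcc.integrableOn_compact isCompact_Icc).mono_set Ioo_subset_Icc_self
    have hIccIoo : Icc a b ⊆ Ioo (0:ℝ) R := fun x hx =>
      ⟨lt_of_lt_of_le ha hx.1, lt_of_le_of_lt hx.2 hR⟩
    have hz1 : ∀ x : ℝ, x ∉ Ioo (0:ℝ) R → T ((N:ℝ)*x) (f x) = 0 := by
      intro x hx
      rw [hf0 x (fun hmem => hx (hIccIoo hmem)), map_zero]
    have hz2 : ∀ x : ℝ, x ∉ Ioi (0:ℝ) → T ((N:ℝ)*x) (f x) = 0 := by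
      intro x hx
      rw [hf0 x (fun hmem => hx (lt_of_lt_of_le ha hmem.1)), map_zero]
    have hz3 : ∀ x : ℝ, x ∉ Ioo (0:ℝ) R → T (c*R - x) (f x) = 0 := by
      intro x hx
      rw [hf0 x (fun hmem => hx (hIccIoo hmem)), map_zero]
    have hz4 : ∀ x : ℝ, x ∉ Icc a b → T (c*R - x) (f x) = 0 := by
      intro x hx
      rw [hf0 x hx, map_zero]
    have hset1 : (∫ s in Ioo (0:ℝ) R, T ((N:ℝ)*s) (f s))
        = ∫ s in Ioi (0:ℝ), T ((N:ℝ)*s) (f s) := by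
      rw [setIntegral_eq_integral_of_forall_compl_eq_zero hz1,
        setIntegral_eq_integral_of_forall_compl_eq_zero hz2]
    have hset2 : (∫ s in Ioo (0:ℝ) R, T (c*R - s) (f s))
        = ∫ s in Icc a b, T (c*R - s) (f s) := by
      rw [setIntegral_eq_integral_of_forall_compl_eq_zero hz3,
        setIntegral_eq_integral_of_forall_compl_eq_zero hz4]
    calc (∫ t in Ioo (0:ℝ) R, T ((N:ℝ)*t) (g t))
        = ∫ t in Ioo (0:ℝ) R, (- ∫ s in Ioo (0:ℝ) R, K (t, s)) := step1
      _ = - ∫ t in Ioo (0:ℝ) R, ∫ s in Ioo (0:ℝ) R, K (t, s) := by rw [integral_neg]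
      _ = - ∫ s in Ioo (0:ℝ) R, ∫ t in Ioo (0:ℝ) R, K (t, s) :=
          congrArg Neg.neg
            (MeasureTheory.integral_integral_swap (f := fun t s => K (t, s)) hKint)
      _ = - ∫ s in Ioo (0:ℝ) R, (c⁻¹ • T (c*R - s) (f s) - c⁻¹ • T ((N:ℝ)*s) (f s)) := by
          rw [setIntegral_congr_fun measurableSet_Ioo step3]
      _ = c⁻¹ • (∫ s in Ioi (0:ℝ), T ((N:ℝ)*s) (f s))
          - c⁻¹ • (∫ s in Icc a b, T (c*R - s) (f s)) := by
          have hA : Integrable (fun s : ℝ => c⁻¹ • T (c*R - s) (f s))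
              ((volume : Measure ℝ).restrict (Ioo 0 R)) := hpiece2.smul c⁻¹
          have hB2 : Integrable (fun s : ℝ => c⁻¹ • T ((N:ℝ)*s) (f s))
              ((volume : Measure ℝ).restrict (Ioo 0 R)) := (hint1.integrableOn).smul c⁻¹
          rw [integral_sub hA hB2, integral_smul, integral_smul, hset1, hset2]
          abel
  -- limit of the error term
  have he : Tendsto (fun R : ℝ => ∫ s in Icc a b, T (c*R - s) (f s)) atTop (𝓝 0) := by
    have key := tendsto_integral_filter_of_dominated_convergence
      (μ := (volume : Measure ℝ).restrict (Icc a b)) (l := atTop)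
      (F := fun (R : ℝ) (s : ℝ) => T (c*R - s) (f s)) (f := fun _ : ℝ => (0:H))
      (bound := fun s => M0 * ‖f s‖) ?_ ?_ ?_ ?_
    · simpa using key
    · filter_upwards [eventually_ge_atTop b] with R hRb
      have hcc : ContinuousOn (fun s : ℝ => T (c*R - s) (f s)) (Icc a b) := by
        refine jc _ _ _ (by fun_prop) hfcont.continuousOn ?_
        intro s hscc
        have h1 := hscc.1; have h2 := hscc.2
        rw [hcdef]; nlinarith
      exact hcc.aestronglyMeasurable measurableSet_Icc
    · filter_upwards [eventually_ge_atTop b] with R hRb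
      refine (ae_restrict_iff' measurableSet_Icc).mpr (Eventually.of_forall ?_)
      intro s hscc
      have hnn : 0 ≤ c*R - s := by
        have h1 := hscc.1; have h2 := hscc.2
        rw [hcdef]; nlinarith
      calc ‖T (c*R - s) (f s)‖ ≤ ‖T (c*R - s)‖ * ‖f s‖ := (T _).le_opNorm _
        _ ≤ M0 * ‖f s‖ := mul_le_mul_of_nonneg_right (hM0' _ hnn) (norm_nonneg _)
    · exact (((continuous_const.mul hfcont.norm)).continuousOn.integrableOn_compact isCompact_Icc)
    · refine Eventually.of_forall (fun s => ?_)
      have h1 : Tendsto (fun R : ℝ => c*R) atTop atTop :=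
        Tendsto.const_mul_atTop hcpos tendsto_id
      have h2 := tendsto_atTop_add_const_right atTop (-s) h1
      have h3 : Tendsto (fun R : ℝ => c*R - s) atTop atTop := by
        simpa [sub_eq_add_neg] using h2
      exact (hTinf (f s)).comp h3
  have hfin : Tendsto (fun R : ℝ =>
      c⁻¹ • (∫ s in Ioi (0:ℝ), T ((N:ℝ)*s) (f s))
        - c⁻¹ • (∫ s in Icc a b, T (c*R - s) (f s))) atTop
      (𝓝 ((1 / (N + 1 : ℝ)) • ∫ s in Ioi (0 : ℝ), (T ((N : ℝ) * s)) (f s))) := by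
    have := (tendsto_const_nhds (x := c⁻¹ • (∫ s in Ioi (0:ℝ), T ((N:ℝ)*s) (f s)))
      (f := atTop (α := ℝ))).sub (he.const_smul c⁻¹)
    simpa [one_div, hcdef] using this
  refine hfin.congr' ?_
  filter_upwards [eventually_gt_atTop b] with R hR
  exact (FUB R hR).symm
end

section
/- Endpoint balayage formula (2.9): Let N ∈ ℕ₊ and let f : (0,∞) → H be continuously differentiable with compact support in (0,∞), and assume the trace condition ∫₀^∞ T′(s) f(s) ds = 0 (i.e. ∫₀^∞ A e^{-sA} f(s) ds = 0). Then the function t ↦ t^{N-1} · T⁽ᴺ⁾(t)(M₋(f)(t)) is Bochner integrable on (0,∞) and ∫₀^∞ t^{N-1} T⁽ᴺ⁾(t)(M₋(f)(t)) dt = -(1/N) ∫₀^∞ s^N T⁽ᴺ⁺¹⁾(s) f(s) ds in H. In semigroup notation this is ∫₀^∞ t^{N-1} A^N e^{-tA} M₋(f)(t) dt = (1/N) ∫₀^∞ s^N A^{N+1} e^{-sA} f(s) ds. -/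
open MeasureTheory Filter Topology Set

lemma aux_intOn {H : Type*} [NormedAddCommGroup H] [NormedSpace ℝ H]
    (v : ℝ → H) (c B C : ℝ) (hcB : c ≤ B)
    (hmeas : AEStronglyMeasurable v (volume.restrict (Ioc c B)))
    (hC : ∀ s ∈ Ioc c B, ‖v s‖ ≤ C)
    (hz : ∀ s, B < s → v s = 0) :
    IntegrableOn v (Ioi c) ∧ ∫ s in Ioi c, v s = ∫ s in c..B, v s := by
  have hfin : IsFiniteMeasure (volume.restrict (Ioc c B)) := by
    constructor
    rw [Measure.restrict_apply_univ]
    exact measure_Ioc_lt_top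
  have h1 : IntegrableOn v (Ioc c B) := by
    refine ⟨hmeas, HasFiniteIntegral.of_bounded (C := C) ?_⟩
    exact (ae_restrict_iff' measurableSet_Ioc).mpr (ae_of_all _ hC)
  have h2 : IntegrableOn v (Ioi B) := by
    apply (integrableOn_congr_fun (g := fun _ => (0:H)) ?_ measurableSet_Ioi).mpr
      integrableOn_zero
    intro s hs; exact hz s hs
  have hu : Ioc c B ∪ Ioi B = Ioi c := Ioc_union_Ioi_eq_Ioi hcB
  constructor
  · rw [← hu]; exact h1.union h2
  · rw [← hu, setIntegral_union (Ioc_disjoint_Ioi le_rfl) measurableSet_Ioi h1 h2,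
      intervalIntegral.integral_of_le hcB]
    have : ∫ s in Ioi B, v s = 0 :=
      setIntegral_eq_zero_of_forall_eq_zero fun s hs => hz s hs
    rw [this, add_zero]


lemma aux_clm_deriv {H : Type*} [NormedAddCommGroup H] [InnerProductSpace ℂ H]
    (A : ℝ → H →L[ℂ] H) (A' : H →L[ℂ] H) (u : ℝ → H) (u' : H) (x : ℝ)
    (hA : HasDerivAt A A' x) (hu : HasDerivAt u u' x) :
    HasDerivAt (fun s => A s (u s)) (A' (u x) + A x u') x := by
  set L := ContinuousLinearMap.restrictScalarsL ℂ H H ℝ ℝ with hL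
  have hA2 : HasDerivAt (fun s => L (A s)) (L A') x := by
    have := (L.hasFDerivAt (x := A x)).comp_hasDerivAt x hA
    simpa [Function.comp_def] using this
  have h := hA2.clm_apply hu
  exact h

lemma aux_g {H : Type*} [NormedAddCommGroup H] [InnerProductSpace ℂ H] [CompleteSpace H]
    (T : ℝ → H →L[ℂ] H) (Tk : ℕ → ℝ → H →L[ℂ] H)
    (hT0 : T 0 = ContinuousLinearMap.id ℂ H)
    (hTcont : ∀ x : H, ContinuousOn (fun t : ℝ => T t x) (Ici (0 : ℝ)))
    (hTk0 : ∀ t : ℝ, 0 < t → Tk 0 t = T t)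
    (hTkderiv : ∀ (k : ℕ) (t : ℝ), 0 < t → HasDerivAt (Tk k) (Tk (k + 1) t) t)
    (M0 : ℝ) (hM0' : ∀ t : ℝ, 0 ≤ t → ‖T t‖ ≤ M0)
    (f : ℝ → H) (hf : ContDiff ℝ 1 f)
    (b : ℝ) (hzb : ∀ s : ℝ, b < s → f s = 0 ∧ deriv f s = 0)
    (Cf' : ℝ) (hCf' : ∀ s, ‖deriv f s‖ ≤ Cf')
    (t : ℝ) (ht : 0 < t) :
    Tendsto (fun ε : ℝ => -∫ s in Ioi (t + ε), (Tk 1 (s - t)) (f s))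
      (𝓝[>] (0 : ℝ)) (𝓝 (f t + ∫ s in Ioi t, T (s - t) (deriv f s))) := by
  have hM0nn : 0 ≤ M0 := le_trans (norm_nonneg _) (hM0' 0 le_rfl)
  have hCf'nn : 0 ≤ Cf' := le_trans (norm_nonneg _) (hCf' 0)
  have hfc : Continuous f := hf.continuous
  have hf'c : Continuous (deriv f) := hf.continuous_deriv le_rfl
  set V : ℝ → H := fun s => T (s - t) (deriv f s) with hV
  have hTop : ContinuousOn T (Ioi (0:ℝ)) :=
    ContinuousOn.congr (fun u hu => (hTkderiv 0 u hu).continuousAt.continuousWithinAt)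
      (fun u hu => (hTk0 u hu).symm)
  have hVcont : ContinuousOn V (Ioi t) := by
    have h1 : ContinuousOn (fun s => T (s - t)) (Ioi t) := by
      apply hTop.comp (continuous_id.sub continuous_const).continuousOn
      intro s hs; exact mem_Ioi.mpr (sub_pos.mpr (mem_Ioi.mp hs))
    exact h1.clm_apply hf'c.continuousOn
  have hVbound : ∀ s ∈ Ioi t, ‖V s‖ ≤ M0 * Cf' := by
    intro s hs
    calc ‖V s‖ ≤ ‖T (s - t)‖ * ‖deriv f s‖ := (T (s - t)).le_opNorm _
    _ ≤ M0 * Cf' := mul_le_mul (hM0' _ (by simp only [mem_Ioi] at hs; linarith))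
        (hCf' s) (norm_nonneg _) hM0nn
  have hVz : ∀ s, b < s → V s = 0 := by
    intro s hs; simp [hV, (hzb s hs).2]
  -- integrability of V on Ioi c for any c ≥ t, with interval-integral representation
  have hVint : ∀ c, t ≤ c → IntegrableOn V (Ioi c) ∧
      ∫ s in Ioi c, V s = ∫ s in c..(max b c), V s := by
    intro c hc
    apply aux_intOn V c (max b c) (M0 * Cf') (le_max_right _ _)
    · exact ((hVcont.mono (fun s hs => lt_of_le_of_lt hc hs.1)).aestronglyMeasurable
        measurableSet_Ioc)
    · exact fun s hs => hVbound s (lt_of_le_of_lt hc hs.1)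
    · exact fun s hs => hVz s (lt_of_le_of_lt (le_max_left _ _) hs)
  -- Step 1: integration by parts identity for each ε > 0
  have claim1 : ∀ ε : ℝ, 0 < ε →
      -∫ s in Ioi (t + ε), (Tk 1 (s - t)) (f s)
        = T ε (f (t + ε)) + ∫ s in Ioi (t + ε), V s := by
    intro ε hε
    set c := t + ε with hc
    have htc : t < c := by simp [hc, hε]
    set B : ℝ := max (b + 1) c with hB
    have hcB : c ≤ B := le_max_right _ _
    have hbB : b < B := lt_of_lt_of_le (lt_add_one b) (le_max_left _ _)
    -- derivative of s ↦ T (s - t) (f s) on [c, B]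
    have hder : ∀ s ∈ Icc c B, HasDerivAt (fun s => T (s - t) (f s))
        ((Tk 1 (s - t)) (f s) + V s) s := by
      intro s hs
      have hst : t < s := lt_of_lt_of_le htc hs.1
      have hpos : 0 < s - t := sub_pos.mpr hst
      have hop : HasDerivAt (fun s => T (s - t)) (Tk 1 (s - t)) s := by
        have h0 : HasDerivAt (fun s : ℝ => Tk 0 (s - t)) ((1:ℝ) • Tk 1 (s - t)) s := by
          have := HasDerivAt.scomp_of_eq (hg := hTkderiv 0 (s - t) hpos)
            (hh := (hasDerivAt_id s).sub_const t) (hy := rfl)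
          simpa [Function.comp_def] using this
        rw [one_smul] at h0
        apply h0.congr_of_eventuallyEq
        filter_upwards [eventually_gt_nhds hst] with u hu
        exact (hTk0 (u - t) (sub_pos.mpr hu)).symm
      have := aux_clm_deriv _ _ _ _ s hop (hf.differentiable one_ne_zero s).hasDerivAt
      simpa using this
    have hcont1 : ContinuousOn (fun s => (Tk 1 (s - t)) (f s)) (Ioi t) := by
      have h1 : ContinuousOn (fun s => Tk 1 (s - t)) (Ioi t) := by
        apply ContinuousOn.comp (t := Ioi (0:ℝ))
          (fun u hu => (hTkderiv 1 u hu).continuousAt.continuousWithinAt)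
          (continuous_id.sub continuous_const).continuousOn
        intro s hs; exact mem_Ioi.mpr (sub_pos.mpr (mem_Ioi.mp hs))
      exact h1.clm_apply hfc.continuousOn
    have hIccIoi : Icc c B ⊆ Ioi t := fun s hs => lt_of_lt_of_le htc hs.1
    have hi1 : IntervalIntegrable (fun s => (Tk 1 (s - t)) (f s)) volume c B := by
      apply ContinuousOn.intervalIntegrable
      rw [uIcc_of_le hcB]
      exact hcont1.mono hIccIoi
    have hi2 : IntervalIntegrable V volume c B := by
      apply ContinuousOn.intervalIntegrable
      rw [uIcc_of_le hcB]
      exact hVcont.mono hIccIoi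
    have hftc : ∫ s in c..B, ((Tk 1 (s - t)) (f s) + V s)
        = (fun s => T (s - t) (f s)) B - (fun s => T (s - t) (f s)) c :=
      intervalIntegral.integral_eq_sub_of_hasDerivAt
        (fun s hs => hder s (by rwa [uIcc_of_le hcB] at hs)) (hi1.add hi2)
    simp only at hftc
    have hfB : f B = 0 := (hzb B hbB).1
    rw [hfB] at hftc
    simp only [map_zero, zero_sub] at hftc
    have hct : c - t = ε := by simp [hc]
    rw [hct] at hftc
    rw [intervalIntegral.integral_add hi1 hi2] at hftc
    -- convert interval integrals to Ioi integrals
    have e1 : ∫ s in Ioi c, (Tk 1 (s - t)) (f s) = ∫ s in c..B, (Tk 1 (s - t)) (f s) := by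
      obtain ⟨C1, hC1⟩ := (isCompact_Icc (a := c) (b := B)).exists_bound_of_continuousOn
        (hcont1.mono hIccIoi)
      exact (aux_intOn _ c B C1 hcB
        ((hcont1.mono (fun s hs => lt_trans htc hs.1)).aestronglyMeasurable
          measurableSet_Ioc)
        (fun s hs => hC1 s ⟨hs.1.le, hs.2⟩)
        (fun s hs => by simp [(hzb s (lt_of_le_of_lt (by linarith [le_max_left (b+1) c] : b ≤ B) hs)).1])).2
    have e2 : ∫ s in Ioi c, V s = ∫ s in c..B, V s := by
      refine (aux_intOn V c B (M0 * Cf') hcB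
        ((hVcont.mono (fun s hs => lt_trans htc hs.1)).aestronglyMeasurable
          measurableSet_Ioc)
        (fun s hs => hVbound s (lt_trans htc hs.1))
        (fun s hs => hVz s (lt_of_le_of_lt (by linarith [le_max_left (b+1) c] : b ≤ B) hs))).2
    rw [e1, e2, eq_sub_of_add_eq hftc]
    abel
  -- Part A: T ε (f (t + ε)) → f t
  have partA : Tendsto (fun ε : ℝ => T ε (f (t + ε))) (𝓝[>] (0:ℝ)) (𝓝 (f t)) := by
    have h1 : Tendsto (fun ε : ℝ => T ε (f t)) (𝓝[>] (0:ℝ)) (𝓝 (f t)) := by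
      have h := (hTcont (f t) 0 self_mem_Ici).tendsto
      rw [hT0] at h
      have h2 := h.mono_left (nhdsWithin_mono 0 Ioi_subset_Ici_self)
      simpa using h2
    have h2 : Tendsto (fun ε : ℝ => T ε (f (t + ε)) - T ε (f t)) (𝓝[>] (0:ℝ)) (𝓝 0) := by
      apply squeeze_zero_norm' (a := fun ε => M0 * ‖f (t + ε) - f t‖)
      · filter_upwards [self_mem_nhdsWithin] with ε (hε : 0 < ε)
        rw [← map_sub]
        calc ‖T ε (f (t + ε) - f t)‖ ≤ ‖T ε‖ * ‖f (t + ε) - f t‖ := (T ε).le_opNorm _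
        _ ≤ M0 * ‖f (t + ε) - f t‖ :=
          mul_le_mul_of_nonneg_right (hM0' ε hε.le) (norm_nonneg _)
      · have hft : Tendsto (fun ε : ℝ => f (t + ε)) (𝓝 (0:ℝ)) (𝓝 (f t)) := by
          have h3 : Tendsto (fun ε : ℝ => t + ε) (𝓝 (0:ℝ)) (𝓝 t) := by
            have : Continuous (fun ε : ℝ => t + ε) := continuous_const.add continuous_id
            simpa using this.tendsto 0
          exact (hfc.tendsto t).comp h3
        have := (((hft.sub (tendsto_const_nhds (x := f t))).norm).const_mul M0).mono_left
          (nhdsWithin_le_nhds (s := Ioi (0:ℝ)))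
        simpa using this
    have := h2.add h1
    simp only [sub_add_cancel, zero_add] at this
    exact this
  -- Part B: ∫_{Ioi (t+ε)} V → ∫_{Ioi t} V
  have hVIoi : IntegrableOn V (Ioi t) := (hVint t le_rfl).1
  have partB : Tendsto (fun ε : ℝ => ∫ s in Ioi (t + ε), V s) (𝓝[>] (0:ℝ))
      (𝓝 (∫ s in Ioi t, V s)) := by
    rw [tendsto_iff_norm_sub_tendsto_zero]
    apply squeeze_zero_norm' (a := fun ε => M0 * Cf' * ε)
    · filter_upwards [self_mem_nhdsWithin] with ε (hε : 0 < ε)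
      have hsplit : ∫ s in Ioi t, V s
          = (∫ s in Ioc t (t + ε), V s) + ∫ s in Ioi (t + ε), V s := by
        rw [← setIntegral_union (Ioc_disjoint_Ioi le_rfl) measurableSet_Ioi
          (hVIoi.mono_set Ioc_subset_Ioi_self)
          (hVIoi.mono_set (Ioi_subset_Ioi (by linarith))),
          Ioc_union_Ioi_eq_Ioi (by linarith)]
      have habel : (∫ s in Ioi (t + ε), V s) - ∫ s in Ioi t, V s
          = -(∫ s in Ioc t (t + ε), V s) := by
        rw [hsplit]; abel
      rw [norm_norm, habel, norm_neg]
      have hb := norm_setIntegral_le_of_norm_le_const_ae' (μ := volume)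
        (s := Ioc t (t + ε)) (C := M0 * Cf') (f := V) measure_Ioc_lt_top
        (ae_of_all _ (fun s hs => hVbound s hs.1))
      calc ‖∫ s in Ioc t (t + ε), V s‖ ≤ (M0 * Cf') * (volume (Ioc t (t + ε))).toReal := hb
      _ = M0 * Cf' * ε := by
        rw [Real.volume_Ioc]
        rw [show t + ε - t = ε by ring, ENNReal.toReal_ofReal hε.le]
    · have : Tendsto (fun ε : ℝ => M0 * Cf' * ε) (𝓝 (0:ℝ)) (𝓝 (M0 * Cf' * 0)) :=
        (continuous_const.mul continuous_id).tendsto 0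
      rw [mul_zero] at this
      exact this.mono_left nhdsWithin_le_nhds
  have heq : (fun ε : ℝ => T ε (f (t + ε)) + ∫ s in Ioi (t + ε), V s)
      =ᶠ[𝓝[>] (0:ℝ)] (fun ε : ℝ => -∫ s in Ioi (t + ε), (Tk 1 (s - t)) (f s)) := by
    filter_upwards [self_mem_nhdsWithin] with ε (hε : 0 < ε)
    exact (claim1 ε hε).symm
  exact Tendsto.congr' heq (partA.add partB)

lemma aux_comp {H : Type*} [NormedAddCommGroup H] [InnerProductSpace ℂ H]
    (T : ℝ → H →L[ℂ] H) (Tk : ℕ → ℝ → H →L[ℂ] H)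
    (hTadd : ∀ s t : ℝ, 0 ≤ s → 0 ≤ t → T (s + t) = (T s).comp (T t))
    (hTk0 : ∀ t : ℝ, 0 < t → Tk 0 t = T t)
    (hTkderiv : ∀ (k : ℕ) (t : ℝ), 0 < t → HasDerivAt (Tk k) (Tk (k + 1) t) t) :
    ∀ (k : ℕ) (t r : ℝ), 0 < t → 0 < r → (Tk k t).comp (T r) = Tk k (t + r) := by
  intro k
  induction k with
  | zero =>
    intro t r ht hr
    rw [hTk0 t ht, hTk0 (t + r) (by linarith), hTadd t r ht.le hr.le]
  | succ k ih =>
    intro t r ht hr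
    set L : (H →L[ℂ] H) →L[ℂ] (H →L[ℂ] H) := (ContinuousLinearMap.compL ℂ H H H).flip (T r)
      with hLdef
    have hL : ∀ A : H →L[ℂ] H, L A = A.comp (T r) := fun A => rfl
    -- φ u = L (Tk k u) has derivative L (Tk (k+1) t) at t
    have h1 : HasDerivAt (fun u => L (Tk k u)) (L (Tk (k+1) t)) t := by
      have := ((L.restrictScalars ℝ).hasFDerivAt (x := Tk k t)).comp_hasDerivAt t
        (hTkderiv k t ht)
      simpa [Function.comp_def] using this
    -- ψ u = Tk k (u + r) has derivative Tk (k+1) (t + r) at t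
    have h2 : HasDerivAt (fun u => Tk k (u + r)) (Tk (k+1) (t + r)) t := by
      have := HasDerivAt.scomp (𝕜 := ℝ) t (hTkderiv k (t + r) (by linarith))
        ((hasDerivAt_id t).add_const r)
      simpa [Function.comp_def] using this
    -- the two functions agree near t
    have heq : (fun u => L (Tk k u)) =ᶠ[𝓝 t] (fun u => Tk k (u + r)) := by
      filter_upwards [eventually_gt_nhds ht] with u hu
      rw [hL, ih u r hu hr]
    have h1' : HasDerivAt (fun u => Tk k (u + r)) (L (Tk (k+1) t)) t :=
      h1.congr_of_eventuallyEq heq.symm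
    have := h2.unique h1'
    rw [hL] at this
    exact this.symm

lemma aux_cont {H : Type*} [NormedAddCommGroup H] (v : ℝ → H) (a : ℝ) (ha : 0 < a)
    (hc : ContinuousOn v (Ioi 0)) (hz : ∀ s, s < a → v s = 0) : Continuous v := by
  rw [continuous_iff_continuousAt]
  intro s
  rcases lt_or_ge s a with hs | hs
  · have hev : v =ᶠ[𝓝 s] (fun _ => (0:H)) := by
      filter_upwards [Iio_mem_nhds hs] with x hx
      exact hz x hx
    exact (continuousAt_congr hev).mpr continuousAt_const
  · exact hc.continuousAt (Ioi_mem_nhds (lt_of_lt_of_le ha hs))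

/-- Endpoint balayage formula (2.9): for `N ∈ ℕ₊` and `f` continuously differentiable
with compact support in `(0,∞)` satisfying the trace condition `∫₀^∞ T′(s) f(s) ds = 0`,
with `g = M₋(f)` the (principal-value) backward maximal regularity operator applied to
`f`, the function `t ↦ t^(N-1) • T⁽ᴺ⁾(t)(M₋(f)(t))` is Bochner integrable on `(0,∞)` and
`∫₀^∞ t^(N-1) • T⁽ᴺ⁾(t)(M₋(f)(t)) dt = -(1/N) • ∫₀^∞ s^N • T⁽ᴺ⁺¹⁾(s) f(s) ds`. -/
theorem endpoint_balayage_formula_backward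
    {H : Type*} [NormedAddCommGroup H] [InnerProductSpace ℂ H] [CompleteSpace H]
    (T : ℝ → H →L[ℂ] H) (Tk : ℕ → ℝ → H →L[ℂ] H)
    (hT0 : T 0 = ContinuousLinearMap.id ℂ H)
    (hTadd : ∀ s t : ℝ, 0 ≤ s → 0 ≤ t → T (s + t) = (T s).comp (T t))
    (hTcont : ∀ x : H, ContinuousOn (fun t : ℝ => T t x) (Ici (0 : ℝ)))
    (hTk0 : ∀ t : ℝ, 0 < t → Tk 0 t = T t)
    (hTkderiv : ∀ (k : ℕ) (t : ℝ), 0 < t → HasDerivAt (Tk k) (Tk (k + 1) t) t)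
    (hMk : ∀ k : ℕ, 1 ≤ k → ∃ M : ℝ, ∀ t : ℝ, 0 < t → t ^ k * ‖Tk k t‖ ≤ M)
    (hM0 : ∃ M : ℝ, ∀ t : ℝ, 0 ≤ t → ‖T t‖ ≤ M)
    (N : ℕ) (hN : 1 ≤ N)
    (f : ℝ → H) (hf : ContDiff ℝ 1 f) (hfc : HasCompactSupport f)
    (hfs : tsupport f ⊆ Ioi (0 : ℝ))
    -- trace condition: `∫₀^∞ A e^{-sA} f(s) ds = -∫₀^∞ T′(s) f(s) ds = 0`
    (htrace : ∫ s in Ioi (0 : ℝ), (Tk 1 s) (f s) = 0)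
    -- `g = M₋(f)`, realized as the principal value limit
    (g : ℝ → H)
    (hg : ∀ t : ℝ, 0 < t →
      Tendsto (fun ε : ℝ => -∫ s in Ioi (t + ε), (Tk 1 (s - t)) (f s))
        (𝓝[>] (0 : ℝ)) (𝓝 (g t))) :
    IntegrableOn (fun t : ℝ => t ^ (N - 1) • (Tk N t) (g t)) (Ioi 0) ∧
    ∫ t in Ioi (0 : ℝ), t ^ (N - 1) • (Tk N t) (g t)
      = -((1 / (N : ℝ)) • ∫ s in Ioi (0 : ℝ), s ^ N • (Tk (N + 1) s) (f s)) := by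
  obtain ⟨M0, hM0'⟩ := hM0
  obtain ⟨a, b, ha, hzf⟩ : ∃ a b : ℝ, 0 < a ∧
      ∀ s : ℝ, (s < a ∨ b < s) → f s = 0 ∧ deriv f s = 0 := by
    by_cases hK : tsupport f = ∅
    · refine ⟨1, 0, one_pos, fun s _ => ?_⟩
      have hf0 : f = 0 := tsupport_eq_empty_iff.mp hK
      have hd0 : deriv f s = 0 := by
        have : deriv f s = deriv (fun _ : ℝ => (0:H)) s := by rw [hf0]; rfl
        rw [this, deriv_const]
      exact ⟨by simp [hf0], hd0⟩
    · have hKc : IsCompact (tsupport f) := hfc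
      have hne : (tsupport f).Nonempty := nonempty_iff_ne_empty.mpr hK
      refine ⟨sInf (tsupport f), sSup (tsupport f), hfs (hKc.sInf_mem hne), fun s hs => ?_⟩
      have hnot : s ∉ tsupport f := by
        intro hmem
        rcases hs with hlt | hlt
        · exact absurd (csInf_le hKc.bddBelow hmem) (not_le.mpr hlt)
        · exact absurd (le_csSup hKc.bddAbove hmem) (not_le.mpr hlt)
      refine ⟨image_eq_zero_of_notMem_tsupport hnot, ?_⟩
      by_contra hd
      exact hnot (support_deriv_subset hd)
  have hza : ∀ s : ℝ, s < a → f s = 0 ∧ deriv f s = 0 := fun s hs => hzf s (Or.inl hs)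
  have hzb : ∀ s : ℝ, b < s → f s = 0 ∧ deriv f s = 0 := fun s hs => hzf s (Or.inr hs)
  have hfcont : Continuous f := hf.continuous
  have hf'cont : Continuous (deriv f) := hf.continuous_deriv le_rfl
  obtain ⟨Cf', hCf'⟩ := hf'cont.bounded_above_of_compact_support hfc.deriv
  have hM0nn : 0 ≤ M0 := le_trans (norm_nonneg _) (hM0' 0 le_rfl)
  have hgf : ∀ t : ℝ, 0 < t → g t = f t + ∫ s in Ioi t, T (s - t) (deriv f s) := fun t ht =>
    tendsto_nhds_unique (hg t ht)
      (aux_g T Tk hT0 hTcont hTk0 hTkderiv M0 hM0' f hf b hzb Cf' hCf' t ht)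
  set B : ℝ := max b 0 + 1 with hBdef
  have hbB : b < B := lt_of_le_of_lt (le_max_left _ _) (lt_add_one _)
  have hB0 : 0 < B := lt_of_le_of_lt (le_max_right _ _) (lt_add_one _)
  have hNne : (N:ℝ) ≠ 0 := Nat.cast_ne_zero.mpr (by omega)
  have hTkcont : ∀ k : ℕ, ContinuousOn (Tk k) (Ioi (0:ℝ)) := fun k u hu =>
    (hTkderiv k u hu).continuousAt.continuousWithinAt
  set G : ℝ → H := fun s => Tk N s (deriv f s) with hGdef
  have hGza : ∀ s, s < a → G s = 0 := fun s hs => by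
    simp only [hGdef, (hza s hs).2, map_zero]
  have hGzb : ∀ s, b < s → G s = 0 := fun s hs => by
    simp only [hGdef, (hzb s hs).2, map_zero]
  have hGcont : Continuous G :=
    aux_cont G a ha ((hTkcont N).clm_apply hf'cont.continuousOn) hGza
  obtain ⟨CG, hCG0⟩ := (isCompact_Icc (a := (0:ℝ)) (b := B)).exists_bound_of_continuousOn
    hGcont.continuousOn
  set h : ℝ → H := fun t => ∫ s in Ioi t, G s with hhdef
  have hhz : ∀ t, b ≤ t → h t = 0 := fun t htb =>
    setIntegral_eq_zero_of_forall_eq_zero fun s hs => hGzb s (lt_of_le_of_lt htb hs)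
  have hrep : ∀ t : ℝ, h t = ∫ s in t..B, G s := by
    intro t
    rcases le_or_gt t B with htB | htB
    · exact (aux_intOn G t B (max CG 0) htB hGcont.aestronglyMeasurable.restrict
        (fun s hs => by
          rcases lt_or_ge s a with hs0 | hs0
          · rw [hGza s hs0]
            simp only [norm_zero]
            exact le_max_right _ _
          · exact le_trans (hCG0 s ⟨le_trans ha.le hs0, hs.2⟩) (le_max_left _ _))
        (fun s hs => hGzb s (hbB.trans hs))).2
    · have h1 : h t = 0 := hhz t (hbB.trans htB).le
      have h2 : ∫ s in t..B, G s = 0 := by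
        rw [intervalIntegral.integral_symm, intervalIntegral.integral_of_le htB.le]
        rw [setIntegral_eq_zero_of_forall_eq_zero fun s hs => hGzb s (lt_of_lt_of_le hbB hs.1.le)]
        simp
      rw [h1, h2]
  have hhd : ∀ t : ℝ, HasDerivAt h (-G t) t := by
    intro t
    have hprim := intervalIntegral.integral_hasDerivAt_left
      (hGcont.intervalIntegrable t B)
      (hGcont.stronglyMeasurableAtFilter volume (𝓝 t)) hGcont.continuousAt
    exact hprim.congr_of_eventuallyEq (Eventually.of_forall hrep)
  have hhcont : Continuous h :=
    continuous_iff_continuousAt.mpr fun t => (hhd t).continuousAt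
  -- key pointwise formula
  have hkey : ∀ t ∈ Ioi (0:ℝ), Tk N t (g t) = Tk N t (f t) + h t := by
    intro t ht
    rw [mem_Ioi] at ht
    set V : ℝ → H := fun s => T (s - t) (deriv f s) with hVdef
    have hVcont : ContinuousOn V (Ioi t) := by
      have h1 : ContinuousOn (fun s => T (s - t)) (Ioi t) := by
        apply ContinuousOn.comp (t := Ioi (0:ℝ))
          (ContinuousOn.congr (fun u hu => (hTkderiv 0 u hu).continuousAt.continuousWithinAt)
            (fun u hu => (hTk0 u hu).symm))
          (continuous_id.sub continuous_const).continuousOn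
        intro s hs
        exact mem_Ioi.mpr (sub_pos.mpr (mem_Ioi.mp hs))
      exact h1.clm_apply hf'cont.continuousOn
    have hVint : IntegrableOn V (Ioi t) := by
      refine (aux_intOn V t (max b t) (M0 * Cf') (le_max_right _ _)
        ((hVcont.mono (fun s hs => hs.1)).aestronglyMeasurable measurableSet_Ioc) ?_ ?_).1
      · intro s hs
        calc ‖V s‖ ≤ ‖T (s - t)‖ * ‖deriv f s‖ := (T (s - t)).le_opNorm _
        _ ≤ M0 * Cf' := mul_le_mul (hM0' _ (by simp only [mem_Ioc] at hs; linarith [hs.1]))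
            (hCf' s) (norm_nonneg _) hM0nn
      · intro s hs
        simp only [hVdef, (hzb s (lt_of_le_of_lt (le_max_left _ _) hs)).2, map_zero]
    rw [hgf t ht, map_add]
    congr 1
    rw [← ContinuousLinearMap.integral_comp_comm _ hVint]
    apply setIntegral_congr_fun measurableSet_Ioi
    intro s hs
    rw [mem_Ioi] at hs
    have hcomp := aux_comp T Tk hTadd hTk0 hTkderiv N t (s - t) ht (sub_pos.mpr hs)
    calc Tk N t (V s) = ((Tk N t).comp (T (s - t))) (deriv f s) := rfl
    _ = Tk N (t + (s - t)) (deriv f s) := by rw [hcomp]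
    _ = G s := by rw [show t + (s - t) = s by ring]
  -- the two integrable pieces
  set u : ℝ → H := fun t => t ^ (N - 1) • Tk N t (f t) with hudef
  have hucont : Continuous u := by
    apply aux_cont u a ha
    · exact ((continuous_pow (N-1)).continuousOn).smul
        ((hTkcont N).clm_apply hfcont.continuousOn)
    · intro s hs
      simp only [hudef, (hza s hs).1, map_zero, smul_zero]
  have huz : ∀ s, B < s → u s = 0 := fun s hs => by
    simp only [hudef, (hzb s (hbB.trans hs)).1, map_zero, smul_zero]
  obtain ⟨Cu, hCu⟩ := (isCompact_Icc (a := (0:ℝ)) (b := B)).exists_bound_of_continuousOn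
    hucont.continuousOn
  have hu := aux_intOn u 0 B Cu hB0.le hucont.aestronglyMeasurable.restrict
    (fun s hs => hCu s ⟨hs.1.le, hs.2⟩) huz
  set w : ℝ → H := fun t => t ^ (N - 1) • h t with hwdef
  have hwcont : Continuous w := (continuous_pow (N-1)).smul hhcont
  have hwz : ∀ s, B < s → w s = 0 := fun s hs => by
    simp only [hwdef, hhz s (le_of_lt (hbB.trans hs)), smul_zero]
  obtain ⟨Cw, hCw⟩ := (isCompact_Icc (a := (0:ℝ)) (b := B)).exists_bound_of_continuousOn
    hwcont.continuousOn
  have hw := aux_intOn w 0 B Cw hB0.le hwcont.aestronglyMeasurable.restrict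
    (fun s hs => hCw s ⟨hs.1.le, hs.2⟩) hwz
  have hsum : EqOn (fun t : ℝ => t ^ (N - 1) • Tk N t (g t)) (fun t => u t + w t) (Ioi 0) := by
    intro t ht
    simp only [hudef, hwdef]
    rw [hkey t ht, smul_add]
  constructor
  · have hiadd : IntegrableOn (fun t : ℝ => u t + w t) (Ioi 0) := hu.1.add hw.1
    exact hiadd.congr_fun hsum.symm measurableSet_Ioi
  · rw [setIntegral_congr_fun measurableSet_Ioi hsum, integral_add hu.1 hw.1, hu.2, hw.2]
    -- derivative of t^N/N
    have hpow : ∀ t : ℝ, HasDerivAt (fun t : ℝ => t^N / N) (t^(N-1)) t := by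
      intro t
      have hdp := (hasDerivAt_pow N t).div_const (N:ℝ)
      have heq : (N:ℝ) * t^(N-1) / N = t^(N-1) := by field_simp
      rwa [heq] at hdp
    -- FTC for h-part
    have hq3cont : Continuous (fun t : ℝ => (t^N / N) • G t) :=
      ((continuous_pow N).div_const _).smul hGcont
    have hFTC1 : ∫ t in (0:ℝ)..B, (w t - (t^N / N) • G t)
        = (fun t : ℝ => (t^N / N) • h t) B - (fun t : ℝ => (t^N / N) • h t) 0 :=
      intervalIntegral.integral_eq_sub_of_hasDerivAt
        (fun t _ => by
          have h2 := (hpow t).smul (hhd t)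
          convert h2 using 1
          simp only [hwdef, smul_neg, Pi.sub_apply]
          abel)
        ((hwcont.sub hq3cont).intervalIntegrable _ _)
    simp only [hhz B hbB.le, zero_pow (by omega : N ≠ 0), smul_zero, zero_div,
      zero_smul, sub_zero] at hFTC1
    have hsplit1 : ∫ t in (0:ℝ)..B, w t = ∫ t in (0:ℝ)..B, (t^N / N) • G t := by
      have h0 : ∫ t in (0:ℝ)..B, (w t - (t^N / N) • G t)
          = (∫ t in (0:ℝ)..B, w t) - ∫ t in (0:ℝ)..B, (t^N / N) • G t :=
        intervalIntegral.integral_sub (hwcont.intervalIntegrable 0 B)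
          (hq3cont.intervalIntegrable 0 B)
      rw [hFTC1] at h0
      exact sub_eq_zero.mp h0.symm
    -- FTC for f-part
    have hq2cont : Continuous (fun t : ℝ => (t^N / (N:ℝ)) • Tk (N+1) t (f t)) := by
      apply aux_cont _ a ha
      · exact (((continuous_pow N).div_const _).continuousOn).smul
          ((hTkcont (N+1)).clm_apply hfcont.continuousOn)
      · intro s hs
        simp [(hza s hs).1]
    have hQd : ∀ t ∈ uIcc (0:ℝ) B, HasDerivAt (fun t : ℝ => (t^N / (N:ℝ)) • Tk N t (f t))
        (u t + ((t^N / (N:ℝ)) • Tk (N+1) t (f t) + (t^N / (N:ℝ)) • G t)) t := by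
      intro t htm
      rcases lt_or_ge t a with hta | hta
      · have hev : (fun t : ℝ => (t^N / (N:ℝ)) • Tk N t (f t)) =ᶠ[𝓝 t] (fun _ => (0:H)) := by
          filter_upwards [Iio_mem_nhds hta] with s hs
          simp [(hza s hs).1]
        have h0 : HasDerivAt (fun t : ℝ => (t^N / (N:ℝ)) • Tk N t (f t)) 0 t :=
          (hasDerivAt_const t (0:H)).congr_of_eventuallyEq hev
        have hz0 : u t + ((t^N / (N:ℝ)) • Tk (N+1) t (f t) + (t^N / (N:ℝ)) • G t) = 0 := by
          simp [hudef, hGdef, (hza t hta).1, (hza t hta).2]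
        rw [hz0]
        exact h0
      · have ht0 : 0 < t := lt_of_lt_of_le ha hta
        have hd := aux_clm_deriv (Tk N) (Tk (N+1) t) f (deriv f t) t (hTkderiv N t ht0)
          (hf.differentiable one_ne_zero t).hasDerivAt
        have hcombo := (hpow t).smul hd
        have hre : u t + ((t^N / (N:ℝ)) • Tk (N+1) t (f t) + (t^N / (N:ℝ)) • G t)
            = t^(N-1) • Tk N t (f t)
              + (t^N / (N:ℝ)) • (Tk (N+1) t (f t) + Tk N t (deriv f t)) := by
          simp only [hudef, hGdef, smul_add]
        rw [hre]
        convert hcombo using 1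
        · rfl
        exact add_comm (_ : H) _
    have hcont' : Continuous (fun t : ℝ =>
        u t + ((t^N / (N:ℝ)) • Tk (N+1) t (f t) + (t^N / (N:ℝ)) • G t)) :=
      hucont.add (hq2cont.add hq3cont)
    have hFTC2 := intervalIntegral.integral_eq_sub_of_hasDerivAt hQd
      (hcont'.intervalIntegrable _ _)
    simp only [(hzb B hbB).1, map_zero, smul_zero, zero_pow (by omega : N ≠ 0), zero_div,
      zero_smul, sub_zero] at hFTC2
    rw [intervalIntegral.integral_add (hucont.intervalIntegrable 0 B)
      ((hq2cont.add hq3cont).intervalIntegrable 0 B)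
      (g := fun t => (t^N / (N:ℝ)) • Tk (N+1) t (f t) + (t^N / (N:ℝ)) • G t),
      intervalIntegral.integral_add (hq2cont.intervalIntegrable 0 B)
      (hq3cont.intervalIntegrable 0 B)] at hFTC2
    -- RHS conversion
    have hq4cont : Continuous (fun s : ℝ => s ^ N • Tk (N+1) s (f s)) := by
      apply aux_cont _ a ha
      · exact ((continuous_pow N).continuousOn).smul
          ((hTkcont (N+1)).clm_apply hfcont.continuousOn)
      · intro s hs
        simp [(hza s hs).1]
    obtain ⟨Cq, hCq⟩ := (isCompact_Icc (a := (0:ℝ)) (b := B)).exists_bound_of_continuousOn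
      hq4cont.continuousOn
    have hR : ∫ s in Ioi (0:ℝ), s ^ N • Tk (N+1) s (f s)
        = ∫ s in (0:ℝ)..B, s ^ N • Tk (N+1) s (f s) :=
      (aux_intOn _ 0 B Cq hB0.le hq4cont.aestronglyMeasurable.restrict
        (fun s hs => hCq s ⟨hs.1.le, hs.2⟩)
        (fun s hs => by simp [(hzb s (hbB.trans hs)).1])).2
    rw [hR]
    have hsm : (1 / (N:ℝ)) • ∫ s in (0:ℝ)..B, s ^ N • Tk (N+1) s (f s)
        = ∫ s in (0:ℝ)..B, (s^N / (N:ℝ)) • Tk (N+1) s (f s) := by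
      rw [← intervalIntegral.integral_smul]
      apply intervalIntegral.integral_congr
      intro s _
      simp only [smul_smul]
      congr 1
      ring
    rw [hsm, hsplit1]
    have h5 : ((∫ t in (0:ℝ)..B, u t) + ∫ t in (0:ℝ)..B, (t^N / (N:ℝ)) • G t)
        + ∫ t in (0:ℝ)..B, (t^N / (N:ℝ)) • Tk (N+1) t (f t) = 0 := by
      rw [← hFTC2]
      abel
    exact eq_neg_of_add_eq_zero_left h5
end

section
/- Higher-order square function estimate (3.1): For every N ∈ ℕ₊ there exists a constant C_N > 0, depending only on N, C and M₁, such that for all h ∈ H: ∫₀^∞ s^{2N-1} ‖T⁽ᴺ⁾(s) h‖² ds ≤ C_N ‖h‖². (In semigroup notation this is the square function estimate ∫₀^∞ ‖(sA)^N e^{-sA} h‖² ds/s ≤ C_N ‖h‖², a consequence of the quadratic estimate (Q)_A.) -/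
open MeasureTheory Filter Topology Set

/-- Change of variables `x ↦ c * x` for a lower integral on `(0, ∞)`. -/
lemma lintegral_Ioi_comp_mul_left (f : ℝ → ENNReal) {c : ℝ} (hc : 0 < c) :
    ∫⁻ x in Ioi (0 : ℝ), f (c * x) = ENNReal.ofReal c⁻¹ * ∫⁻ y in Ioi (0 : ℝ), f y := by
  have hemb : MeasurableEmbedding (fun x : ℝ => c * x) :=
    (Homeomorph.mulLeft₀ c hc.ne').measurableEmbedding
  have hpre : (fun x : ℝ => c * x) ⁻¹' (Ioi (0:ℝ)) = Ioi (0:ℝ) := by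
    ext x; simp [mul_pos_iff_of_pos_left, hc]
  have hmap : Measure.map (fun x : ℝ => c * x) (volume.restrict (Ioi (0:ℝ)))
      = ENNReal.ofReal c⁻¹ • (volume.restrict (Ioi (0:ℝ))) := by
    calc Measure.map (fun x : ℝ => c * x) (volume.restrict (Ioi (0:ℝ)))
        = Measure.map (fun x : ℝ => c * x)
            (volume.restrict ((fun x : ℝ => c * x) ⁻¹' (Ioi (0:ℝ)))) := by rw [hpre]
      _ = (Measure.map (fun x : ℝ => c * x) volume).restrict (Ioi (0:ℝ)) :=
          (Measure.restrict_map hemb.measurable measurableSet_Ioi).symm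
      _ = ENNReal.ofReal c⁻¹ • (volume.restrict (Ioi (0:ℝ))) := by
          rw [Real.map_volume_mul_left hc.ne', abs_of_pos (inv_pos.2 hc),
            Measure.restrict_smul]
  calc ∫⁻ x in Ioi (0:ℝ), f (c * x)
      = ∫⁻ y, f y ∂(Measure.map (fun x : ℝ => c * x) (volume.restrict (Ioi (0:ℝ)))) :=
        (hemb.lintegral_map f).symm
    _ = ENNReal.ofReal c⁻¹ * ∫⁻ y in Ioi (0:ℝ), f y := by
        rw [hmap, lintegral_smul_measure, smul_eq_mul]

/-- Higher-order square function estimate (3.1): under the quadratic estimate `(Q)_A`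
(with constant `C`) and the analyticity bound `M₁`, for every `N ∈ ℕ₊` there is a
constant `C_N > 0` such that for all `h ∈ H`,
`∫₀^∞ s^(2N-1) ‖T⁽ᴺ⁾(s) h‖² ds ≤ C_N ‖h‖²`. -/
theorem higher_order_square_function_estimate
    {H : Type*} [NormedAddCommGroup H] [InnerProductSpace ℂ H] [CompleteSpace H]
    (T : ℝ → H →L[ℂ] H) (Tk : ℕ → ℝ → H →L[ℂ] H)
    (hT0 : T 0 = ContinuousLinearMap.id ℂ H)
    (hTadd : ∀ s t : ℝ, 0 ≤ s → 0 ≤ t → T (s + t) = (T s).comp (T t))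
    (hTcont : ∀ x : H, ContinuousOn (fun t : ℝ => T t x) (Ici (0 : ℝ)))
    (hTk0 : ∀ t : ℝ, 0 < t → Tk 0 t = T t)
    (hTkderiv : ∀ (k : ℕ) (t : ℝ), 0 < t → HasDerivAt (Tk k) (Tk (k + 1) t) t)
    (M₁ : ℝ) (hM1 : ∀ t : ℝ, 0 < t → t * ‖Tk 1 t‖ ≤ M₁)
    (C : ℝ) (hC : 0 < C)
    -- the quadratic estimate (Q)_A
    (hQ : ∀ h : H, ∫⁻ s in Ioi (0 : ℝ), ENNReal.ofReal (s * ‖(Tk 1 s) h‖ ^ 2)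
      ≤ ENNReal.ofReal (C * ‖h‖ ^ 2))
    (N : ℕ) (hN : 1 ≤ N) :
    ∃ C_N : ℝ, 0 < C_N ∧ ∀ h : H,
      ∫⁻ s in Ioi (0 : ℝ), ENNReal.ofReal (s ^ (2 * N - 1) * ‖(Tk N s) h‖ ^ 2)
        ≤ ENNReal.ofReal (C_N * ‖h‖ ^ 2) := by
  -- `T` itself is differentiable on `(0,∞)` with derivative `Tk 1`
  have hTEq : ∀ t : ℝ, 0 < t → (T =ᶠ[𝓝 t] Tk 0) := by
    intro t ht
    filter_upwards [Ioi_mem_nhds ht] with u hu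
    exact (hTk0 u hu).symm
  have hTd : ∀ t : ℝ, 0 < t → HasDerivAt T (Tk 1 t) t := fun t ht =>
    ((hTEq t ht).hasDerivAt_iff).2 (hTkderiv 0 t ht)
  -- Step A : Tk k (s+t) = (T s).comp (Tk k t)
  have stepA : ∀ k : ℕ, ∀ s t : ℝ, 0 < s → 0 < t →
      Tk k (s + t) = (T s).comp (Tk k t) := by
    intro k
    induction k with
    | zero =>
      intro s t hs ht
      rw [hTk0 _ (by positivity), hTk0 _ ht, hTadd s t hs.le ht.le]
    | succ k ih =>
      intro s t hs ht
      -- differentiate the identity of Step A (order k) in t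
      have hf : HasDerivAt (fun u => Tk k (s + u)) (Tk (k + 1) (s + t)) t :=
        (hTkderiv k (s + t) (by positivity)).comp_const_add s t
      have hg : HasDerivAt (fun u => (T s).comp (Tk k u))
          ((T s).comp (Tk (k + 1) t)) t := by
        have := (ContinuousLinearMap.hasFDerivAt
            (((ContinuousLinearMap.compL ℂ H H H (T s))).restrictScalars ℝ)
            (x := Tk k t)).comp_hasDerivAt t (hTkderiv k t ht)
        simpa [Function.comp_def] using this
      have heq : (fun u => Tk k (s + u)) =ᶠ[𝓝 t] (fun u => (T s).comp (Tk k u)) := by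
        filter_upwards [Ioi_mem_nhds ht] with u hu
        exact ih s u hs hu
      have hf' : HasDerivAt (fun u => (T s).comp (Tk k u)) (Tk (k + 1) (s + t)) t :=
        (heq.hasDerivAt_iff).1 hf
      exact hf'.unique hg
  -- Step B : Tk (k+1) (s+t) = (Tk 1 s).comp (Tk k t)
  have stepB : ∀ k : ℕ, ∀ s t : ℝ, 0 < s → 0 < t →
      Tk (k + 1) (s + t) = (Tk 1 s).comp (Tk k t) := by
    intro k s t hs ht
    -- differentiate Step A in s
    have hf : HasDerivAt (fun u => Tk k (u + t)) (Tk (k + 1) (s + t)) s := by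
      have := (hTkderiv k (t + s) (by positivity)).comp_const_add t s
      simpa [add_comm] using this
    have hg : HasDerivAt (fun u => (T u).comp (Tk k t))
        ((Tk 1 s).comp (Tk k t)) s := by
      have := (ContinuousLinearMap.hasFDerivAt
          (((ContinuousLinearMap.compL ℂ H H H).flip (Tk k t)).restrictScalars ℝ)
          (x := T s)).comp_hasDerivAt s (hTd s hs)
      simpa [Function.comp_def] using this
    have heq : (fun u => Tk k (u + t)) =ᶠ[𝓝 s] (fun u => (T u).comp (Tk k t)) := by
      filter_upwards [Ioi_mem_nhds hs] with u hu
      exact stepA k u t hu ht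
    have hf' : HasDerivAt (fun u => (T u).comp (Tk k t)) (Tk (k + 1) (s + t)) s :=
      (heq.hasDerivAt_iff).1 hf
    exact hf'.unique hg
  -- Step C : iterating Step B
  have stepC : ∀ m : ℕ, ∀ u : ℝ, 0 < u → ∀ h : H,
      ‖Tk (m + 1) ((m + 1 : ℕ) * u) h‖ ≤ ‖Tk 1 u‖ ^ m * ‖Tk 1 u h‖ := by
    intro m
    induction m with
    | zero => intro u hu h; simp
    | succ m ih =>
      intro u hu h
      have hsplit : ((m + 1 + 1 : ℕ) : ℝ) * u = u + ((m + 1 : ℕ) : ℝ) * u := by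
        push_cast; ring
      have hmu : (0 : ℝ) < ((m + 1 : ℕ) : ℝ) * u := by positivity
      have hcomp : Tk (m + 1 + 1) (((m + 1 + 1 : ℕ) : ℝ) * u)
          = (Tk 1 u).comp (Tk (m + 1) (((m + 1 : ℕ) : ℝ) * u)) := by
        rw [hsplit]; exact stepB (m + 1) u _ hu hmu
      calc ‖Tk (m + 1 + 1) (((m + 1 + 1 : ℕ) : ℝ) * u) h‖
          = ‖(Tk 1 u) (Tk (m + 1) (((m + 1 : ℕ) : ℝ) * u) h)‖ := by rw [hcomp]; rfl
        _ ≤ ‖Tk 1 u‖ * ‖Tk (m + 1) (((m + 1 : ℕ) : ℝ) * u) h‖ :=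
            (Tk 1 u).le_opNorm _
        _ ≤ ‖Tk 1 u‖ * (‖Tk 1 u‖ ^ m * ‖Tk 1 u h‖) :=
            mul_le_mul_of_nonneg_left (ih u hu h) (norm_nonneg _)
        _ = ‖Tk 1 u‖ ^ (m + 1) * ‖Tk 1 u h‖ := by ring
  -- basic positivity facts, opaque constants
  obtain ⟨m, rfl⟩ : ∃ m, N = m + 1 := ⟨N - 1, (Nat.succ_pred_eq_of_pos hN).symm⟩
  have hM₁0 : 0 ≤ M₁ := le_trans (by positivity) (hM1 1 one_pos)
  obtain ⟨M, hM₁M, hM0⟩ : ∃ M : ℝ, M₁ ≤ M ∧ 0 < M := ⟨M₁ + 1, by linarith, by linarith⟩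
  obtain ⟨c, hcdef, hc0⟩ : ∃ c : ℝ, c = ((m + 1 : ℕ) : ℝ) ∧ 0 < c :=
    ⟨_, rfl, by positivity⟩
  obtain ⟨K, hK, hK0⟩ : ∃ K : ℝ, K = (M * c) ^ (2 * m) * c ∧ 0 < K :=
    ⟨_, rfl, by positivity⟩
  refine ⟨K * c * C, by positivity, fun h => ?_⟩
  -- norm bound for Tk 1
  have hnorm : ∀ u : ℝ, 0 < u → ‖Tk 1 u‖ ≤ M / u := by
    intro u hu
    rw [le_div_iff₀ hu, mul_comm]
    exact le_trans (hM1 u hu) hM₁M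
  -- pointwise bound on the integrand, in substituted form
  have hpt' : ∀ u : ℝ, 0 < u →
      (c * u) ^ (2 * (m + 1) - 1) * ‖Tk (m + 1) (c * u) h‖ ^ 2
        ≤ K * (u * ‖Tk 1 u h‖ ^ 2) := by
    intro u hu0
    have h1 : ‖Tk (m + 1) (c * u) h‖ ≤ (M / u) ^ m * ‖Tk 1 u h‖ := by
      rw [hcdef]
      calc ‖Tk (m + 1) (((m + 1 : ℕ) : ℝ) * u) h‖
          ≤ ‖Tk 1 u‖ ^ m * ‖Tk 1 u h‖ := stepC m u hu0 h
        _ ≤ (M / u) ^ m * ‖Tk 1 u h‖ :=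
            mul_le_mul_of_nonneg_right
              (pow_le_pow_left₀ (norm_nonneg _) (hnorm u hu0) m) (norm_nonneg _)
    have h2 : ‖Tk (m + 1) (c * u) h‖ ^ 2 ≤ ((M / u) ^ m * ‖Tk 1 u h‖) ^ 2 :=
      pow_le_pow_left₀ (norm_nonneg _) h1 2
    have hexp : 2 * (m + 1) - 1 = 2 * m + 1 := by omega
    have key : (c * u) * (M / u) = M * c := by field_simp
    have hcalc : (c * u) ^ (2 * m + 1) * ((M / u) ^ m * ‖Tk 1 u h‖) ^ 2
        = K * (u * ‖Tk 1 u h‖ ^ 2) := by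
      rw [hK]
      calc (c * u) ^ (2 * m + 1) * ((M / u) ^ m * ‖Tk 1 u h‖) ^ 2
          = ((c * u) * (M / u)) ^ (2 * m) * ((c * u) * ‖Tk 1 u h‖ ^ 2) := by ring
        _ = (M * c) ^ (2 * m) * c * (u * ‖Tk 1 u h‖ ^ 2) := by rw [key]; ring
    calc (c * u) ^ (2 * (m + 1) - 1) * ‖Tk (m + 1) (c * u) h‖ ^ 2
        ≤ (c * u) ^ (2 * (m + 1) - 1) * ((M / u) ^ m * ‖Tk 1 u h‖) ^ 2 :=
          mul_le_mul_of_nonneg_left h2 (by positivity)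
      _ = K * (u * ‖Tk 1 u h‖ ^ 2) := by rw [hexp]; exact hcalc
  have hpt : ∀ s : ℝ, 0 < s →
      s ^ (2 * (m + 1) - 1) * ‖Tk (m + 1) s h‖ ^ 2
        ≤ K * ((c⁻¹ * s) * ‖Tk 1 (c⁻¹ * s) h‖ ^ 2) := by
    intro s hs
    have h1 := hpt' (c⁻¹ * s) (by positivity)
    have h2 : c * (c⁻¹ * s) = s := by field_simp
    rwa [h2] at h1
  -- put everything together
  have hmono : ∫⁻ s in Ioi (0 : ℝ), ENNReal.ofReal (s ^ (2 * (m + 1) - 1) * ‖Tk (m + 1) s h‖ ^ 2)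
      ≤ ∫⁻ s in Ioi (0 : ℝ),
          ENNReal.ofReal K * ENNReal.ofReal ((c⁻¹ * s) * ‖Tk 1 (c⁻¹ * s) h‖ ^ 2) := by
    refine lintegral_mono_ae ((ae_restrict_iff' measurableSet_Ioi).2 (ae_of_all _ ?_))
    intro s hs
    rw [← ENNReal.ofReal_mul hK0.le]
    exact ENNReal.ofReal_le_ofReal (hpt s hs)
  have hsubst : ∫⁻ s in Ioi (0 : ℝ),
      ENNReal.ofReal ((c⁻¹ * s) * ‖Tk 1 (c⁻¹ * s) h‖ ^ 2)
      = ENNReal.ofReal (c⁻¹)⁻¹ * ∫⁻ y in Ioi (0 : ℝ), ENNReal.ofReal (y * ‖Tk 1 y h‖ ^ 2) :=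
    lintegral_Ioi_comp_mul_left (fun y => ENNReal.ofReal (y * ‖Tk 1 y h‖ ^ 2)) (by positivity)
  calc ∫⁻ s in Ioi (0 : ℝ), ENNReal.ofReal (s ^ (2 * (m + 1) - 1) * ‖Tk (m + 1) s h‖ ^ 2)
      ≤ ∫⁻ s in Ioi (0 : ℝ),
          ENNReal.ofReal K * ENNReal.ofReal ((c⁻¹ * s) * ‖Tk 1 (c⁻¹ * s) h‖ ^ 2) := hmono
    _ = ENNReal.ofReal K * ∫⁻ s in Ioi (0 : ℝ),
          ENNReal.ofReal ((c⁻¹ * s) * ‖Tk 1 (c⁻¹ * s) h‖ ^ 2) :=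
        lintegral_const_mul' _ _ ENNReal.ofReal_ne_top
    _ = ENNReal.ofReal K * (ENNReal.ofReal c *
          ∫⁻ y in Ioi (0 : ℝ), ENNReal.ofReal (y * ‖Tk 1 y h‖ ^ 2)) := by
        rw [hsubst, inv_inv]
    _ ≤ ENNReal.ofReal K * (ENNReal.ofReal c * ENNReal.ofReal (C * ‖h‖ ^ 2)) := by
        gcongr
        exact hQ h
    _ = ENNReal.ofReal (K * c * C * ‖h‖ ^ 2) := by
        rw [← ENNReal.ofReal_mul hc0.le, ← ENNReal.ofReal_mul hK0.le]
        ring_nf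
end

section
/- Square function estimate (3.2): For every N ∈ ℕ₊ there exists a constant C′_N > 0, depending only on N and C (one may take C′_N = (log(N+1))² C), such that for all h ∈ H: ∫₀^∞ ‖T(s)h - T((N+1)s)h‖² ds/s ≤ C′_N ‖h‖². (In semigroup notation this is ∫₀^∞ ‖e^{-sA}(I - e^{-NsA}) h‖² ds/s ≤ C′_N ‖h‖², a consequence of the quadratic estimate (Q)_A.) -/
open MeasureTheory Filter Topology Set
open scoped Interval ENNReal

lemma lint_inv_Ioc (a b : ℝ) (ha : 0 < a) (hab : a ≤ b) :
    ∫⁻ s in Ioc a b, ENNReal.ofReal s⁻¹ = ENNReal.ofReal (Real.log (b / a)) := by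
  have h0 : (0:ℝ) ∉ [[a, b]] := by
    rw [Set.uIcc_of_le hab]
    intro h; exact absurd h.1 (not_le.2 ha)
  have hcont : ContinuousOn (fun s : ℝ => s⁻¹) [[a, b]] := by
    apply ContinuousOn.inv₀ continuousOn_id
    intro x hx hx0; exact h0 (hx0 ▸ hx)
  have hint : IntegrableOn (fun s : ℝ => s⁻¹) (Ioc a b) volume := by
    have : IntervalIntegrable (fun s : ℝ => s⁻¹) volume a b := hcont.intervalIntegrable
    rwa [intervalIntegrable_iff_integrableOn_Ioc_of_le hab] at this
  have hnn : 0 ≤ᵐ[volume.restrict (Ioc a b)] fun s : ℝ => s⁻¹ := by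
    filter_upwards [ae_restrict_mem measurableSet_Ioc] with s hs
    exact inv_nonneg.2 (le_of_lt (lt_of_lt_of_le ha hs.1.le))
  rw [← ofReal_integral_eq_lintegral_ofReal hint hnn]
  congr 1
  rw [← intervalIntegral.integral_of_le hab, integral_inv h0]

lemma cs_step (ψ : ℝ → ℝ) (hnn : ∀ u, 0 ≤ ψ u) (s b : ℝ) (hs : 0 < s) (hsb : s ≤ b)
    (hψ : AEMeasurable ψ (volume.restrict (Ioc s b))) :
    (∫⁻ u in Ioc s b, ENNReal.ofReal (ψ u)) ^ 2
      ≤ ENNReal.ofReal (Real.log (b / s)) * ∫⁻ u in Ioc s b, ENNReal.ofReal (u * ψ u ^ 2) := by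
  set μ := volume.restrict (Ioc s b) with hμ
  set f : ℝ → ℝ≥0∞ := fun u => (ENNReal.ofReal u⁻¹) ^ ((2:ℝ)⁻¹) with hf_def
  set g : ℝ → ℝ≥0∞ := fun u => (ENNReal.ofReal (u * ψ u ^ 2)) ^ ((2:ℝ)⁻¹) with hg_def
  have hfm : AEMeasurable f μ :=
    ((ENNReal.measurable_ofReal.comp measurable_inv).aemeasurable).pow_const _
  have hgm : AEMeasurable g μ := by
    have : AEMeasurable (fun u => u * ψ u ^ 2) μ :=
      aemeasurable_id.mul (hψ.pow_const 2)
    exact (ENNReal.measurable_ofReal.comp_aemeasurable this).pow_const _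
  have hfg : ∀ᵐ u ∂μ, ENNReal.ofReal (ψ u) = (f * g) u := by
    filter_upwards [ae_restrict_mem measurableSet_Ioc] with u hu
    have hu0 : 0 < u := lt_trans hs hu.1
    have : f u * g u
        = (ENNReal.ofReal u⁻¹ * ENNReal.ofReal (u * ψ u ^ 2)) ^ ((2:ℝ)⁻¹) := by
      rw [ENNReal.mul_rpow_of_nonneg _ _ (by norm_num)]
    rw [Pi.mul_apply, this, ← ENNReal.ofReal_mul (inv_nonneg.2 hu0.le)]
    have : u⁻¹ * (u * ψ u ^ 2) = ψ u ^ 2 := by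
      field_simp
    rw [this, ENNReal.ofReal_pow (hnn u)]
    rw [← ENNReal.rpow_natCast (ENNReal.ofReal (ψ u)) 2, ← ENNReal.rpow_mul]
    norm_num
  have holder := ENNReal.lintegral_mul_le_Lp_mul_Lq μ
    Real.HolderConjugate.two_two hfm hgm
  have hf2 : ∀ u : ℝ, f u ^ (2:ℝ) = ENNReal.ofReal u⁻¹ := by
    intro u
    rw [hf_def, ← ENNReal.rpow_mul]
    norm_num
  have hg2 : ∀ u : ℝ, g u ^ (2:ℝ) = ENNReal.ofReal (u * ψ u ^ 2) := by
    intro u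
    rw [hg_def, ← ENNReal.rpow_mul]
    norm_num
  have key : (∫⁻ u, ENNReal.ofReal (ψ u) ∂μ)
      ≤ (ENNReal.ofReal (Real.log (b / s))) ^ ((2:ℝ)⁻¹)
        * (∫⁻ u, ENNReal.ofReal (u * ψ u ^ 2) ∂μ) ^ ((2:ℝ)⁻¹) := by
    calc (∫⁻ u, ENNReal.ofReal (ψ u) ∂μ) = ∫⁻ u, (f * g) u ∂μ := lintegral_congr_ae hfg
      _ ≤ (∫⁻ u, f u ^ (2:ℝ) ∂μ) ^ (1/(2:ℝ)) * (∫⁻ u, g u ^ (2:ℝ) ∂μ) ^ (1/(2:ℝ)) := holder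
      _ = (ENNReal.ofReal (Real.log (b / s))) ^ ((2:ℝ)⁻¹)
          * (∫⁻ u, ENNReal.ofReal (u * ψ u ^ 2) ∂μ) ^ ((2:ℝ)⁻¹) := by
          simp only [hf2, hg2, one_div, hμ]
          rw [lint_inv_Ioc s b hs hsb]
  calc (∫⁻ u, ENNReal.ofReal (ψ u) ∂μ) ^ 2
      ≤ ((ENNReal.ofReal (Real.log (b / s))) ^ ((2:ℝ)⁻¹)
        * (∫⁻ u, ENNReal.ofReal (u * ψ u ^ 2) ∂μ) ^ ((2:ℝ)⁻¹)) ^ 2 := by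
        exact pow_le_pow_left' key 2
    _ = ENNReal.ofReal (Real.log (b / s)) * ∫⁻ u, ENNReal.ofReal (u * ψ u ^ 2) ∂μ := by
        rw [mul_pow, ← ENNReal.rpow_natCast (_ ^ ((2:ℝ)⁻¹)) 2,
          ← ENNReal.rpow_natCast (_ ^ ((2:ℝ)⁻¹)) 2, ← ENNReal.rpow_mul, ← ENNReal.rpow_mul]
        norm_num

lemma ftc_step {H : Type*} [NormedAddCommGroup H] [InnerProductSpace ℂ H] [CompleteSpace H]
    (T : ℝ → H →L[ℂ] H) (Tk : ℕ → ℝ → H →L[ℂ] H)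
    (hTk0 : ∀ t : ℝ, 0 < t → Tk 0 t = T t)
    (hTkderiv : ∀ (k : ℕ) (t : ℝ), 0 < t → HasDerivAt (Tk k) (Tk (k + 1) t) t)
    (h : H) (s b : ℝ) (hs : 0 < s) (hsb : s ≤ b) :
    ENNReal.ofReal ‖T s h - T b h‖
      ≤ ∫⁻ u in Ioc s b, ENNReal.ofReal ‖(Tk 1 u) h‖ := by
  have hb : 0 < b := lt_of_lt_of_le hs hsb
  have hderiv : ∀ u ∈ Set.uIcc s b, HasDerivAt (fun t => (Tk 0 t) h) ((Tk 1 u) h) u := by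
    intro u hu
    rw [Set.uIcc_of_le hsb] at hu
    have hu0 : 0 < u := lt_of_lt_of_le hs hu.1
    have := ((ContinuousLinearMap.apply ℂ H h).restrictScalars ℝ).hasFDerivAt.comp_hasDerivAt
      u (hTkderiv 0 u hu0)
    simpa [Function.comp_def] using this
  have hcont : ContinuousOn (fun u : ℝ => (Tk 1 u) h) (Set.uIcc s b) := by
    intro u hu
    rw [Set.uIcc_of_le hsb] at hu
    have hu0 : 0 < u := lt_of_lt_of_le hs hu.1
    exact ((((ContinuousLinearMap.apply ℂ H h).restrictScalars ℝ).continuous.continuousAt).comp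
      ((hTkderiv 1 u hu0).differentiableAt.continuousAt)).continuousWithinAt
  have hint : IntervalIntegrable (fun u : ℝ => (Tk 1 u) h) volume s b :=
    hcont.intervalIntegrable
  have heq := intervalIntegral.integral_eq_sub_of_hasDerivAt hderiv hint
  rw [hTk0 b hb, hTk0 s hs] at heq
  have hnormle : ‖T s h - T b h‖ ≤ ∫ u in s..b, ‖(Tk 1 u) h‖ := by
    rw [norm_sub_rev, ← heq]
    exact intervalIntegral.norm_integral_le_integral_norm hsb
  have hintn : IntegrableOn (fun u : ℝ => ‖(Tk 1 u) h‖) (Ioc s b) volume := by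
    have := hint.norm
    rwa [intervalIntegrable_iff_integrableOn_Ioc_of_le hsb] at this
  have : ∫ u in s..b, ‖(Tk 1 u) h‖ = ∫ u in Ioc s b, ‖(Tk 1 u) h‖ :=
    intervalIntegral.integral_of_le hsb
  rw [this] at hnormle
  calc ENNReal.ofReal ‖T s h - T b h‖
      ≤ ENNReal.ofReal (∫ u in Ioc s b, ‖(Tk 1 u) h‖) := ENNReal.ofReal_le_ofReal hnormle
    _ = ∫⁻ u in Ioc s b, ENNReal.ofReal ‖(Tk 1 u) h‖ :=
        ofReal_integral_eq_lintegral_ofReal hintn (ae_of_all _ fun u => norm_nonneg _)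
/-- Square function estimate (3.2): under the quadratic estimate `(Q)_A`
(with constant `C`), for every `N ∈ ℕ₊` there is a constant `C'_N > 0` such that
for all `h ∈ H`, `∫₀^∞ ‖T(s)h - T((N+1)s)h‖² ds/s ≤ C'_N ‖h‖²`. -/
theorem square_function_estimate_difference
    {H : Type*} [NormedAddCommGroup H] [InnerProductSpace ℂ H] [CompleteSpace H]
    (T : ℝ → H →L[ℂ] H) (Tk : ℕ → ℝ → H →L[ℂ] H)
    (hT0 : T 0 = ContinuousLinearMap.id ℂ H)
    (hTadd : ∀ s t : ℝ, 0 ≤ s → 0 ≤ t → T (s + t) = (T s).comp (T t))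
    (hTcont : ∀ x : H, ContinuousOn (fun t : ℝ => T t x) (Ici (0 : ℝ)))
    (hTk0 : ∀ t : ℝ, 0 < t → Tk 0 t = T t)
    (hTkderiv : ∀ (k : ℕ) (t : ℝ), 0 < t → HasDerivAt (Tk k) (Tk (k + 1) t) t)
    (C : ℝ) (hC : 0 < C)
    -- the quadratic estimate (Q)_A
    (hQ : ∀ h : H, ∫⁻ s in Ioi (0 : ℝ), ENNReal.ofReal (s * ‖(Tk 1 s) h‖ ^ 2)
      ≤ ENNReal.ofReal (C * ‖h‖ ^ 2))
    (N : ℕ) (hN : 1 ≤ N) :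
    ∃ C' : ℝ, 0 < C' ∧ ∀ h : H,
      ∫⁻ s in Ioi (0 : ℝ), ENNReal.ofReal (‖T s h - T ((N + 1 : ℝ) * s) h‖ ^ 2 / s)
        ≤ ENNReal.ofReal (C' * ‖h‖ ^ 2) := by
  set L : ℝ := Real.log (N + 1) with hL_def
  have hN1 : (1 : ℝ) ≤ (N : ℝ) := by exact_mod_cast hN
  have hNp1 : (1 : ℝ) < (N : ℝ) + 1 := by linarith
  have hNp0 : (0 : ℝ) < (N : ℝ) + 1 := by linarith
  have hL : 0 < L := Real.log_pos hNp1
  refine ⟨L ^ 2 * C, by positivity, fun h => ?_⟩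
  -- notation
  set φ : ℝ → ℝ := fun u => ‖(Tk 1 u) h‖ with hφ_def
  set W : ℝ → ℝ≥0∞ := fun u => ENNReal.ofReal (u * φ u ^ 2) with hW_def
  set X : ℝ → ℝ≥0∞ := fun s => ∫⁻ u in Ioc s (((N : ℝ) + 1) * s), W u with hX_def
  set μ : Measure ℝ := volume.restrict (Ioi 0) with hμ_def
  -- continuity of φ on (0, ∞)
  have hφ_cont : ContinuousOn φ (Ioi (0 : ℝ)) := by
    intro u hu
    have h1 : ContinuousWithinAt (fun v : ℝ => (Tk 1 v) h) (Ioi (0 : ℝ)) u :=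
      ((((ContinuousLinearMap.apply ℂ H h).restrictScalars ℝ).continuous.continuousAt).comp
        ((hTkderiv 1 u hu).differentiableAt.continuousAt)).continuousWithinAt
    exact h1.norm
  have hW_meas : AEMeasurable W μ := by
    apply ENNReal.measurable_ofReal.comp_aemeasurable
    exact (aemeasurable_id.mul
      (((hφ_cont.aemeasurable measurableSet_Ioi)).pow_const 2))
  -- pointwise estimate for s > 0
  have hpt : ∀ s : ℝ, 0 < s →
      ENNReal.ofReal (‖T s h - T (((N : ℝ) + 1) * s) h‖ ^ 2 / s)
        ≤ ENNReal.ofReal s⁻¹ * (ENNReal.ofReal L * X s) := by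
    intro s hs
    set b : ℝ := ((N : ℝ) + 1) * s with hb_def
    have hsb : s ≤ b := by
      rw [hb_def]; nlinarith
    have hφmeas : AEMeasurable φ (volume.restrict (Ioc s b)) := by
      refine (hφ_cont.mono ?_).aemeasurable measurableSet_Ioc
      intro u hu; exact lt_trans hs hu.1
    have h1 := ftc_step T Tk hTk0 hTkderiv h s b hs hsb
    have h2 := cs_step φ (fun u => norm_nonneg _) s b hs hsb hφmeas
    have hlog : Real.log (b / s) = L := by
      rw [hb_def, mul_div_assoc, div_self (ne_of_gt hs), mul_one]
    rw [hlog] at h2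
    have h3 : ENNReal.ofReal (‖T s h - T b h‖ ^ 2) ≤ ENNReal.ofReal L * X s := by
      rw [ENNReal.ofReal_pow (norm_nonneg _)]
      calc (ENNReal.ofReal ‖T s h - T b h‖) ^ 2
          ≤ (∫⁻ u in Ioc s b, ENNReal.ofReal (φ u)) ^ 2 := pow_le_pow_left' h1 2
        _ ≤ ENNReal.ofReal L * X s := h2
    calc ENNReal.ofReal (‖T s h - T b h‖ ^ 2 / s)
        = ENNReal.ofReal s⁻¹ * ENNReal.ofReal (‖T s h - T b h‖ ^ 2) := by
          rw [div_eq_mul_inv, mul_comm, ENNReal.ofReal_mul (inv_nonneg.2 hs.le)]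
      _ ≤ ENNReal.ofReal s⁻¹ * (ENNReal.ofReal L * X s) := mul_le_mul_right h3 _
  -- the double-integral representation
  set E : Set (ℝ × ℝ) := {p : ℝ × ℝ | p.1 < p.2 ∧ p.2 ≤ ((N : ℝ) + 1) * p.1} with hE_def
  have hE_meas : MeasurableSet E := by
    apply MeasurableSet.inter
    · exact measurableSet_lt measurable_fst measurable_snd
    · exact measurableSet_le measurable_snd (measurable_fst.const_mul _)
  set F : ℝ × ℝ → ℝ≥0∞ :=
    fun p => E.indicator (fun p : ℝ × ℝ => ENNReal.ofReal p.1⁻¹ * W p.2) p with hF_def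
  have hF_meas : AEMeasurable F (μ.prod μ) := by
    apply AEMeasurable.indicator _ hE_meas
    exact ((ENNReal.measurable_ofReal.comp (measurable_fst.inv)).aemeasurable).mul hW_meas.comp_snd
  have hXrepr : ∀ s : ℝ, 0 < s →
      ENNReal.ofReal s⁻¹ * X s = ∫⁻ u in Ioi (0 : ℝ), F (s, u) := by
    intro s hs
    have hsub : Ioc s (((N : ℝ) + 1) * s) ⊆ Ioi (0 : ℝ) := fun u hu => lt_trans hs hu.1
    have hmem : ∀ u : ℝ, (s, u) ∈ E ↔ u ∈ Ioc s (((N : ℝ) + 1) * s) := by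
      intro u; simp [hE_def, Set.mem_Ioc]
    have heq : (∫⁻ u in Ioi (0 : ℝ), F (s, u))
        = ∫⁻ u in Ioi (0 : ℝ),
            (Ioc s (((N : ℝ) + 1) * s)).indicator (fun u => ENNReal.ofReal s⁻¹ * W u) u :=
      lintegral_congr fun u => by simp only [hF_def, Set.indicator_apply, hmem u]
    rw [heq, lintegral_indicator measurableSet_Ioc,
      Measure.restrict_restrict measurableSet_Ioc,
      inter_eq_self_of_subset_left hsub, lintegral_const_mul' _ _ ENNReal.ofReal_ne_top]
  -- inner integral after swapping
  have hinner : ∀ u : ℝ, 0 < u →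
      (∫⁻ s in Ioi (0 : ℝ), F (s, u)) = ENNReal.ofReal L * W u := by
    intro u hu
    set a : ℝ := u / ((N : ℝ) + 1) with ha_def
    have ha : 0 < a := div_pos hu hNp0
    have hau : a < u := by
      rw [ha_def, div_lt_iff₀ hNp0]; nlinarith
    have hmem : ∀ s : ℝ, (s, u) ∈ E ↔ s ∈ Ico a u := by
      intro s
      simp only [hE_def, Set.mem_setOf_eq, Set.mem_Ico, ha_def]
      constructor
      · rintro ⟨h1, h2⟩; exact ⟨(div_le_iff₀ hNp0).2 (by linarith [h2]), h1⟩
      · rintro ⟨h1, h2⟩; refine ⟨h2, ?_⟩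
        have := (div_le_iff₀ hNp0).1 h1; linarith [this]
    have heq : (∫⁻ s in Ioi (0 : ℝ), F (s, u))
        = ∫⁻ s in Ioi (0 : ℝ), (Ico a u).indicator (fun s => ENNReal.ofReal s⁻¹ * W u) s :=
      lintegral_congr fun s => by simp only [hF_def, Set.indicator_apply, hmem s]
    have hsub2 : Ico a u ⊆ Ioi (0:ℝ) := fun x hx => lt_of_lt_of_le ha hx.1
    rw [heq, lintegral_indicator measurableSet_Ico,
      Measure.restrict_restrict measurableSet_Ico,
      inter_eq_self_of_subset_left hsub2,
      lintegral_mul_const' _ _ ENNReal.ofReal_ne_top]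
    have hres : volume.restrict (Ico a u) = volume.restrict (Ioc a u) :=
      Measure.restrict_congr_set Ico_ae_eq_Ioc
    rw [hres, lint_inv_Ioc a u ha hau.le]
    have hua : u / a = (N : ℝ) + 1 := by
      rw [ha_def]; field_simp
    rw [hua, hL_def]
  -- put everything together
  calc ∫⁻ s in Ioi (0 : ℝ), ENNReal.ofReal (‖T s h - T (((N : ℝ) + 1) * s) h‖ ^ 2 / s)
      ≤ ∫⁻ s in Ioi (0 : ℝ), ENNReal.ofReal L * (ENNReal.ofReal s⁻¹ * X s) := by
        apply lintegral_mono_ae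
        filter_upwards [ae_restrict_mem measurableSet_Ioi] with s hs
        calc ENNReal.ofReal (‖T s h - T (((N : ℝ) + 1) * s) h‖ ^ 2 / s)
            ≤ ENNReal.ofReal s⁻¹ * (ENNReal.ofReal L * X s) := hpt s hs
          _ = ENNReal.ofReal L * (ENNReal.ofReal s⁻¹ * X s) := by ring
    _ = ENNReal.ofReal L * ∫⁻ s in Ioi (0 : ℝ), ENNReal.ofReal s⁻¹ * X s :=
        lintegral_const_mul' _ _ ENNReal.ofReal_ne_top
    _ = ENNReal.ofReal L * ∫⁻ s in Ioi (0 : ℝ), ∫⁻ u in Ioi (0 : ℝ), F (s, u) := by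
        congr 1
        apply lintegral_congr_ae
        filter_upwards [ae_restrict_mem measurableSet_Ioi] with s hs
        exact hXrepr s hs
    _ = ENNReal.ofReal L * ∫⁻ u in Ioi (0 : ℝ), ∫⁻ s in Ioi (0 : ℝ), F (s, u) := by
        congr 1
        exact lintegral_lintegral_swap hF_meas
    _ = ENNReal.ofReal L * ∫⁻ u in Ioi (0 : ℝ), ENNReal.ofReal L * W u := by
        congr 1
        apply lintegral_congr_ae
        filter_upwards [ae_restrict_mem measurableSet_Ioi] with u hu
        exact hinner u hu
    _ = ENNReal.ofReal L * (ENNReal.ofReal L * ∫⁻ u in Ioi (0 : ℝ), W u) := by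
        rw [lintegral_const_mul' _ _ ENNReal.ofReal_ne_top]
    _ ≤ ENNReal.ofReal L * (ENNReal.ofReal L * ENNReal.ofReal (C * ‖h‖ ^ 2)) := by
        apply mul_le_mul_right
        apply mul_le_mul_right
        exact hQ h
    _ = ENNReal.ofReal (L ^ 2 * C * ‖h‖ ^ 2) := by
        rw [← ENNReal.ofReal_mul hL.le, ← ENNReal.ofReal_mul (by positivity)]
        ring_nf
  done
end

section
/- Reduction of weak convergence from N = 1 to general N (Section 3): Let N ∈ ℕ₊ and let f : (0,∞) → H be strongly measurable with ∫₀^∞ s ‖f(s)‖² ds < ∞. Then for every h ∈ H the function s ↦ ⟨f(s), T(s)* h - T(Ns)* h⟩ is integrable on (0,∞), with ∫₀^∞ |⟨f(s), T(s)* h - T(Ns)* h⟩| ds ≤ √C · ( ∫₀^∞ s ‖f(s)‖² ds )^{1/2} · ‖h‖. Consequently, if for every h ∈ H the function s ↦ ⟨T(s) f(s), h⟩ is integrable on (0,∞), then for every h ∈ H the function s ↦ ⟨T(Ns) f(s), h⟩ is integrable on (0,∞) and ∫₀^∞ ⟨T(Ns) f(s), h⟩ ds = ∫₀^∞ ⟨T(s)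 f(s), h⟩ ds - ∫₀^∞ ⟨f(s), T(s)* h - T(Ns)* h⟩ ds. -/
open MeasureTheory Filter Topology Set ContinuousLinearMap

lemma young_aux {a b s ε : ℝ} (hs : 0 < s) (hε : 0 < ε) :
    a * b ≤ ε / 2 * (s * a ^ 2) + 1 / (2 * ε) * (b ^ 2 / s) := by
  have h : ε / 2 * (s * a ^ 2) + 1 / (2 * ε) * (b ^ 2 / s) - a * b
      = (ε * s * a - b) ^ 2 / (2 * ε * s) := by
    field_simp
    ring
  have h2 : 0 ≤ (ε * s * a - b) ^ 2 / (2 * ε * s) := by positivity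
  linarith

lemma opt_aux {r X Y : ℝ} (hX : 0 ≤ X) (hY : 0 ≤ Y)
    (h : ∀ ε : ℝ, 0 < ε → r ≤ ε / 2 * X + 1 / (2 * ε) * Y) :
    r ≤ Real.sqrt (X * Y) := by
  have key : ∀ δ : ℝ, 0 < δ → r ≤ Real.sqrt ((X + δ) * (Y + δ)) := by
    intro δ hδ
    have hXδ : 0 < X + δ := by linarith
    have hYδ : 0 < Y + δ := by linarith
    have ha0 : 0 < Real.sqrt (X + δ) := Real.sqrt_pos.2 hXδ
    have hb0 : 0 < Real.sqrt (Y + δ) := Real.sqrt_pos.2 hYδ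
    set a := Real.sqrt (X + δ) with ha
    set b := Real.sqrt (Y + δ) with hb
    have ha2 : a ^ 2 = X + δ := Real.sq_sqrt hXδ.le
    have hb2 : b ^ 2 = Y + δ := Real.sq_sqrt hYδ.le
    have hε : 0 < b / a := div_pos hb0 ha0
    calc r ≤ (b / a) / 2 * X + 1 / (2 * (b / a)) * Y := h _ hε
      _ ≤ (b / a) / 2 * (X + δ) + 1 / (2 * (b / a)) * (Y + δ) := by
          have h1 : (b / a) / 2 * X ≤ (b / a) / 2 * (X + δ) := by
            apply mul_le_mul_of_nonneg_left (by linarith) (by positivity)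
          have h2 : 1 / (2 * (b / a)) * Y ≤ 1 / (2 * (b / a)) * (Y + δ) := by
            apply mul_le_mul_of_nonneg_left (by linarith) (by positivity)
          linarith
      _ = a * b := by
          rw [← ha2, ← hb2]
          field_simp
          ring
      _ = Real.sqrt ((X + δ) * (Y + δ)) := by rw [Real.sqrt_mul hXδ.le]
  have hcont : Tendsto (fun δ : ℝ => Real.sqrt ((X + δ) * (Y + δ))) (𝓝[>] 0)
      (𝓝 (Real.sqrt (X * Y))) := by
    have hc : Continuous fun δ : ℝ => Real.sqrt ((X + δ) * (Y + δ)) := by continuity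
    have h0 := hc.tendsto 0
    simp only [add_zero] at h0
    exact h0.mono_left nhdsWithin_le_nhds
  exact ge_of_tendsto hcont (eventually_nhdsWithin_of_forall fun δ hδ => key δ hδ)

lemma aux_meas {H : Type*} [NormedAddCommGroup H] [NormedSpace ℂ H]
    (G : ℝ → H →L[ℂ] H) (hG : ∀ x : H, ContinuousOn (fun s => G s x) (Ici (0 : ℝ)))
    {f : ℝ → H} (hf : AEStronglyMeasurable f (volume.restrict (Ioi (0 : ℝ)))) :
    AEStronglyMeasurable (fun s => G s (f s)) (volume.restrict (Ioi (0 : ℝ))) := by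
  have hGm : ∀ x : H, AEStronglyMeasurable (fun s => G s x) (volume.restrict (Ioi (0 : ℝ))) :=
    fun x => ((hG x).mono Ioi_subset_Ici_self).aestronglyMeasurable measurableSet_Ioi
  have key : ∀ ψ : SimpleFunc ℝ H,
      AEStronglyMeasurable (fun s => G s (ψ s)) (volume.restrict (Ioi (0 : ℝ))) := by
    intro ψ
    induction ψ using SimpleFunc.induction with
    | @const c A hA =>
        have heq : (fun s => G s ((SimpleFunc.piecewise A hA (SimpleFunc.const ℝ c)
            (SimpleFunc.const ℝ 0)) s)) = A.indicator (fun s => G s c) := by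
          funext s
          simp only [SimpleFunc.piecewise_apply, SimpleFunc.const_apply, Set.indicator]
          split <;> simp
        rw [heq]
        exact (hGm c).indicator hA
    | @add ψ φ hdis hψ hφ =>
        have heq : (fun s => G s ((ψ + φ) s)) = fun s => G s (ψ s) + G s (φ s) := by
          funext s; simp
        rw [heq]
        exact hψ.add hφ
  obtain ⟨f', hf'm, hff'⟩ := hf
  have h1 : AEStronglyMeasurable (fun s => G s (f' s)) (volume.restrict (Ioi (0 : ℝ))) := by
    apply aestronglyMeasurable_of_tendsto_ae atTop (fun n => key (hf'm.approx n))
    exact ae_of_all _ fun s => ((G s).continuous.tendsto _).comp (hf'm.tendsto_approx s)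
  exact h1.congr (hff'.mono fun s hs => by simp only []; rw [hs])

/-- Reduction of weak convergence from `N = 1` to general `N`: under the adjoint square
function estimate `∫₀^∞ ‖T(s)* h - T(Ns)* h‖² ds/s ≤ C ‖h‖²`, for strongly measurable
`f` with `∫₀^∞ s ‖f(s)‖² ds < ∞`:
(a) for every `h ∈ H` the function `s ↦ ⟨f(s), T(s)* h - T(Ns)* h⟩` is integrable on
`(0,∞)` with `∫₀^∞ |⟨f(s), T(s)* h - T(Ns)* h⟩| ds ≤ √C (∫₀^∞ s‖f(s)‖² ds)^{1/2} ‖h‖`;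
(b) consequently, if for every `h` the function `s ↦ ⟨T(s) f(s), h⟩` is integrable on
`(0,∞)`, then so is `s ↦ ⟨T(Ns) f(s), h⟩`, and
`∫₀^∞ ⟨T(Ns) f(s), h⟩ ds = ∫₀^∞ ⟨T(s) f(s), h⟩ ds - ∫₀^∞ ⟨f(s), T(s)* h - T(Ns)* h⟩ ds`. -/
theorem weak_convergence_reduction
    {H : Type*} [NormedAddCommGroup H] [InnerProductSpace ℂ H] [CompleteSpace H]
    (T : ℝ → H →L[ℂ] H)
    (hT0 : T 0 = ContinuousLinearMap.id ℂ H)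
    (hTadd : ∀ s t : ℝ, 0 ≤ s → 0 ≤ t → T (s + t) = (T s).comp (T t))
    (hTcont : ∀ x : H, ContinuousOn (fun t : ℝ => T t x) (Ici (0 : ℝ)))
    (N : ℕ) (hN : 1 ≤ N)
    (C : ℝ) (hC : 0 < C)
    -- adjoint square function estimate (estimate (3.2) for A*)
    (hQstar : ∀ h : H, ∫⁻ s in Ioi (0 : ℝ),
        ENNReal.ofReal (‖adjoint (T s) h - adjoint (T ((N : ℝ) * s)) h‖ ^ 2 / s)
      ≤ ENNReal.ofReal (C * ‖h‖ ^ 2))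
    (f : ℝ → H)
    (hfm : AEStronglyMeasurable f (volume.restrict (Ioi (0 : ℝ))))
    (hfL2 : IntegrableOn (fun s : ℝ => s * ‖f s‖ ^ 2) (Ioi 0)) :
    (∀ h : H,
      IntegrableOn (fun s : ℝ =>
        (inner ℂ (f s) (adjoint (T s) h - adjoint (T ((N : ℝ) * s)) h) : ℂ)) (Ioi 0) ∧
      ∫ s in Ioi (0 : ℝ),
          ‖(inner ℂ (f s) (adjoint (T s) h - adjoint (T ((N : ℝ) * s)) h) : ℂ)‖
        ≤ Real.sqrt C * Real.sqrt (∫ s in Ioi (0 : ℝ), s * ‖f s‖ ^ 2) * ‖h‖) ∧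
    ((∀ h : H, IntegrableOn (fun s : ℝ => (inner ℂ (T s (f s)) h : ℂ)) (Ioi 0)) →
      ∀ h : H,
        IntegrableOn (fun s : ℝ => (inner ℂ (T ((N : ℝ) * s) (f s)) h : ℂ)) (Ioi 0) ∧
        ∫ s in Ioi (0 : ℝ), (inner ℂ (T ((N : ℝ) * s) (f s)) h : ℂ)
          = (∫ s in Ioi (0 : ℝ), (inner ℂ (T s (f s)) h : ℂ))
            - ∫ s in Ioi (0 : ℝ),
                (inner ℂ (f s) (adjoint (T s) h - adjoint (T ((N : ℝ) * s)) h) : ℂ)) := by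
  -- measurability of the two vector-valued compositions
  have hTNcont : ∀ x : H, ContinuousOn (fun s : ℝ => T ((N : ℝ) * s) x) (Ici (0 : ℝ)) := by
    intro x
    apply (hTcont x).comp ((continuous_const.mul continuous_id).continuousOn)
    intro s hs
    exact mul_nonneg (by positivity : (0:ℝ) ≤ (N:ℝ)) hs
  have hTf : AEStronglyMeasurable (fun s => T s (f s)) (volume.restrict (Ioi (0 : ℝ))) :=
    aux_meas T hTcont hfm
  have hTNf : AEStronglyMeasurable (fun s => T ((N : ℝ) * s) (f s))
      (volume.restrict (Ioi (0 : ℝ))) :=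
    aux_meas (fun s => T ((N : ℝ) * s)) hTNcont hfm
  have hφeq : ∀ (h : H) (s : ℝ),
      (inner ℂ (f s) (adjoint (T s) h - adjoint (T ((N : ℝ) * s)) h) : ℂ)
        = (inner ℂ (T s (f s)) h : ℂ) - (inner ℂ (T ((N : ℝ) * s) (f s)) h : ℂ) := by
    intro h s
    rw [inner_sub_right, ContinuousLinearMap.adjoint_inner_right,
      ContinuousLinearMap.adjoint_inner_right]
  have hφm : ∀ h : H, AEStronglyMeasurable
      (fun s : ℝ => (inner ℂ (f s) (adjoint (T s) h - adjoint (T ((N : ℝ) * s)) h) : ℂ))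
      (volume.restrict (Ioi (0 : ℝ))) := by
    intro h
    have : (fun s : ℝ => (inner ℂ (f s) (adjoint (T s) h - adjoint (T ((N : ℝ) * s)) h) : ℂ))
        = fun s : ℝ => (inner ℂ (T s (f s)) h : ℂ) - (inner ℂ (T ((N : ℝ) * s) (f s)) h : ℂ) :=
      funext (hφeq h)
    rw [this]
    exact (hTf.inner aestronglyMeasurable_const).sub (hTNf.inner aestronglyMeasurable_const)
  set A := ∫ s in Ioi (0 : ℝ), s * ‖f s‖ ^ 2 with hAdef
  have hA0 : 0 ≤ A := by
    apply integral_nonneg_of_ae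
    filter_upwards [ae_restrict_mem measurableSet_Ioi] with s hs
    have : (0 : ℝ) < s := hs
    positivity
  have hlinA : ∫⁻ s in Ioi (0 : ℝ), ENNReal.ofReal (s * ‖f s‖ ^ 2) = ENNReal.ofReal A := by
    rw [← ofReal_integral_eq_lintegral_ofReal hfL2]
    filter_upwards [ae_restrict_mem measurableSet_Ioi] with s hs
    have : (0 : ℝ) < s := hs
    positivity
  -- the key estimate
  have hbound : ∀ (h : H) (ε : ℝ), 0 < ε →
      (∫⁻ s in Ioi (0 : ℝ), ENNReal.ofReal
          ‖(inner ℂ (f s) (adjoint (T s) h - adjoint (T ((N : ℝ) * s)) h) : ℂ)‖)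
        ≤ ENNReal.ofReal (ε / 2 * A + 1 / (2 * ε) * (C * ‖h‖ ^ 2)) := by
    intro h ε hε
    set g : ℝ → H := fun s => adjoint (T s) h - adjoint (T ((N : ℝ) * s)) h with hg
    calc (∫⁻ s in Ioi (0 : ℝ), ENNReal.ofReal ‖(inner ℂ (f s) (g s) : ℂ)‖)
        ≤ ∫⁻ s in Ioi (0 : ℝ),
            (ENNReal.ofReal (ε / 2 * (s * ‖f s‖ ^ 2))
              + ENNReal.ofReal (1 / (2 * ε) * (‖g s‖ ^ 2 / s))) := by
          apply lintegral_mono_ae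
          filter_upwards [ae_restrict_mem measurableSet_Ioi] with s hs
          have hs' : (0 : ℝ) < s := hs
          have h1 : ‖(inner ℂ (f s) (g s) : ℂ)‖ ≤ ‖f s‖ * ‖g s‖ := norm_inner_le_norm _ _
          have h2 : ‖f s‖ * ‖g s‖ ≤ ε / 2 * (s * ‖f s‖ ^ 2) + 1 / (2 * ε) * (‖g s‖ ^ 2 / s) :=
            young_aux hs' hε
          calc ENNReal.ofReal ‖(inner ℂ (f s) (g s) : ℂ)‖
              ≤ ENNReal.ofReal (ε / 2 * (s * ‖f s‖ ^ 2) + 1 / (2 * ε) * (‖g s‖ ^ 2 / s)) :=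
                ENNReal.ofReal_le_ofReal (h1.trans h2)
            _ = ENNReal.ofReal (ε / 2 * (s * ‖f s‖ ^ 2))
                  + ENNReal.ofReal (1 / (2 * ε) * (‖g s‖ ^ 2 / s)) := by
                rw [ENNReal.ofReal_add (by positivity) (by positivity)]
      _ = (∫⁻ s in Ioi (0 : ℝ), ENNReal.ofReal (ε / 2 * (s * ‖f s‖ ^ 2)))
            + ∫⁻ s in Ioi (0 : ℝ), ENNReal.ofReal (1 / (2 * ε) * (‖g s‖ ^ 2 / s)) := by
          apply lintegral_add_left'
          exact (aemeasurable_const.mul hfL2.1.aemeasurable).ennreal_ofReal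
      _ ≤ ENNReal.ofReal (ε / 2) * ENNReal.ofReal A
            + ENNReal.ofReal (1 / (2 * ε)) * ENNReal.ofReal (C * ‖h‖ ^ 2) := by
          apply add_le_add
          · simp_rw [ENNReal.ofReal_mul (by positivity : (0:ℝ) ≤ ε / 2)]
            rw [lintegral_const_mul' _ _ ENNReal.ofReal_ne_top, hlinA]
          · simp_rw [ENNReal.ofReal_mul (by positivity : (0:ℝ) ≤ 1 / (2 * ε))]
            rw [lintegral_const_mul' _ _ ENNReal.ofReal_ne_top]
            exact mul_le_mul_right (hQstar h) _
      _ = ENNReal.ofReal (ε / 2 * A + 1 / (2 * ε) * (C * ‖h‖ ^ 2)) := by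
          rw [← ENNReal.ofReal_mul (by positivity), ← ENNReal.ofReal_mul (by positivity),
            ENNReal.ofReal_add (by positivity) (by positivity)]
  -- part (a)
  have parta : ∀ h : H,
      IntegrableOn (fun s : ℝ =>
        (inner ℂ (f s) (adjoint (T s) h - adjoint (T ((N : ℝ) * s)) h) : ℂ)) (Ioi 0) ∧
      ∫ s in Ioi (0 : ℝ),
          ‖(inner ℂ (f s) (adjoint (T s) h - adjoint (T ((N : ℝ) * s)) h) : ℂ)‖
        ≤ Real.sqrt C * Real.sqrt A * ‖h‖ := by
    intro h
    have hfin : (∫⁻ s in Ioi (0 : ℝ), ENNReal.ofReal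
        ‖(inner ℂ (f s) (adjoint (T s) h - adjoint (T ((N : ℝ) * s)) h) : ℂ)‖) < ⊤ :=
      lt_of_le_of_lt (hbound h 1 one_pos) ENNReal.ofReal_lt_top
    have hint : IntegrableOn (fun s : ℝ =>
        (inner ℂ (f s) (adjoint (T s) h - adjoint (T ((N : ℝ) * s)) h) : ℂ)) (Ioi 0) := by
      refine ⟨hφm h, ?_⟩
      rw [hasFiniteIntegral_iff_norm]
      simpa using hfin
    refine ⟨hint, ?_⟩
    have hnorm_eq : ∫ s in Ioi (0 : ℝ),
        ‖(inner ℂ (f s) (adjoint (T s) h - adjoint (T ((N : ℝ) * s)) h) : ℂ)‖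
        = (∫⁻ s in Ioi (0 : ℝ), ENNReal.ofReal
            ‖(inner ℂ (f s) (adjoint (T s) h - adjoint (T ((N : ℝ) * s)) h) : ℂ)‖).toReal := by
      rw [integral_eq_lintegral_of_nonneg_ae (ae_of_all _ fun s => norm_nonneg _) (hφm h).norm]
    have hle : ∀ ε : ℝ, 0 < ε →
        (∫ s in Ioi (0 : ℝ),
          ‖(inner ℂ (f s) (adjoint (T s) h - adjoint (T ((N : ℝ) * s)) h) : ℂ)‖)
          ≤ ε / 2 * A + 1 / (2 * ε) * (C * ‖h‖ ^ 2) := by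
      intro ε hε
      rw [hnorm_eq]
      exact ENNReal.toReal_le_of_le_ofReal (by positivity) (hbound h ε hε)
    have := opt_aux hA0 (by positivity : (0:ℝ) ≤ C * ‖h‖ ^ 2) hle
    have hsq : Real.sqrt (A * (C * ‖h‖ ^ 2)) = Real.sqrt C * Real.sqrt A * ‖h‖ := by
      rw [Real.sqrt_mul hA0, Real.sqrt_mul hC.le, Real.sqrt_sq (norm_nonneg h)]
      ring
    rw [hsq] at this
    exact this
  refine ⟨parta, ?_⟩
  -- part (b)
  intro hint h
  have hφint := (parta h).1
  have heq : (fun s : ℝ => (inner ℂ (T ((N : ℝ) * s) (f s)) h : ℂ))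
      = fun s : ℝ => (inner ℂ (T s (f s)) h : ℂ)
          - (inner ℂ (f s) (adjoint (T s) h - adjoint (T ((N : ℝ) * s)) h) : ℂ) := by
    funext s
    rw [hφeq h s]
    ring
  constructor
  · rw [heq]
    exact (hint h).sub hφint
  · rw [heq, integral_sub (hint h) hφint]
end
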